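/- arXiv:2308.02444 — 8 statements merged into one kernel-verified Lean document; each statement's English description precedes it below -/
import Mathlib

section
/- There exists an effectively computable positive real number c₁ such that the following holds. Let y be a non-decreasing function from the positive real numbers to the real numbers with y(x) ≥ 3 for all x > 0, and let n_1 < n_2 < n_3 < ... be the increasing sequence of all positive integers n with P(n) ≤ y(n). Then there are infinitely many positive integers i for which n_{i+1} − n_i < n_i · exp(c₁·y(n_i)) / (log n_i)^{r−1}, where r = π(y(√(n_i))). -/
open Real Filter

/-- Greatest prime factor of `n`, with the convention `P 0 = P 1 = 1`. -/
def maxPrimeFactor (n : ℕ) : ℕ := max 1 (n.primeFactors.sup id)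

/-- Prime counting function `π` for a real argument: the number of primes `p ≤ x`. -/
noncomputable def primePi (x : ℝ) : ℕ := Nat.primeCounting ⌊x⌋₊

lemma mpf_le {m t : ℕ} (ht : 1 ≤ t) (h : ∀ p ∈ m.primeFactors, p ≤ t) :
    maxPrimeFactor m ≤ t :=
  max_le ht (Finset.sup_le h)

lemma le_mpf {m p : ℕ} (h : p ∈ m.primeFactors) : p ≤ maxPrimeFactor m :=
  le_trans (Finset.le_sup (f := id) h) (le_max_right _ _)

lemma odd_mul_pow_inj {j j' s s' : ℕ} (hs : ¬ 2 ∣ s) (hs' : ¬ 2 ∣ s')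
    (h : 2^j * s = 2^j' * s') : j = j' ∧ s = s' := by
  have hs0 : s ≠ 0 := fun h0 => hs (h0 ▸ dvd_zero 2)
  have hs0' : s' ≠ 0 := fun h0 => hs' (h0 ▸ dvd_zero 2)
  have h2 : (2^j * s).factorization 2 = j := by
    rw [Nat.factorization_mul (pow_ne_zero _ (by norm_num)) hs0,
      Nat.Prime.factorization_pow Nat.prime_two]
    simp [Nat.factorization_eq_zero_of_not_dvd hs]
  have h2' : (2^j' * s').factorization 2 = j' := by
    rw [Nat.factorization_mul (pow_ne_zero _ (by norm_num)) hs0',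
      Nat.Prime.factorization_pow Nat.prime_two]
    simp [Nat.factorization_eq_zero_of_not_dvd hs']
  have hj : j = j' := by rw [← h2, ← h2', h]
  subst hj
  refine ⟨rfl, ?_⟩
  exact Nat.eq_of_mul_eq_mul_left (pow_pos (by norm_num) j) h

lemma exists_pow2 {s k : ℕ} (h0 : 0 < s) (h : s ≤ 2^k) :
    ∃ j, 2^k < 2^j * s ∧ 2^j * s ≤ 2^(k+1) := by
  set P : ℕ → Prop := fun j => 2^j * s ≤ 2^(k+1) with hP
  have hP0 : P 0 := by
    simp only [P, pow_zero, one_mul]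
    calc s ≤ 2^k := h
    _ ≤ 2^(k+1) := Nat.pow_le_pow_right (by norm_num) (Nat.le_succ _)
  have hspec : P (Nat.findGreatest P (k+1)) :=
    Nat.findGreatest_spec (Nat.zero_le _) hP0
  refine ⟨Nat.findGreatest P (k+1), ?_, hspec⟩
  set j := Nat.findGreatest P (k+1) with hj
  rcases eq_or_lt_of_le (Nat.findGreatest_le (P := P) (k+1)) with heq | hlt
  · calc 2^k < 2^(k+1) := Nat.pow_lt_pow_right (by norm_num) (Nat.lt_succ_self _)
    _ = 2^(k+1) * 1 := (mul_one _).symm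
    _ ≤ 2^j * s := by rw [hj, heq]; exact Nat.mul_le_mul_left _ h0
  · have hng : ¬ P (j + 1) := Nat.findGreatest_is_greatest (Nat.lt_succ_self _) hlt
    simp only [P, not_le, pow_succ] at hng
    have e1 : 2^(k+1) = 2 * 2^k := by ring
    have e2 : 2^j * 2 * s = 2 * (2^j * s) := by ring
    omega

lemma primeCounting_eq (t : ℕ) :
    Nat.primeCounting t = ((Finset.range (t+1)).filter Nat.Prime).card := by
  rw [Nat.primeCounting, Nat.primeCounting', Nat.count_eq_card_filter_range]

lemma cheb_nat {t : ℕ} (ht3 : 3 ≤ t) :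
    ((Nat.primeCounting t : ℝ)) * Real.log t ≤ 7 * t := by
  classical
  set F := (Finset.range (t+1)).filter Nat.Prime with hF
  set s := Nat.sqrt t with hs
  set F1 := F.filter (fun p => p ≤ s) with hF1
  set F2 := F.filter (fun p => ¬ p ≤ s) with hF2
  have hcard : F1.card + F2.card = F.card :=
    Finset.card_filter_add_card_filter_not _
  have hc1 : F1.card ≤ s + 1 := by
    have : F1 ⊆ Finset.range (s+1) := by
      intro p hp
      simp only [hF1, Finset.mem_filter] at hp
      exact Finset.mem_range.2 (Nat.lt_succ_of_le hp.2)
    simpa using Finset.card_le_card this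
  -- product bound
  have hprod : (s+1)^F2.card ≤ 4^t := by
    calc (s+1)^F2.card ≤ ∏ p ∈ F2, p := by
          apply Finset.pow_card_le_prod
          intro p hp
          simp only [hF2, hF1, hF, Finset.mem_filter] at hp
          omega
    _ ≤ ∏ p ∈ F, p := by
          apply Finset.prod_le_prod_of_subset_of_one_le' (Finset.filter_subset _ _)
          intro p hp _
          simp only [hF, Finset.mem_filter] at hp
          exact hp.2.one_lt.le
    _ = primorial t := rfl
    _ ≤ 4^t := primorial_le_4_pow t
  have htpos : (1:ℝ) ≤ (t:ℝ) := by exact_mod_cast le_trans (by norm_num) ht3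
  have hlogt0 : 0 ≤ Real.log t := Real.log_nonneg htpos
  -- log of product bound
  have hsq : (t:ℝ) < ((s:ℝ)+1)^2 := by
    have h0 := Nat.lt_succ_sqrt' t
    have h1 : (t:ℝ) < (((s+1)^2 : ℕ):ℝ) := by exact_mod_cast h0
    push_cast at h1
    nlinarith
  have hlog2 : Real.log t ≤ 2 * Real.log ((s:ℝ)+1) := by
    have h1 : Real.log t ≤ Real.log (((s:ℝ)+1)^2) :=
      Real.log_le_log (by linarith) hsq.le
    rwa [Real.log_pow] at h1
  have hlogprod : (F2.card : ℝ) * Real.log ((s:ℝ)+1) ≤ (t:ℝ) * Real.log 4 := by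
    have h1 : (((s+1)^F2.card : ℕ) : ℝ) ≤ ((4^t : ℕ) : ℝ) := by exact_mod_cast hprod
    push_cast at h1
    have h2 := Real.log_le_log (by positivity) h1
    rwa [Real.log_pow, Real.log_pow] at h2
  have hc2log : (F2.card : ℝ) * Real.log t ≤ 2 * (t:ℝ) * Real.log 4 := by
    have := mul_le_mul_of_nonneg_left hlog2 (by positivity : (0:ℝ) ≤ (F2.card:ℝ))
    nlinarith [hlogprod, (by positivity : (0:ℝ) ≤ (F2.card:ℝ))]
  -- s * log t ≤ 2 t
  have hsrt : (s:ℝ) ≤ Real.sqrt t := by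
    rw [show (s:ℝ) = Real.sqrt ((s:ℝ)^2) from (Real.sqrt_sq (by positivity)).symm]
    apply Real.sqrt_le_sqrt
    have h0 := Nat.sqrt_le' t
    exact_mod_cast h0
  have hlogsqrt : Real.log t ≤ 2 * Real.sqrt t := by
    have h1 : Real.log (Real.sqrt t) ≤ Real.sqrt t - 1 :=
      Real.log_le_sub_one_of_pos (Real.sqrt_pos.2 (by linarith))
    have h2 : Real.log (Real.sqrt t) = Real.log t / 2 := Real.log_sqrt (by linarith)
    linarith
  have hslogt : (s:ℝ) * Real.log t ≤ 2 * t := by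
    have h0 : (0:ℝ) ≤ Real.sqrt t := Real.sqrt_nonneg _
    have hsq2 : Real.sqrt t * Real.sqrt t = t := Real.mul_self_sqrt (by linarith)
    nlinarith [hsrt, hlogsqrt, hlogt0]
  -- assemble
  have hrcard : (Nat.primeCounting t : ℝ) ≤ (s:ℝ) + 1 + F2.card := by
    rw [primeCounting_eq]
    have : F.card ≤ (s + 1) + F2.card := by omega
    exact_mod_cast this
  have hlog4 : Real.log 4 ≤ 1.4 := by
    rw [show (4:ℝ) = 2^2 by norm_num, Real.log_pow]
    have := Real.log_two_lt_d9
    push_cast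
    nlinarith
  have hsq2 : Real.sqrt t * Real.sqrt t = t := Real.mul_self_sqrt (by linarith)
  have hst1 : 1 ≤ Real.sqrt t := by nlinarith [Real.sqrt_nonneg (t:ℝ)]
  have hst : Real.sqrt t ≤ t := by nlinarith
  have h1logt : Real.log t ≤ 2 * t := by nlinarith [hlogsqrt]
  have hc2log' : (F2.card : ℝ) * Real.log t ≤ 3 * t := by
    have hB : (2*(t:ℝ)) * Real.log 4 ≤ (2*(t:ℝ)) * 1.4 :=
      mul_le_mul_of_nonneg_left hlog4 (by positivity)
    have hB' : 2 * (t:ℝ) * Real.log 4 = (2*(t:ℝ)) * Real.log 4 := by ring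
    rw [hB'] at hc2log
    norm_num at hB
    linarith
  have hA := mul_le_mul_of_nonneg_right hrcard hlogt0
  have hA' : ((s:ℝ) + 1 + (F2.card:ℝ)) * Real.log t
      = (s:ℝ) * Real.log t + Real.log t + (F2.card:ℝ) * Real.log t := by ring
  rw [hA'] at hA
  linarith

lemma cheb {T : ℝ} (hT : 3 ≤ T) :
    (Nat.primeCounting ⌊T⌋₊ : ℝ) * Real.log T ≤ 14 * T := by
  set t := ⌊T⌋₊ with htdef
  have ht3 : 3 ≤ t := Nat.le_floor (by exact_mod_cast hT)
  have htT : (t:ℝ) ≤ T := Nat.floor_le (by linarith)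
  have ht1 : (1:ℝ) ≤ (t:ℝ) := by
    have : (3:ℝ) ≤ (t:ℝ) := by exact_mod_cast ht3
    linarith
  have hTt1 : T < (t:ℝ) + 1 := Nat.lt_floor_add_one T
  have hlogT : Real.log T ≤ 2 * Real.log t := by
    have h1 : T ≤ (t:ℝ)^2 := by nlinarith
    have h2 := Real.log_le_log (by linarith) h1
    rw [Real.log_pow] at h2
    push_cast at h2
    linarith
  have hpos : (0:ℝ) ≤ (Nat.primeCounting t : ℝ) := by positivity
  have h3 := mul_le_mul_of_nonneg_left hlogT hpos
  have h4 := cheb_nat ht3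
  nlinarith

lemma primePi_ge2 {T : ℝ} (hT : 3 ≤ T) : 2 ≤ Nat.primeCounting ⌊T⌋₊ := by
  have ht3 : 3 ≤ ⌊T⌋₊ := Nat.le_floor (by exact_mod_cast hT)
  have h2 : Nat.primeCounting 3 = 2 := by decide
  calc 2 = Nat.primeCounting 3 := h2.symm
  _ ≤ Nat.primeCounting ⌊T⌋₊ := Nat.monotone_primeCounting ht3

lemma one_le_logT {T : ℝ} (hT : 3 ≤ T) : 1 ≤ Real.log T := by
  have h1 : Real.exp 1 ≤ T := by
    have := Real.exp_one_lt_d9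
    linarith
  have := Real.log_le_log (Real.exp_pos 1) h1
  rwa [Real.log_exp] at this

def Qset (t : ℕ) : Finset ℕ := ((Finset.range (t+1)).filter Nat.Prime).erase 2

lemma mem_Qset {t p : ℕ} : p ∈ Qset t ↔ p ≠ 2 ∧ p.Prime ∧ p ≤ t := by
  simp only [Qset, Finset.mem_erase, Finset.mem_filter, Finset.mem_range]
  constructor
  · rintro ⟨h1, h2, h3⟩; exact ⟨h1, h3, by omega⟩
  · rintro ⟨h1, h2, h3⟩; exact ⟨h1, by omega, h2⟩

lemma Qset_card {t : ℕ} (ht : 3 ≤ t) : (Qset t).card = Nat.primeCounting t - 1 := by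
  have h2 : (2:ℕ) ∈ (Finset.range (t+1)).filter Nat.Prime := by
    simp only [Finset.mem_filter, Finset.mem_range]
    exact ⟨by omega, Nat.prime_two⟩
  rw [Qset, Finset.card_erase_of_mem h2]
  rw [Nat.primeCounting, Nat.primeCounting', Nat.count_eq_card_filter_range]

def sigmaF (t B : ℕ) (v : {p // p ∈ Qset t} → Fin (B+1)) : ℕ :=
  ∏ p ∈ (Qset t).attach, (p:ℕ)^((v p):ℕ)

lemma sigmaF_pos {t B : ℕ} (v : {p // p ∈ Qset t} → Fin (B+1)) : 0 < sigmaF t B v := by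
  apply Finset.prod_pos
  intro p _
  exact pow_pos (mem_Qset.1 p.2).2.1.pos _

lemma sigmaF_factorization {t B : ℕ} (v : {p // p ∈ Qset t} → Fin (B+1)) {q : ℕ}
    (hq : q ∈ Qset t) : (sigmaF t B v).factorization q = (v ⟨q, hq⟩ : ℕ) := by
  unfold sigmaF
  rw [Nat.factorization_prod (fun p _ => pow_ne_zero _ (mem_Qset.1 p.2).2.1.pos.ne')]
  rw [Finset.sum_apply']
  have hcong : ∀ p ∈ (Qset t).attach,
      (((p:ℕ)^((v p):ℕ)).factorization) q = if p = ⟨q, hq⟩ then ((v p):ℕ) else 0 := by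
    intro p _
    rw [(mem_Qset.1 p.2).2.1.factorization_pow, Finsupp.single_apply]
    simp [Subtype.ext_iff]
  rw [Finset.sum_congr rfl hcong, Finset.sum_ite_eq' (Qset t).attach ⟨q, hq⟩]
  simp

lemma sigmaF_inj {t B : ℕ} : Function.Injective (sigmaF t B) := by
  intro v w h
  funext p
  have := sigmaF_factorization v p.2
  rw [show (⟨(p:ℕ), p.2⟩ : {p // p ∈ Qset t}) = p from Subtype.ext rfl] at this
  have h2 := sigmaF_factorization w p.2
  rw [show (⟨(p:ℕ), p.2⟩ : {p // p ∈ Qset t}) = p from Subtype.ext rfl] at h2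
  apply Fin.ext
  rw [← this, ← h2, h]

lemma sigmaF_odd {t B : ℕ} (v : {p // p ∈ Qset t} → Fin (B+1)) : ¬ 2 ∣ sigmaF t B v := by
  intro hdvd
  obtain ⟨p, hp, hdvd2⟩ := (Nat.prime_iff.1 Nat.prime_two).exists_mem_finset_dvd hdvd
  have h2p : (2:ℕ) ∣ (p:ℕ) := Nat.Prime.dvd_of_dvd_pow Nat.prime_two hdvd2
  have := (Nat.prime_dvd_prime_iff_eq Nat.prime_two (mem_Qset.1 p.2).2.1).1 h2p
  exact (mem_Qset.1 p.2).1 this.symm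

lemma sigmaF_prime_le {t B : ℕ} (v : {p // p ∈ Qset t} → Fin (B+1)) {q : ℕ}
    (hq : q.Prime) (hdvd : q ∣ sigmaF t B v) : q ≤ t := by
  obtain ⟨p, hp, hdvd2⟩ := (Nat.prime_iff.1 hq).exists_mem_finset_dvd hdvd
  have hqp : q ∣ (p:ℕ) := Nat.Prime.dvd_of_dvd_pow hq hdvd2
  have := (Nat.prime_dvd_prime_iff_eq hq (mem_Qset.1 p.2).2.1).1 hqp
  exact this ▸ (mem_Qset.1 p.2).2.2

lemma sigmaF_log {t B : ℕ} (ht : 1 ≤ t) (v : {p // p ∈ Qset t} → Fin (B+1)) :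
    Real.log (sigmaF t B v) ≤ ((Qset t).card : ℝ) * B * Real.log t := by
  unfold sigmaF
  have hne : ∀ p ∈ (Qset t).attach, ((((p:ℕ)^((v p):ℕ) : ℕ)):ℝ) ≠ 0 := by
    intro p _
    exact_mod_cast (pow_pos (mem_Qset.1 p.2).2.1.pos _).ne'
  rw [Nat.cast_prod, Real.log_prod hne]
  have hbound : ∀ p ∈ (Qset t).attach,
      Real.log (((p:ℕ)^((v p):ℕ) : ℕ) : ℝ) ≤ (B:ℝ) * Real.log t := by
    intro p _
    push_cast
    rw [Real.log_pow]
    have h1 : Real.log (p:ℕ) ≤ Real.log t :=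
      Real.log_le_log (by exact_mod_cast (mem_Qset.1 p.2).2.1.pos)
        (by exact_mod_cast (mem_Qset.1 p.2).2.2)
    have h2 : ((v p : ℕ):ℝ) ≤ (B:ℝ) := by
      exact_mod_cast Nat.lt_succ_iff.1 (v p).2
    have h3 : 0 ≤ Real.log (p:ℕ) := Real.log_nonneg (by exact_mod_cast (mem_Qset.1 p.2).2.1.one_lt.le)
    nlinarith [Real.log_nonneg (show (1:ℝ) ≤ (t:ℝ) by exact_mod_cast ht)]
  calc ∑ p ∈ (Qset t).attach, Real.log (((p:ℕ)^((v p):ℕ) : ℕ) : ℝ)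
      ≤ ∑ _p ∈ (Qset t).attach, (B:ℝ) * Real.log t := Finset.sum_le_sum hbound
  _ = ((Qset t).card : ℝ) * B * Real.log t := by
      rw [Finset.sum_const, Finset.card_attach, nsmul_eq_mul]; ring

set_option maxHeartbeats 1000000 in
theorem stmt1 :
    ∃ c₁ : ℝ, 0 < c₁ ∧
      ∀ y : ℝ → ℝ,
        (∀ a b : ℝ, 0 < a → a ≤ b → y a ≤ y b) →
        (∀ x : ℝ, 0 < x → 3 ≤ y x) →
        ∀ n : ℕ → ℕ,
          (∀ i j : ℕ, 1 ≤ i → i < j → n i < n j) →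
          (∀ i : ℕ, 1 ≤ i → 0 < n i ∧ (maxPrimeFactor (n i) : ℝ) ≤ y (n i)) →
          (∀ m : ℕ, 0 < m → (maxPrimeFactor m : ℝ) ≤ y m → ∃ i : ℕ, 1 ≤ i ∧ n i = m) →
          ∀ N : ℕ, ∃ i : ℕ, N ≤ i ∧ 1 ≤ i ∧
            (n (i + 1) : ℝ) - (n i : ℝ) <
              (n i : ℝ) * Real.exp (c₁ * y (n i)) /
                Real.log (n i) ^ (primePi (y (Real.sqrt (n i))) - 1) := by
  refine ⟨100, by norm_num, ?_⟩
  intro y hymono hy3 n hninc hnsm hnsurj N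
  by_contra hcon
  push_neg at hcon
  obtain ⟨k, hk⟩ : ∃ k : ℕ, k = N + 2 := ⟨_, rfl⟩
  have hk2 : 2 ≤ k := by omega
  have hkR : (2:ℝ) ≤ (k:ℝ) := by exact_mod_cast hk2
  have hmono : ∀ i j, 1 ≤ i → i ≤ j → n i ≤ n j := by
    intro i j h1 h2
    rcases eq_or_lt_of_le h2 with h | h
    · rw [h]
    · exact (hninc i j h1 h).le
  have log2pos : (0:ℝ) < Real.log 2 := Real.log_pos (by norm_num)
  have h2kpos : (0:ℝ) < 2^k := by positivity
  obtain ⟨T, hTdef⟩ : ∃ T : ℝ, T = y ((2:ℝ)^k) := ⟨_, rfl⟩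
  have hT3 : (3:ℝ) ≤ T := by rw [hTdef]; exact hy3 _ h2kpos
  obtain ⟨t, htdef⟩ : ∃ t : ℕ, t = ⌊T⌋₊ := ⟨_, rfl⟩
  obtain ⟨r, hrdef⟩ : ∃ r : ℕ, r = Nat.primeCounting t := ⟨_, rfl⟩
  have hr2 : 2 ≤ r := by rw [hrdef, htdef]; exact primePi_ge2 hT3
  have ht3 : 3 ≤ t := by rw [htdef]; exact Nat.le_floor (by exact_mod_cast hT3)
  have htT : (t:ℝ) ≤ T := by rw [htdef]; exact Nat.floor_le (by linarith)
  have hlogT1 : 1 ≤ Real.log T := one_le_logT hT3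
  have hcheb : (r:ℝ) * Real.log T ≤ 14 * T := by rw [hrdef, htdef]; exact cheb hT3
  obtain ⟨L, hLdef⟩ : ∃ L : ℝ, L = (r:ℝ) - 1 := ⟨_, rfl⟩
  have hrR : (2:ℝ) ≤ (r:ℝ) := by exact_mod_cast hr2
  have hL1 : 1 ≤ L := by rw [hLdef]; linarith
  have hLcast : ((r - 1 : ℕ) : ℝ) = L := by
    rw [Nat.cast_sub (by omega : 1 ≤ r), hLdef]; norm_num
  have hchebL : L * Real.log T ≤ 14 * T := by
    have h1 : L * Real.log T ≤ (r:ℝ) * Real.log T :=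
      mul_le_mul_of_nonneg_right (by rw [hLdef]; linarith) (by linarith)
    linarith
  have hL14 : L ≤ 14 * T := by nlinarith
  have hmem : ∀ m : ℕ, 2^k ≤ m → (maxPrimeFactor m : ℝ) ≤ T → ∃ i, 1 ≤ i ∧ n i = m := by
    intro m h1 h2
    have h2k : 0 < 2^k := Nat.pow_pos (by norm_num)
    apply hnsurj m (by omega)
    refine le_trans h2 ?_
    rw [hTdef]
    apply hymono _ _ h2kpos
    push_cast
    exact_mod_cast h1
  have hidxlarge : ∀ i, 1 ≤ i → 2^k < n i → k + 2 ≤ i := by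
    intro i h1 h2
    have hsm : ∀ a : ℕ, ∃ j, 1 ≤ j ∧ n j = 2^a := by
      intro a
      apply hnsurj _ (Nat.pow_pos (by norm_num))
      have hmpf : maxPrimeFactor (2^a) ≤ 2 := by
        apply mpf_le (by norm_num)
        intro p hp
        have hpp := Nat.prime_of_mem_primeFactors hp
        have hpd := hpp.dvd_of_dvd_pow (Nat.dvd_of_mem_primeFactors hp)
        exact Nat.le_of_dvd (by norm_num) hpd
      have h3 : (3:ℝ) ≤ y ((2^a : ℕ):ℝ) := hy3 _ (by positivity)
      calc (maxPrimeFactor (2^a) : ℝ) ≤ 2 := by exact_mod_cast hmpf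
      _ ≤ y ((2^a : ℕ):ℝ) := by linarith
    choose g hg1 hg2 using hsm
    have hcard : (Finset.range (k+1)).card ≤ (Finset.Ico 1 i).card := by
      apply Finset.card_le_card_of_injOn g
      · intro a ha
        rw [Finset.mem_coe, Finset.mem_Ico]
        refine ⟨hg1 a, ?_⟩
        by_contra hcc
        push_neg at hcc
        have h4 : n i ≤ n (g a) := hmono i (g a) h1 hcc
        rw [hg2 a] at h4
        have h5 : 2^a ≤ 2^k := Nat.pow_le_pow_right (by norm_num)
          (by simpa using Nat.lt_succ_iff.1 (Finset.mem_range.1 ha))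
        omega
      · intro a _ b _ hab
        have : (2:ℕ)^a = 2^b := by rw [← hg2 a, ← hg2 b, hab]
        exact Nat.pow_right_injective (le_refl 2) this
    rw [Nat.card_Ico, Finset.card_range] at hcard
    omega
  have hgap : ∀ i, 1 ≤ i → n (i+1) ≤ 2 * n i := by
    intro i h1
    obtain ⟨hpos, hsmi⟩ := hnsm i h1
    have hsm2 : (maxPrimeFactor (2 * n i) : ℝ) ≤ y ((2 * n i : ℕ):ℝ) := by
      have hmpf : maxPrimeFactor (2 * n i) ≤ max 2 (maxPrimeFactor (n i)) := by
        apply mpf_le (le_trans (by norm_num) (le_max_left _ _))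
        intro p hp
        have hpp := Nat.prime_of_mem_primeFactors hp
        have hpd := Nat.dvd_of_mem_primeFactors hp
        rcases (Nat.Prime.dvd_mul hpp).1 hpd with h | h
        · exact le_trans (Nat.le_of_dvd (by norm_num) h) (le_max_left _ _)
        · exact le_trans (le_mpf (Nat.mem_primeFactors.2 ⟨hpp, h, by omega⟩)) (le_max_right _ _)
      have hy2 : y ((n i : ℕ):ℝ) ≤ y ((2 * n i : ℕ):ℝ) := by
        apply hymono _ _ (by exact_mod_cast hpos)
        push_cast
        nlinarith [show (1:ℝ) ≤ (n i:ℝ) by exact_mod_cast hpos]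
      have hy3' : (3:ℝ) ≤ y ((2 * n i : ℕ):ℝ) := hy3 _ (by positivity)
      calc (maxPrimeFactor (2 * n i) : ℝ) ≤ ((max 2 (maxPrimeFactor (n i)) : ℕ) : ℝ) := by
            exact_mod_cast hmpf
      _ = max (2:ℝ) ((maxPrimeFactor (n i) : ℕ) : ℝ) := by push_cast [Nat.cast_max]; ring_nf
      _ ≤ y ((2 * n i : ℕ):ℝ) := max_le (by linarith) (le_trans hsmi hy2)
    obtain ⟨j, hj1, hj2⟩ := hnsurj (2 * n i) (by omega) hsm2
    have hij : i + 1 ≤ j := by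
      by_contra hcc
      push_neg at hcc
      have : n j ≤ n i := hmono j i hj1 (by omega)
      omega
    calc n (i+1) ≤ n j := hmono (i+1) j (by omega) hij
    _ = 2 * n i := hj2
  have hkey : ∀ i, 1 ≤ i → 2^k < n i → n i ≤ 2^(k+1) →
      0 < Real.log (n i) ∧
      Real.log (n i) ^ (primePi (y (Real.sqrt (n i))) - 1) ≤ (((k:ℝ)+1) * Real.log 2)^(r-1) ∧
      T ≤ y ((n i : ℕ):ℝ) := by
    intro i h1 h2 h3
    have hn2 : (2:ℝ)^k < (n i : ℝ) := by exact_mod_cast h2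
    have hn3 : (n i : ℝ) ≤ 2^(k+1) := by exact_mod_cast h3
    have h4le : (4:ℝ) ≤ (2:ℝ)^k := by
      calc (4:ℝ) = 2^2 := by norm_num
      _ ≤ 2^k := pow_le_pow_right₀ (by norm_num) hk2
    have hlogpos : 0 < Real.log (n i) := Real.log_pos (by linarith)
    have hlogup : Real.log (n i) ≤ ((k:ℝ)+1) * Real.log 2 := by
      have h5 := Real.log_le_log (by linarith) hn3
      rw [Real.log_pow] at h5
      push_cast at h5
      linarith
    have hsqrt : Real.sqrt (n i) ≤ (2:ℝ)^k := by
      have h4 : (n i : ℝ) ≤ ((2:ℝ)^k)^2 := by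
        calc (n i:ℝ) ≤ 2^(k+1) := hn3
        _ ≤ 2^(2*k) := pow_le_pow_right₀ (by norm_num) (by omega)
        _ = ((2:ℝ)^k)^2 := by rw [← pow_mul, Nat.mul_comm]
      calc Real.sqrt (n i) ≤ Real.sqrt (((2:ℝ)^k)^2) := Real.sqrt_le_sqrt h4
      _ = (2:ℝ)^k := Real.sqrt_sq (le_of_lt h2kpos)
    have hyS : y (Real.sqrt (n i)) ≤ T := by
      rw [hTdef]
      exact hymono _ _ (Real.sqrt_pos.2 (by linarith)) hsqrt
    have hrS : primePi (y (Real.sqrt (n i))) ≤ r := by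
      rw [hrdef, htdef]
      exact Nat.monotone_primeCounting (Nat.floor_mono hyS)
    have hTy : T ≤ y ((n i : ℕ):ℝ) := by
      rw [hTdef]
      exact hymono _ _ h2kpos (le_of_lt hn2)
    refine ⟨hlogpos, ?_, hTy⟩
    have hbase1 : 1 ≤ ((k:ℝ)+1) * Real.log 2 := by
      have := Real.log_two_gt_d9
      nlinarith
    calc Real.log (n i) ^ (primePi (y (Real.sqrt (n i))) - 1)
        ≤ (((k:ℝ)+1) * Real.log 2) ^ (primePi (y (Real.sqrt (n i))) - 1) :=
          pow_le_pow_left₀ hlogpos.le hlogup _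
    _ ≤ (((k:ℝ)+1) * Real.log 2) ^ (r - 1) :=
          pow_le_pow_right₀ hbase1 (Nat.sub_le_sub_right hrS 1)
  have hexp_pow : ∀ a : ℝ, 0 < a → a ^ (r-1) = Real.exp (L * Real.log a) := by
    intro a ha
    conv_lhs => rw [← Real.exp_log ha]
    rw [← Real.exp_nat_mul, hLcast]
  have hLlog : ∀ c : ℝ, 1 ≤ c → Real.log c ≤ 4.2 → L * Real.log (c * T) ≤ 73 * T := by
    intro c hc hlc
    rw [Real.log_mul (by linarith) (by linarith)]
    have h1 : L * Real.log c ≤ (14*T) * 4.2 :=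
      mul_le_mul hL14 hlc (Real.log_nonneg hc) (by linarith)
    have h2 : L * (Real.log c + Real.log T) = L * Real.log c + L * Real.log T := by ring
    rw [h2]
    nlinarith
  have hlog56 : Real.log 56 ≤ (4.2:ℝ) := by
    have h1 : Real.log 56 ≤ Real.log 64 := Real.log_le_log (by norm_num) (by norm_num)
    rw [show (64:ℝ) = 2^6 by norm_num, Real.log_pow] at h1
    have := Real.log_two_lt_d9
    push_cast at h1
    nlinarith
  have hlog28 : Real.log 28 ≤ (4.2:ℝ) := by
    have h1 : Real.log 28 ≤ Real.log 64 := Real.log_le_log (by norm_num) (by norm_num)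
    rw [show (64:ℝ) = 2^6 by norm_num, Real.log_pow] at h1
    have := Real.log_two_lt_d9
    push_cast at h1
    nlinarith
  rcases le_or_gt (2 * (L * Real.log T)) ((k:ℝ) * Real.log 2) with hA | hB
  · -- Case A : counting argument
    have hLTpos : (0:ℝ) < L * Real.log T := by nlinarith
    obtain ⟨W, hWdef⟩ : ∃ W : ℝ, W = (k:ℝ) * Real.log 2 / (L * Real.log T) := ⟨_, rfl⟩
    have hW2 : (2:ℝ) ≤ W := by rw [hWdef]; exact (le_div_iff₀ hLTpos).2 (by linarith)
    obtain ⟨B, hBdef⟩ : ∃ B : ℕ, B = ⌊W⌋₊ := ⟨_, rfl⟩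
    have hB2 : 2 ≤ B := by rw [hBdef]; exact Nat.le_floor (by exact_mod_cast hW2)
    have hBW : (B:ℝ) ≤ W := by rw [hBdef]; exact Nat.floor_le (by linarith)
    have hWB1 : W ≤ (B:ℝ) + 1 := by rw [hBdef]; exact (Nat.lt_floor_add_one W).le
    have hQcard : (Qset t).card = r - 1 := by rw [hrdef]; exact Qset_card ht3
    have htR1 : (1:ℝ) ≤ (t:ℝ) := by
      have : (3:ℕ) ≤ t := ht3
      exact_mod_cast le_trans (by norm_num) this
    have hs_le : ∀ v : {p // p ∈ Qset t} → Fin (B+1), sigmaF t B v ≤ 2^k := by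
      intro v
      have hlog := sigmaF_log (by omega) v
      rw [hQcard, hLcast] at hlog
      have hlt : Real.log (t:ℝ) ≤ Real.log T := Real.log_le_log (by linarith) htT
      have hlogt0 : 0 ≤ Real.log (t:ℝ) := Real.log_nonneg htR1
      have h2 : L * (B:ℝ) * Real.log (t:ℝ) ≤ L * W * Real.log T := by
        have e1 : (B:ℝ) * Real.log (t:ℝ) ≤ W * Real.log T :=
          mul_le_mul hBW hlt hlogt0 (by linarith)
        have e2 := mul_le_mul_of_nonneg_left e1 (by linarith : (0:ℝ) ≤ L)
        calc L * (B:ℝ) * Real.log (t:ℝ) = L * ((B:ℝ) * Real.log (t:ℝ)) := by ring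
        _ ≤ L * (W * Real.log T) := e2
        _ = L * W * Real.log T := by ring
      have h3 : L * W * Real.log T = (k:ℝ) * Real.log 2 := by
        rw [hWdef]
        have e3 : L * ((k:ℝ) * Real.log 2 / (L * Real.log T)) * Real.log T
            = (k:ℝ) * Real.log 2 * (L * Real.log T) / (L * Real.log T) := by ring
        rw [e3, mul_div_assoc, div_self hLTpos.ne', mul_one]
      have h4 : Real.log (sigmaF t B v) ≤ (k:ℝ) * Real.log 2 := by
        calc Real.log (sigmaF t B v) ≤ L * (B:ℝ) * Real.log (t:ℝ) := by
              have := hlog; linarith [hlog]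
        _ ≤ (k:ℝ) * Real.log 2 := by rw [← h3]; exact h2
      have hσpos : (0:ℝ) < (sigmaF t B v : ℝ) := by exact_mod_cast sigmaF_pos v
      have h5 : (sigmaF t B v : ℝ) ≤ (2:ℝ)^k := by
        have h6 := Real.exp_le_exp.2 h4
        rw [Real.exp_log hσpos] at h6
        calc (sigmaF t B v:ℝ) ≤ Real.exp ((k:ℝ) * Real.log 2) := h6
        _ = 2^k := by
            rw [show ((k:ℝ) * Real.log 2) = Real.log ((2:ℝ)^k) by
              rw [Real.log_pow]]
            exact Real.exp_log (by positivity)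
      exact_mod_cast h5
    have hψex : ∀ v, ∃ j, 2^k < 2^j * sigmaF t B v ∧ 2^j * sigmaF t B v ≤ 2^(k+1) :=
      fun v => exists_pow2 (sigmaF_pos v) (hs_le v)
    choose jf hj1 hj2 using hψex
    have hψinj : Function.Injective (fun v => 2^(jf v) * sigmaF t B v) := by
      intro v w h
      exact sigmaF_inj (odd_mul_pow_inj (sigmaF_odd v) (sigmaF_odd w) h).2
    have hψsm : ∀ v, (maxPrimeFactor (2^(jf v) * sigmaF t B v) : ℝ) ≤ T := by
      intro v
      have h1 : maxPrimeFactor (2^(jf v) * sigmaF t B v) ≤ t := by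
        apply mpf_le (by omega)
        intro p hp
        have hpp := Nat.prime_of_mem_primeFactors hp
        have hpd := Nat.dvd_of_mem_primeFactors hp
        rcases (Nat.Prime.dvd_mul hpp).1 hpd with h | h
        · have h7 : p ∣ 2 := hpp.dvd_of_dvd_pow h
          have h8 : p ≤ 2 := Nat.le_of_dvd (by norm_num) h7
          omega
        · exact sigmaF_prime_le v hpp h
      calc (maxPrimeFactor (2^(jf v) * sigmaF t B v):ℝ) ≤ (t:ℝ) := by exact_mod_cast h1
      _ ≤ T := htT
    have hιex : ∀ v, ∃ i, 1 ≤ i ∧ n i = 2^(jf v) * sigmaF t B v :=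
      fun v => hmem _ (hj1 v).le (hψsm v)
    choose ι hι1 hι2 using hιex
    have hιinj : Function.Injective ι := by
      intro v w h
      apply hψinj
      show 2^(jf v) * sigmaF t B v = 2^(jf w) * sigmaF t B w
      rw [← hι2 v, ← hι2 w, h]
    have hne : Nonempty ({p // p ∈ Qset t} → Fin (B+1)) := ⟨fun _ => ⟨0, by omega⟩⟩
    obtain ⟨F, hFdef⟩ : ∃ F : Finset ℕ, F = Finset.image ι Finset.univ := ⟨_, rfl⟩
    have hFcard : F.card = (B+1)^(r-1) := by
      rw [hFdef, Finset.card_image_of_injective _ hιinj, Finset.card_univ,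
        Fintype.card_fun, Fintype.card_fin, Fintype.card_coe, hQcard]
    have hFne : F.Nonempty := by
      rw [hFdef]
      exact (Finset.univ_nonempty).image ι
    obtain ⟨i₁, hi₁⟩ : ∃ z : ℕ, z = F.min' hFne := ⟨_, rfl⟩
    obtain ⟨i₂, hi₂⟩ : ∃ z : ℕ, z = F.max' hFne := ⟨_, rfl⟩
    have hFprop : ∀ i ∈ F, 1 ≤ i ∧ 2^k < n i ∧ n i ≤ 2^(k+1) := by
      intro i hi
      rw [hFdef] at hi
      simp only [Finset.mem_image, Finset.mem_univ, true_and] at hi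
      obtain ⟨v, rfl⟩ := hi
      exact ⟨hι1 v, by rw [hι2 v]; exact hj1 v, by rw [hι2 v]; exact hj2 v⟩
    obtain ⟨h11, h12, h13⟩ := hFprop i₁ (by rw [hi₁]; exact F.min'_mem hFne)
    obtain ⟨h21, h22, h23⟩ := hFprop i₂ (by rw [hi₂]; exact F.max'_mem hFne)
    have hspread : (B+1)^(r-1) ≤ i₂ - i₁ + 1 := by
      rw [← hFcard]
      calc F.card ≤ (Finset.Icc i₁ i₂).card :=
            Finset.card_le_card (fun i hi => Finset.mem_Icc.2
              ⟨by rw [hi₁]; exact F.min'_le i hi, by rw [hi₂]; exact F.le_max' i hi⟩)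
      _ = i₂ + 1 - i₁ := Nat.card_Icc i₁ i₂
      _ ≤ i₂ - i₁ + 1 := by omega
    have hmid : ∀ i, i₁ ≤ i → i ≤ i₂ → 1 ≤ i ∧ 2^k < n i ∧ n i ≤ 2^(k+1) := by
      intro i ha hb
      have h1 : 1 ≤ i := le_trans h11 ha
      exact ⟨h1, lt_of_lt_of_le h12 (hmono i₁ i h11 ha), le_trans (hmono i i₂ h1 hb) h23⟩
    obtain ⟨D₂, hD₂⟩ : ∃ d : ℝ, d = (((k:ℝ)+1) * Real.log 2)^(r-1) := ⟨_, rfl⟩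
    have hbase1 : (1:ℝ) ≤ ((k:ℝ)+1) * Real.log 2 := by
      have := Real.log_two_gt_d9
      nlinarith
    have hD₂0 : (0:ℝ) < D₂ := by rw [hD₂]; positivity
    obtain ⟨X, hX⟩ : ∃ x : ℝ, x = (2:ℝ)^k * Real.exp (100*T) / D₂ := ⟨_, rfl⟩
    have hX0 : (0:ℝ) < X := by rw [hX]; exact div_pos (by positivity) hD₂0
    have hXgap : ∀ i, i₁ ≤ i → i < i₂ → X ≤ (n (i+1):ℝ) - n i := by
      intro i ha hb
      obtain ⟨h1, h2, h3⟩ := hmid i ha hb.le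
      have hNi : N ≤ i := by have := hidxlarge i h1 h2; omega
      have hc := hcon i hNi h1
      obtain ⟨hlogpos, hDle, hTy⟩ := hkey i h1 h2 h3
      refine le_trans ?_ hc
      rw [hX, hD₂]
      apply div_le_div₀ (by positivity) ?_ (pow_pos hlogpos _) hDle
      have hnum1 : (2:ℝ)^k ≤ (n i:ℝ) := by
        have : (2:ℝ)^k < (n i:ℝ) := by exact_mod_cast h2
        linarith
      have hnum2 : Real.exp (100*T) ≤ Real.exp (100 * y ((n i:ℕ):ℝ)) :=
        Real.exp_le_exp.2 (by linarith)
      exact mul_le_mul hnum1 hnum2 (Real.exp_pos _).le (by positivity)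
    have htel : ∀ d : ℕ, i₁ + d ≤ i₂ → (n i₁ : ℝ) + (d:ℝ) * X ≤ (n (i₁ + d) : ℝ) := by
      intro d
      induction d with
      | zero => intro _; simp
      | succ m ih =>
        intro hle
        have h1 := ih (by omega)
        have h2 := hXgap (i₁ + m) (by omega) (by omega)
        have h3 : i₁ + (m+1) = (i₁ + m) + 1 := by omega
        rw [h3]
        push_cast
        push_cast at h1
        linarith
    have hi12 : i₁ ≤ i₂ := by
      rw [hi₁, hi₂]; exact F.min'_le _ (F.max'_mem hFne)
    have htel2 := htel (i₂ - i₁) (by omega)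
    rw [show i₁ + (i₂ - i₁) = i₂ by omega] at htel2
    have hC1 : 1 ≤ (B+1)^(r-1) := Nat.one_le_pow _ _ (by omega)
    have hcnt : ((B+1)^(r-1) : ℝ) - 1 ≤ ((i₂ - i₁ : ℕ):ℝ) := by
      have h1 : (B+1)^(r-1) - 1 ≤ i₂ - i₁ := by omega
      have h2 : (((B+1)^(r-1) - 1 : ℕ):ℝ) = ((B+1)^(r-1) : ℕ) - 1 := by
        push_cast [Nat.cast_sub hC1]
        ring
      calc ((B+1)^(r-1) : ℝ) - 1 = (((B+1)^(r-1) : ℕ):ℝ) - 1 := by push_cast; ring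
      _ = (((B+1)^(r-1) - 1 : ℕ):ℝ) := by rw [h2]
      _ ≤ ((i₂ - i₁ : ℕ):ℝ) := by exact_mod_cast h1
    -- analytic core
    have hCW : W^(r-1) ≤ (((B+1)^(r-1) : ℕ):ℝ) := by
      push_cast
      exact pow_le_pow_left₀ (by linarith) (by push_cast at hWB1 ⊢; linarith) _
    have hC2 : (2:ℝ) ≤ (((B+1)^(r-1) : ℕ):ℝ) := by
      have h1 : (2:ℕ) ≤ (B+1)^(r-1) := by
        calc (2:ℕ) ≤ B+1 := by omega
        _ = (B+1)^1 := (pow_one _).symm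
        _ ≤ (B+1)^(r-1) := Nat.pow_le_pow_right (by omega) (by omega)
      exact_mod_cast h1
    have h28 : ((k:ℝ)+1) * Real.log 2 ≤ W * (28*T) := by
      rw [hWdef, div_mul_eq_mul_div, le_div_iff₀ hLTpos]
      have e1 : ((k:ℝ)+1) * Real.log 2 * (L * Real.log T) ≤
          (2*(k:ℝ)) * Real.log 2 * (L * Real.log T) := by
        apply mul_le_mul_of_nonneg_right _ hLTpos.le
        apply mul_le_mul_of_nonneg_right _ log2pos.le
        linarith
      have e3 : ((k:ℝ) * Real.log 2) * (2*(L*Real.log T)) ≤ ((k:ℝ)*Real.log 2) * (28*T) := by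
        apply mul_le_mul_of_nonneg_left _ (by positivity)
        linarith
      calc ((k:ℝ)+1) * Real.log 2 * (L * Real.log T)
          ≤ (2*(k:ℝ)) * Real.log 2 * (L * Real.log T) := e1
      _ = ((k:ℝ) * Real.log 2) * (2*(L*Real.log T)) := by ring
      _ ≤ ((k:ℝ)*Real.log 2) * (28*T) := e3
      _ = (k:ℝ) * Real.log 2 * (28*T) := by ring
    have hD₂le : D₂ ≤ W^(r-1) * (28*T)^(r-1) := by
      rw [hD₂, ← mul_pow]
      exact pow_le_pow_left₀ (by positivity) h28 _
    have h28exp : (28*T)^(r-1) ≤ Real.exp (73*T) := by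
      rw [hexp_pow _ (by linarith)]
      exact Real.exp_le_exp.2 (hLlog 28 (by norm_num) hlog28)
    have h2exp : 2 * Real.exp (73*T) ≤ Real.exp (100*T) := by
      have e1 : Real.exp (100*T) = Real.exp (27*T) * Real.exp (73*T) := by
        rw [← Real.exp_add]; ring_nf
      have e2 : (2:ℝ) ≤ Real.exp (27*T) := by
        have := Real.add_one_le_exp (27*T)
        linarith
      nlinarith [Real.exp_pos (73*T), Real.exp_pos (100*T)]
    have hfin : D₂ ≤ ((((B+1)^(r-1) : ℕ):ℝ) - 1) * Real.exp (100*T) := by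
      have hW0 : (0:ℝ) ≤ W := by linarith
      have hCm1 : W^(r-1) / 2 ≤ (((B+1)^(r-1) : ℕ):ℝ) - 1 := by linarith
      calc D₂ ≤ W^(r-1) * (28*T)^(r-1) := hD₂le
      _ ≤ W^(r-1) * Real.exp (73*T) :=
          mul_le_mul_of_nonneg_left h28exp (by positivity)
      _ = (W^(r-1)/2) * (2*Real.exp (73*T)) := by ring
      _ ≤ ((((B+1)^(r-1) : ℕ):ℝ) - 1) * Real.exp (100*T) :=
          mul_le_mul hCm1 h2exp (by positivity) (by linarith)
    have hkeyA : (2:ℝ)^k ≤ ((((B+1)^(r-1) : ℕ):ℝ) - 1) * X := by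
      have e1 : ((((B+1)^(r-1) : ℕ):ℝ) - 1) * X
          = (2:ℝ)^k * (((((B+1)^(r-1) : ℕ):ℝ) - 1) * Real.exp (100*T)) / D₂ := by
        rw [hX]; ring
      rw [e1, le_div_iff₀ hD₂0]
      exact mul_le_mul_of_nonneg_left hfin (by positivity)
    have hni₁ : (2:ℝ)^k + 1 ≤ (n i₁ : ℝ) := by
      have : 2^k + 1 ≤ n i₁ := h12
      push_cast at this ⊢
      exact_mod_cast this
    have hni₂ : (n i₂ : ℝ) ≤ 2^(k+1) := by exact_mod_cast h23
    have hC1X : ((((B+1)^(r-1):ℕ):ℝ) - 1) * X ≤ ((i₂ - i₁:ℕ):ℝ) * X := by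
      apply mul_le_mul_of_nonneg_right _ hX0.le
      calc ((((B+1)^(r-1):ℕ):ℝ) - 1) = ((B+1)^(r-1):ℝ) - 1 := by push_cast; ring
      _ ≤ ((i₂ - i₁ : ℕ):ℝ) := hcnt
    have h2k1 : (2:ℝ)^(k+1) = 2 * 2^k := by ring
    linarith
  · -- Case B : trivial gap
    have hpow : (2:ℕ)^k ≤ 2^(k+1) := Nat.pow_le_pow_right (by norm_num) (by omega)
    obtain ⟨i0, hi01, hi0n⟩ := hmem (2^(k+1)) hpow (by
      have hmpf : maxPrimeFactor (2^(k+1)) ≤ 2 := by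
        apply mpf_le (by norm_num)
        intro p hp
        have hpp := Nat.prime_of_mem_primeFactors hp
        have hpd := hpp.dvd_of_dvd_pow (Nat.dvd_of_mem_primeFactors hp)
        exact Nat.le_of_dvd (by norm_num) hpd
      calc (maxPrimeFactor (2^(k+1)) : ℝ) ≤ 2 := by exact_mod_cast hmpf
      _ ≤ T := by linarith)
    have hn0 : 2^k < n i0 := by
      rw [hi0n]
      exact Nat.pow_lt_pow_right (by norm_num) (by omega)
    have hiN : N ≤ i0 := by have := hidxlarge i0 hi01 hn0; omega
    have hconi := hcon i0 hiN hi01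
    obtain ⟨hlogpos, hDle, hTy⟩ := hkey i0 hi01 hn0 (le_of_eq hi0n)
    have hgapi := hgap i0 hi01
    have hbound : (((k:ℝ)+1) * Real.log 2)^(r-1) < Real.exp (100 * y ((n i0:ℕ):ℝ)) := by
      have hk1 : (1:ℝ) ≤ (k:ℝ) := by linarith
      have h1 : ((k:ℝ)+1) * Real.log 2 ≤ 56 * T := by
        have e1 : ((k:ℝ)+1) * Real.log 2 ≤ 2 * ((k:ℝ) * Real.log 2) := by nlinarith
        nlinarith
      have h2 : (((k:ℝ)+1) * Real.log 2)^(r-1) ≤ (56*T)^(r-1) := by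
        apply pow_le_pow_left₀ _ h1
        have := Real.log_two_gt_d9
        nlinarith
      have h3 : (56*T)^(r-1) = Real.exp (L * Real.log (56*T)) := hexp_pow _ (by linarith)
      have h4 : L * Real.log (56*T) ≤ 73*T := hLlog 56 (by norm_num) hlog56
      have h5 : Real.exp (L * Real.log (56*T)) < Real.exp (100 * y ((n i0:ℕ):ℝ)) := by
        apply Real.exp_lt_exp.2
        have : (100:ℝ) * T ≤ 100 * y ((n i0:ℕ):ℝ) := by linarith
        linarith
      calc (((k:ℝ)+1) * Real.log 2)^(r-1) ≤ (56*T)^(r-1) := h2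
      _ = Real.exp (L * Real.log (56*T)) := h3
      _ < Real.exp (100 * y ((n i0:ℕ):ℝ)) := h5
    have hn0R : (0:ℝ) < (n i0 : ℝ) := by
      have : 0 < n i0 := by omega
      exact_mod_cast this
    have hD0 : 0 < Real.log (n i0) ^ (primePi (y (Real.sqrt (n i0))) - 1) := pow_pos hlogpos _
    have hRHSgt : (n i0 : ℝ) <
        (n i0 : ℝ) * Real.exp (100 * y ((n i0:ℕ):ℝ)) /
          Real.log (n i0) ^ (primePi (y (Real.sqrt (n i0))) - 1) := by
      rw [lt_div_iff₀ hD0]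
      have hDlt : Real.log (n i0) ^ (primePi (y (Real.sqrt (n i0))) - 1) <
          Real.exp (100 * y ((n i0:ℕ):ℝ)) := lt_of_le_of_lt hDle hbound
      nlinarith
    have hgapR : (n (i0+1) : ℝ) ≤ 2 * (n i0:ℝ) := by exact_mod_cast hgapi
    linarith
end

section
/- Assume the abc conjecture: for each ε > 0 there is a positive number c(ε) such that for all pairwise coprime positive integers x, y, z with x + y = z one has z < c(ε)·G^{1+ε}, where G is the product of the distinct primes dividing xyz. Then for every ε > 0 there exist a positive number c₁(ε) and a positive number c₂ such that the following holds: if y is a non-decreasing function from the positive real numbers to the real numbers with y(x) ≥ 3 for all x > 0, and n_1 < n_2 < n_3 < ... is the increasing sequence of all positive integers n with P(n) ≤ y(n), then for every i ≥ 1, n_{i+1} − n_i > c₁(ε)·n_i^{1−ε} / exp(c₂·y(n_{i+1})). -/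
set_option maxHeartbeats 1000000


open Real Filter

/-- The radical of `n`: the product of the distinct primes dividing `n`. -/
def rad (n : ℕ) : ℕ := n.primeFactors.prod id

theorem key_gap
    (habc : ∀ ε : ℝ, 0 < ε → ∃ C : ℝ, 0 < C ∧
      ∀ x y z : ℕ, 0 < x → 0 < y → 0 < z →
        Nat.Coprime x y → Nat.Coprime y z → Nat.Coprime x z → x + y = z →
        (z : ℝ) < C * (rad (x * y * z) : ℝ) ^ ((1 : ℝ) + ε)) :
    ∀ ε : ℝ, 0 < ε → ε ≤ 1/2 → ∃ c₁ : ℝ, 0 < c₁ ∧ ∃ c₂ : ℝ, 0 < c₂ ∧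
      ∀ y : ℝ → ℝ,
        (∀ a b : ℝ, 0 < a → a ≤ b → y a ≤ y b) →
        (∀ x : ℝ, 0 < x → 3 ≤ y x) →
        ∀ n : ℕ → ℕ,
          (∀ i j : ℕ, 1 ≤ i → i < j → n i < n j) →
          (∀ i : ℕ, 1 ≤ i → 0 < n i ∧ (maxPrimeFactor (n i) : ℝ) ≤ y (n i)) →
          (∀ m : ℕ, 0 < m → (maxPrimeFactor m : ℝ) ≤ y m → ∃ i : ℕ, 1 ≤ i ∧ n i = m) →
          ∀ i : ℕ, 1 ≤ i →
            c₁ * (n i : ℝ) ^ ((1 : ℝ) - ε) / Real.exp (c₂ * y (n (i + 1))) <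
              (n (i + 1) : ℝ) - (n i : ℝ) := by
  intro ε hε hε2
  obtain ⟨C, hC, hABC⟩ := habc ε hε
  set C' : ℝ := max C 1 with hC'def
  have hC1 : (1:ℝ) ≤ C' := le_max_right _ _
  have hC'pos : (0:ℝ) < C' := lt_of_lt_of_le one_pos hC1
  refine ⟨1 / C', by positivity, 6, by norm_num, ?_⟩
  intro y hmono h3 n hlt hprop _ i hi
  obtain ⟨ha, hPa⟩ := hprop i hi
  obtain ⟨hb, hPb⟩ := hprop (i+1) (le_trans hi (Nat.le_succ i))
  set a := n i with ha_def
  set b := n (i+1) with hb_def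
  have hab : a < b := hlt i (i+1) hi (Nat.lt_succ_self i)
  have hya : y a ≤ y b := hmono a b (by exact_mod_cast ha) (by exact_mod_cast hab.le)
  have hy3 : (3:ℝ) ≤ y b := h3 b (by exact_mod_cast hb)
  have hYpos : (0:ℝ) ≤ y b := by linarith
  set Y : ℕ := ⌊y b⌋₊ with hY
  -- the primes of a smooth number lie below Y
  have hsub : ∀ m : ℕ, (maxPrimeFactor m : ℝ) ≤ y b →
      m.primeFactors ⊆ (Finset.range (Y+1)).filter Nat.Prime := by
    intro m hm p hp
    have hp' := Nat.prime_of_mem_primeFactors hp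
    have hple : (p : ℝ) ≤ y b := by
      refine le_trans ?_ hm
      have h1 : p ≤ maxPrimeFactor m :=
        le_trans (Finset.le_sup (f := id) hp) (le_max_right 1 _)
      exact_mod_cast h1
    have : p ≤ Y := Nat.le_floor hple
    simp only [Finset.mem_filter, Finset.mem_range, Nat.lt_succ_iff]
    exact ⟨this, hp'⟩
  -- gcd setup
  set g := Nat.gcd a b with hg_def
  have hg : 0 < g := Nat.gcd_pos_of_pos_left _ ha
  have hga : g ∣ a := Nat.gcd_dvd_left a b
  have hgb : g ∣ b := Nat.gcd_dvd_right a b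
  set d := b - a with hd_def
  have hd : 0 < d := Nat.sub_pos_of_lt hab
  have hgd : g ∣ d := Nat.dvd_sub hgb hga
  set a' := a / g with ha'_def
  set b' := b / g with hb'_def
  set d' := d / g with hd'_def
  have ha' : 0 < a' := Nat.div_pos (Nat.le_of_dvd ha hga) hg
  have hb' : 0 < b' := Nat.div_pos (Nat.le_of_dvd (ha.trans hab) hgb) hg
  have hd' : 0 < d' := Nat.div_pos (Nat.le_of_dvd hd hgd) hg
  have hsum : d' + a' = b' := by
    have h1 : d + a = b := Nat.sub_add_cancel hab.le
    calc d' + a' = (d + a) / g := (Nat.add_div_of_dvd_right hgd).symm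
      _ = b / g := by rw [h1]
  have co_ab : Nat.Coprime a' b' := Nat.coprime_div_gcd_div_gcd hg
  have co_da : Nat.Coprime d' a' := by
    have h := co_ab
    rw [← hsum, Nat.coprime_add_self_right] at h
    exact h.symm
  have co_db : Nat.Coprime d' b' := by
    rw [← hsum, Nat.coprime_self_add_right]
    exact co_da
  have habc' := hABC d' a' b' hd' ha' hb' co_da co_ab co_db hsum
  -- radical bound
  set K := primorial Y with hK_def
  have hK1 : 1 ≤ K := primorial_pos Y
  have hradmul : rad (d' * a' * b') = rad d' * rad a' * rad b' := by
    have hdisj1 : Disjoint d'.primeFactors a'.primeFactors :=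
      co_da.disjoint_primeFactors
    have hdisj2 : Disjoint (d' * a').primeFactors b'.primeFactors :=
      (Nat.Coprime.mul co_db co_ab).disjoint_primeFactors
    unfold rad
    rw [Nat.primeFactors_mul (Nat.mul_ne_zero hd'.ne' ha'.ne') hb'.ne',
      Finset.prod_union hdisj2,
      Nat.primeFactors_mul hd'.ne' ha'.ne', Finset.prod_union hdisj1]
  have hradd' : rad d' ≤ d' :=
    Nat.le_of_dvd hd' (by simpa [rad] using Nat.prod_primeFactors_dvd d')
  have hradK : ∀ m : ℕ, m ∣ a ∨ m ∣ b → rad m ≤ K := by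
    intro m hm
    have hsub' : m.primeFactors ⊆ (Finset.range (Y+1)).filter Nat.Prime := by
      rcases hm with hm | hm
      · exact (Nat.primeFactors_mono hm ha.ne').trans (hsub a (le_trans hPa hya))
      · exact (Nat.primeFactors_mono hm (ha.trans hab).ne').trans (hsub b hPb)
    refine Finset.prod_le_prod_of_subset_of_one_le' hsub' ?_
    intro p hp _
    exact (Finset.mem_filter.mp hp).2.one_lt.le
  have hrada : rad a' ≤ K := hradK a' (Or.inl (Nat.div_dvd_of_dvd hga))
  have hradb : rad b' ≤ K := hradK b' (Or.inr (Nat.div_dvd_of_dvd hgb))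
  have hradle : rad (d' * a' * b') ≤ d' * (K * K) := by
    rw [hradmul, mul_assoc]
    exact Nat.mul_le_mul hradd' (Nat.mul_le_mul hrada hradb)
  -- K ≤ exp (2 y b)
  have hlog4 : Real.log 4 ≤ 2 := by
    rw [Real.log_le_iff_le_exp (by norm_num)]
    have h1 : (2.7:ℝ) < Real.exp 1 := lt_trans (by norm_num) Real.exp_one_gt_d9
    have h2 : Real.exp 2 = Real.exp 1 * Real.exp 1 := by
      rw [← Real.exp_add]; norm_num
    nlinarith
  have hKexp : (K : ℝ) ≤ Real.exp (2 * y b) := by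
    have h4 : (K : ℝ) ≤ (4:ℝ) ^ Y := by exact_mod_cast primorial_le_4_pow Y
    have h5 : (4:ℝ) ^ Y = Real.exp ((Y : ℝ) * Real.log 4) := by
      rw [← Real.rpow_natCast 4 Y, Real.rpow_def_of_pos (by norm_num : (0:ℝ) < 4), mul_comm]
    have hYle : (Y : ℝ) ≤ y b := Nat.floor_le hYpos
    have h6 : (Y : ℝ) * Real.log 4 ≤ 2 * y b := by nlinarith [Nat.cast_nonneg (α := ℝ) Y, Real.log_nonneg (by norm_num : (1:ℝ) ≤ 4)]
    calc (K:ℝ) ≤ (4:ℝ) ^ Y := h4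
      _ = Real.exp ((Y:ℝ) * Real.log 4) := h5
      _ ≤ Real.exp (2 * y b) := Real.exp_le_exp.mpr h6
  -- real quantities
  have hgpos : (0:ℝ) < (g:ℝ) := by exact_mod_cast hg
  have hD'pos : (0:ℝ) < (d':ℝ) := by exact_mod_cast hd'
  have hDpos : (0:ℝ) < (d:ℝ) := by exact_mod_cast hd
  have hDD' : (d':ℝ) * (g:ℝ) = (d:ℝ) := by exact_mod_cast Nat.div_mul_cancel hgd
  have hD'le : (d':ℝ) ≤ (d:ℝ) := by exact_mod_cast Nat.div_le_self d g
  have hBB' : (b:ℝ) = (b':ℝ) * (g:ℝ) := by exact_mod_cast (Nat.div_mul_cancel hgb).symm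
  have hKpos : (0:ℝ) ≤ (K:ℝ) := by positivity
  have hsplit : (d':ℝ) ^ ((1:ℝ)+ε) = (d':ℝ) * (d':ℝ) ^ ε := by
    rw [Real.rpow_add hD'pos, Real.rpow_one]
  have hsplitD : (d:ℝ) ^ ((1:ℝ)+ε) = (d:ℝ) * (d:ℝ) ^ ε := by
    rw [Real.rpow_add hDpos, Real.rpow_one]
  have hKK : ((K:ℝ) * K) ^ ((1:ℝ)+ε) ≤ Real.exp (6 * y b) := by
    have h1 : (K:ℝ) * K ≤ Real.exp (4 * y b) := by
      have h2 : Real.exp (4 * y b) = Real.exp (2 * y b) * Real.exp (2 * y b) := by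
        rw [← Real.exp_add]; ring_nf
      rw [h2]; exact mul_le_mul hKexp hKexp hKpos (Real.exp_pos _).le
    calc ((K:ℝ) * K) ^ ((1:ℝ)+ε) ≤ (Real.exp (4 * y b)) ^ ((1:ℝ)+ε) :=
        Real.rpow_le_rpow (by positivity) h1 (by linarith)
      _ = Real.exp (4 * y b * (1+ε)) := (Real.exp_mul _ _).symm
      _ ≤ Real.exp (6 * y b) := Real.exp_le_exp.mpr (by nlinarith)
  set R : ℝ := (rad (d' * a' * b') : ℝ) with hR_def
  have hRnonneg : (0:ℝ) ≤ R := by positivity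
  have hradleR : R ≤ (d':ℝ) * ((K:ℝ) * K) := by
    rw [hR_def]; exact_mod_cast hradle
  have hrpow : R ^ ((1:ℝ)+ε) ≤ ((d':ℝ) * ((K:ℝ) * K)) ^ ((1:ℝ)+ε) :=
    Real.rpow_le_rpow hRnonneg hradleR (by linarith)
  have hbound : (b:ℝ) < C' * Real.exp (6 * y b) * (d:ℝ) ^ ((1:ℝ)+ε) := by
    have c0 : (b':ℝ) < C' * R ^ ((1:ℝ)+ε) := by
      refine lt_of_lt_of_le habc' ?_
      exact mul_le_mul_of_nonneg_right (le_max_left C 1) (Real.rpow_nonneg hRnonneg _)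
    calc (b:ℝ) = (b':ℝ) * g := hBB'
      _ < (C' * R ^ ((1:ℝ)+ε)) * g := mul_lt_mul_of_pos_right c0 hgpos
      _ ≤ (C' * ((d':ℝ) * ((K:ℝ) * K)) ^ ((1:ℝ)+ε)) * g :=
          mul_le_mul_of_nonneg_right (mul_le_mul_of_nonneg_left hrpow hC'pos.le) hgpos.le
      _ = C' * ((K:ℝ) * K) ^ ((1:ℝ)+ε) * ((d':ℝ) ^ ε * ((d':ℝ) * g)) := by
          rw [Real.mul_rpow hD'pos.le (by positivity), hsplit]; ring
      _ = C' * ((K:ℝ) * K) ^ ((1:ℝ)+ε) * ((d':ℝ) ^ ε * (d:ℝ)) := by rw [hDD']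
      _ ≤ C' * Real.exp (6 * y b) * ((d:ℝ) ^ ε * (d:ℝ)) := by
          apply mul_le_mul (mul_le_mul_of_nonneg_left hKK hC'pos.le)
          · exact mul_le_mul_of_nonneg_right
              (Real.rpow_le_rpow hD'pos.le hD'le hε.le) hDpos.le
          · positivity
          · positivity
      _ = C' * Real.exp (6 * y b) * (d:ℝ) ^ ((1:ℝ)+ε) := by rw [hsplitD]; ring
  -- extract the lower bound on d
  set E : ℝ := Real.exp (6 * y b) with hE_def
  have hEpos : (0:ℝ) < E := Real.exp_pos _
  have hE1 : (1:ℝ) ≤ E := by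
    rw [hE_def]
    calc (1:ℝ) = Real.exp 0 := Real.exp_zero.symm
      _ ≤ Real.exp (6 * y b) := Real.exp_le_exp.mpr (by nlinarith)
  set M : ℝ := C' * E with hM_def
  have hMpos : (0:ℝ) < M := by positivity
  have hM1 : (1:ℝ) ≤ M := one_le_mul_of_one_le_of_one_le hC1 hE1
  have hA1 : (1:ℝ) ≤ (a:ℝ) := by exact_mod_cast ha
  have hB1 : (1:ℝ) ≤ (b:ℝ) := by exact_mod_cast (ha.trans hab)
  have h1ε : (0:ℝ) < 1 + ε := by linarith
  have s1 : (a:ℝ) ^ ((1:ℝ)-ε) ≤ (b:ℝ) ^ ((1:ℝ)-ε) :=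
    Real.rpow_le_rpow (by linarith) (by exact_mod_cast hab.le) (by linarith)
  have s2 : (b:ℝ) ^ ((1:ℝ)-ε) ≤ (b:ℝ) ^ (1/(1+ε)) := by
    apply Real.rpow_le_rpow_of_exponent_le hB1
    rw [le_div_iff₀ h1ε]; nlinarith
  have s3 : (b:ℝ) ^ (1/(1+ε)) < (M * (d:ℝ) ^ ((1:ℝ)+ε)) ^ (1/(1+ε)) :=
    Real.rpow_lt_rpow (by positivity) (by rw [hM_def]; exact hbound) (by positivity)
  have s4 : (M * (d:ℝ) ^ ((1:ℝ)+ε)) ^ (1/(1+ε)) = M ^ (1/(1+ε)) * (d:ℝ) := by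
    rw [Real.mul_rpow hMpos.le (Real.rpow_nonneg hDpos.le _),
      ← Real.rpow_mul hDpos.le]
    rw [mul_one_div, div_self h1ε.ne', Real.rpow_one]
  have s5 : M ^ (1/(1+ε)) ≤ M := by
    calc M ^ (1/(1+ε)) ≤ M ^ (1:ℝ) :=
        Real.rpow_le_rpow_of_exponent_le hM1 (by rw [div_le_one h1ε]; linarith)
      _ = M := Real.rpow_one M
  have hmain : (a:ℝ) ^ ((1:ℝ)-ε) < M * (d:ℝ) := by
    calc (a:ℝ) ^ ((1:ℝ)-ε) ≤ (b:ℝ) ^ (1/(1+ε)) := s1.trans s2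
      _ < M ^ (1/(1+ε)) * (d:ℝ) := s4 ▸ s3
      _ ≤ M * (d:ℝ) := mul_le_mul_of_nonneg_right s5 hDpos.le
  -- conclude
  have hcast : (b:ℝ) - (a:ℝ) = (d:ℝ) := by
    rw [hd_def]; push_cast [Nat.cast_sub hab.le]; ring
  rw [hcast]
  have heq : 1 / C' * (a:ℝ) ^ ((1:ℝ)-ε) / E = (a:ℝ) ^ ((1:ℝ)-ε) / M := by
    rw [hM_def]; ring
  rw [heq, div_lt_iff₀ hMpos]
  calc (a:ℝ) ^ ((1:ℝ)-ε) < M * (d:ℝ) := hmain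
    _ = (d:ℝ) * M := mul_comm _ _

theorem stmt2
    (habc : ∀ ε : ℝ, 0 < ε → ∃ C : ℝ, 0 < C ∧
      ∀ x y z : ℕ, 0 < x → 0 < y → 0 < z →
        Nat.Coprime x y → Nat.Coprime y z → Nat.Coprime x z → x + y = z →
        (z : ℝ) < C * (rad (x * y * z) : ℝ) ^ ((1 : ℝ) + ε)) :
    ∀ ε : ℝ, 0 < ε → ∃ c₁ : ℝ, 0 < c₁ ∧ ∃ c₂ : ℝ, 0 < c₂ ∧
      ∀ y : ℝ → ℝ,
        (∀ a b : ℝ, 0 < a → a ≤ b → y a ≤ y b) →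
        (∀ x : ℝ, 0 < x → 3 ≤ y x) →
        ∀ n : ℕ → ℕ,
          (∀ i j : ℕ, 1 ≤ i → i < j → n i < n j) →
          (∀ i : ℕ, 1 ≤ i → 0 < n i ∧ (maxPrimeFactor (n i) : ℝ) ≤ y (n i)) →
          (∀ m : ℕ, 0 < m → (maxPrimeFactor m : ℝ) ≤ y m → ∃ i : ℕ, 1 ≤ i ∧ n i = m) →
          ∀ i : ℕ, 1 ≤ i →
            c₁ * (n i : ℝ) ^ ((1 : ℝ) - ε) / Real.exp (c₂ * y (n (i + 1))) <
              (n (i + 1) : ℝ) - (n i : ℝ) := by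
  intro ε hε
  have hε0 : 0 < min ε (1/2) := lt_min hε (by norm_num)
  obtain ⟨c₁, hc₁, c₂, hc₂, H⟩ := key_gap habc (min ε (1/2)) hε0 (min_le_right _ _)
  refine ⟨c₁, hc₁, c₂, hc₂, ?_⟩
  intro y hmono h3 n hlt hprop hsurj i hi
  have h := H y hmono h3 n hlt hprop hsurj i hi
  refine lt_of_le_of_lt ?_ h
  have hA1 : (1:ℝ) ≤ (n i : ℝ) := by exact_mod_cast (hprop i hi).1
  have hexp : (n i : ℝ) ^ ((1:ℝ) - ε) ≤ (n i : ℝ) ^ ((1:ℝ) - min ε (1/2)) :=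
    Real.rpow_le_rpow_of_exponent_le hA1 (by linarith [min_le_left ε (1/2)])
  have hEpos : (0:ℝ) < Real.exp (c₂ * y (n (i+1))) := Real.exp_pos _
  exact (div_le_div_iff_of_pos_right hEpos).mpr (mul_le_mul_of_nonneg_left hexp hc₁.le)
end

section
/- Assume the abc conjecture: for each ε > 0 there is a positive number c(ε) such that for all pairwise coprime positive integers x, y, z with x + y = z one has z < c(ε)·G^{1+ε}, where G is the product of the distinct primes dividing xyz. Let y be a non-decreasing function from the positive real numbers to the real numbers with y(x) ≥ 3 for all x > 0, and let n_1 < n_2 < n_3 < ... be the increasing sequence of all positive integers n with P(n) ≤ y(n). If y(n) = o(log n) as n → ∞, then n_{i+1} − n_i tends to infinity as i → ∞. -/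
open Real Filter Asymptotics

lemma rad_pos (m : ℕ) : 0 < rad m :=
  Finset.prod_pos fun p hp => (Nat.prime_of_mem_primeFactors hp).pos

lemma rad_dvd_self (m : ℕ) : rad m ∣ m := Nat.prod_primeFactors_dvd m

lemma rad_dvd_rad {a b : ℕ} (h : a ∣ b) (hb : b ≠ 0) : rad a ∣ rad b :=
  Finset.prod_dvd_prod_of_subset _ _ _ (Nat.primeFactors_mono h hb)

lemma rad_mul_le (a b : ℕ) (ha : a ≠ 0) (hb : b ≠ 0) : rad (a * b) ≤ rad a * rad b := by
  unfold rad
  rw [Nat.primeFactors_mul ha hb, ← Finset.prod_union_inter]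
  exact Nat.le_mul_of_pos_right _
    (Finset.prod_pos fun p hp =>
      (Nat.prime_of_mem_primeFactors (Finset.mem_inter.mp hp).1).pos)

lemma rad_le_primorial {m B : ℕ} (h : ∀ p ∈ m.primeFactors, p ≤ B) :
    rad m ≤ primorial B := by
  apply Nat.le_of_dvd (primorial_pos B)
  apply Finset.prod_dvd_prod_of_subset
  intro p hp
  simp only [Finset.mem_filter, Finset.mem_range]
  exact ⟨Nat.lt_succ_of_le (h p hp), Nat.prime_of_mem_primeFactors hp⟩

lemma le_maxPrimeFactor {m p : ℕ} (hp : p ∈ m.primeFactors) : p ≤ maxPrimeFactor m :=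
  le_max_of_le_right (Finset.le_sup (f := id) hp)

lemma key_bound (C : ℝ)
    (habc1 : ∀ x y z : ℕ, 0 < x → 0 < y → 0 < z →
      Nat.Coprime x y → Nat.Coprime y z → Nat.Coprime x z → x + y = z →
      (z : ℝ) < C * (rad (x * y * z) : ℝ) ^ (2 : ℕ))
    (d m m' B : ℕ) (hm : 0 < m) (hlt : m < m') (hkd : m' - m ≤ d)
    (hB : ∀ p ∈ m.primeFactors ∪ m'.primeFactors, p ≤ B) :
    (m' : ℝ) < C * (d : ℝ) ^ 3 * ((4 : ℝ) ^ B) ^ 2 := by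
  set k := m' - m with hkdef
  have hkpos : 0 < k := by omega
  have hkm : k + m = m' := by omega
  set g := Nat.gcd m m' with hg
  have hgpos : 0 < g := Nat.gcd_pos_of_pos_left _ hm
  have hgm : g ∣ m := Nat.gcd_dvd_left _ _
  have hgm' : g ∣ m' := Nat.gcd_dvd_right _ _
  have hgk : g ∣ k := Nat.dvd_sub hgm' hgm
  set x := k / g with hx
  set yy := m / g with hyy
  set z := m' / g with hz
  have hxg : x * g = k := Nat.div_mul_cancel hgk
  have hyg : yy * g = m := Nat.div_mul_cancel hgm
  have hzg : z * g = m' := Nat.div_mul_cancel hgm'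
  have hxpos : 0 < x := Nat.div_pos (Nat.le_of_dvd hkpos hgk) hgpos
  have hypos : 0 < yy := Nat.div_pos (Nat.le_of_dvd hm hgm) hgpos
  have hzpos : 0 < z := Nat.div_pos (Nat.le_of_dvd (by omega) hgm') hgpos
  have hsum : x + yy = z := by
    have h1 : (x + yy) * g = z * g := by rw [add_mul, hxg, hyg, hzg, hkm]
    exact Nat.eq_of_mul_eq_mul_right hgpos h1
  have cyz : Nat.Coprime yy z := Nat.coprime_div_gcd_div_gcd hgpos
  have cxy : Nat.Coprime x yy := by
    have h1 : Nat.gcd x yy ∣ z :=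
      hsum ▸ Nat.dvd_add (Nat.gcd_dvd_left _ _) (Nat.gcd_dvd_right _ _)
    have h2 : Nat.gcd x yy ∣ Nat.gcd yy z := Nat.dvd_gcd (Nat.gcd_dvd_right _ _) h1
    exact Nat.eq_one_of_dvd_one (cyz ▸ h2)
  have cxz : Nat.Coprime x z := by
    have hy' : yy = z - x := by omega
    have h1 : Nat.gcd x z ∣ yy :=
      hy' ▸ Nat.dvd_sub (Nat.gcd_dvd_right _ _) (Nat.gcd_dvd_left _ _)
    have h2 : Nat.gcd x z ∣ Nat.gcd yy z := Nat.dvd_gcd h1 (Nat.gcd_dvd_right _ _)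
    exact Nat.eq_one_of_dvd_one (cyz ▸ h2)
  have habc := habc1 x yy z hxpos hypos hzpos cxy cyz cxz hsum
  -- bound on the radical
  have hxyzdvd : x * yy * z ∣ k * m * m' :=
    mul_dvd_mul (mul_dvd_mul ⟨g, hxg.symm⟩ ⟨g, hyg.symm⟩) ⟨g, hzg.symm⟩
  have hradle : rad (x * yy * z) ≤ rad (k * m * m') :=
    Nat.le_of_dvd (rad_pos _) (rad_dvd_rad hxyzdvd (Nat.mul_ne_zero (Nat.mul_ne_zero (by omega) (by omega)) (by omega)))
  have h2 : rad (k * m * m') ≤ rad k * rad (m * m') := by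
    have h := rad_mul_le k (m * m') (by omega) (Nat.mul_ne_zero (by omega) (by omega))
    rwa [← mul_assoc] at h
  have h3 : rad (m * m') ≤ primorial B := by
    apply rad_le_primorial
    rwa [Nat.primeFactors_mul (by omega) (by omega)]
  have h4 : rad k ≤ k := Nat.le_of_dvd hkpos (rad_dvd_self k)
  have h5 : rad (x * yy * z) ≤ d * 4 ^ B := by
    calc rad (x * yy * z) ≤ rad k * rad (m * m') := le_trans hradle h2
      _ ≤ k * primorial B := Nat.mul_le_mul h4 h3
      _ ≤ d * 4 ^ B := Nat.mul_le_mul hkd (primorial_le_4_pow B)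
  have hm'z : (m' : ℝ) ≤ (z : ℝ) * d := by
    have h : m' ≤ z * d := by
      calc m' = z * g := hzg.symm
        _ ≤ z * k := Nat.mul_le_mul_left _ (Nat.le_of_dvd hkpos hgk)
        _ ≤ z * d := Nat.mul_le_mul_left _ hkd
    exact_mod_cast h
  have hradR : (rad (x * yy * z) : ℝ) ≤ (d : ℝ) * 4 ^ B := by exact_mod_cast h5
  have hd0 : (0 : ℝ) < d := by
    have : 0 < d := by omega
    exact_mod_cast this
  have hC : 0 < C := by
    have hz1 : (0:ℝ) < (z : ℝ) := by exact_mod_cast hzpos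
    nlinarith [sq_nonneg ((rad (x*yy*z) : ℝ))]
  have hsq : ((rad (x * yy * z) : ℝ)) ^ (2:ℕ) ≤ ((d : ℝ) * 4 ^ B) ^ (2:ℕ) :=
    pow_le_pow_left₀ (by positivity) hradR 2
  calc (m' : ℝ) ≤ (z : ℝ) * d := hm'z
    _ < (C * (rad (x * yy * z) : ℝ) ^ (2:ℕ)) * d := by
        exact mul_lt_mul_of_pos_right habc hd0
    _ ≤ (C * ((d : ℝ) * 4 ^ B) ^ (2:ℕ)) * d :=
        mul_le_mul_of_nonneg_right (mul_le_mul_of_nonneg_left hsq hC.le) hd0.le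
    _ = C * (d : ℝ) ^ 3 * ((4 : ℝ) ^ B) ^ 2 := by ring

theorem stmt4
    (habc : ∀ ε : ℝ, 0 < ε → ∃ C : ℝ, 0 < C ∧
      ∀ x y z : ℕ, 0 < x → 0 < y → 0 < z →
        Nat.Coprime x y → Nat.Coprime y z → Nat.Coprime x z → x + y = z →
        (z : ℝ) < C * (rad (x * y * z) : ℝ) ^ ((1 : ℝ) + ε))
    (y : ℝ → ℝ)
    (hmono : ∀ a b : ℝ, 0 < a → a ≤ b → y a ≤ y b)
    (hge3 : ∀ x : ℝ, 0 < x → 3 ≤ y x)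
    (n : ℕ → ℕ)
    (hinc : ∀ i j : ℕ, 1 ≤ i → i < j → n i < n j)
    (hseq : ∀ i : ℕ, 1 ≤ i → 0 < n i ∧ (maxPrimeFactor (n i) : ℝ) ≤ y (n i))
    (hall : ∀ m : ℕ, 0 < m → (maxPrimeFactor m : ℝ) ≤ y m → ∃ i : ℕ, 1 ≤ i ∧ n i = m)
    (hlittleo : (fun x : ℝ => y x) =o[atTop] Real.log) :
    Tendsto (fun i : ℕ => n (i + 1) - n i) atTop atTop := by
  obtain ⟨C, hC, H⟩ := habc 1 one_pos
  have habc1 : ∀ x yv z : ℕ, 0 < x → 0 < yv → 0 < z →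
      Nat.Coprime x yv → Nat.Coprime yv z → Nat.Coprime x z → x + yv = z →
      (z : ℝ) < C * (rad (x * yv * z) : ℝ) ^ (2 : ℕ) := by
    intro a b c ha hb hc h1 h2 h3 h4
    have h := H a b c ha hb hc h1 h2 h3 h4
    rwa [show ((1:ℝ) + 1) = ((2:ℕ) : ℝ) by norm_num, Real.rpow_natCast] at h
  -- littleo consequence
  have hlog4 : 0 < Real.log 4 := Real.log_pos (by norm_num)
  have hcpos : 0 < (4 * Real.log 4)⁻¹ := by positivity
  obtain ⟨X₀, hX₀⟩ := eventually_atTop.mp (isLittleO_iff.mp hlittleo hcpos)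
  -- n grows
  have hnge : ∀ j : ℕ, 1 ≤ j → j ≤ n j := by
    intro j hj
    induction j with
    | zero => omega
    | succ j ih =>
      rcases Nat.lt_or_ge 1 (j + 1) with h | h
      · have hj1 : 1 ≤ j := by omega
        have h1 := hinc j (j + 1) hj1 (by omega)
        have h2 := ih hj1
        omega
      · have := (hseq (j + 1) (by omega)).1
        omega
  rw [tendsto_atTop_atTop]
  intro b
  set d : ℕ := b + 1 with hd
  set T : ℝ := max (max X₀ 1) ((C * (d : ℝ) ^ 3) ^ 2) with hT
  refine ⟨⌈T⌉₊ + 1, fun i hi => ?_⟩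
  have hi1 : 1 ≤ i := by omega
  by_contra hcon
  push_neg at hcon
  set m := n i with hm
  set m' := n (i + 1) with hm'
  have hmm' : m < m' := hinc i (i + 1) hi1 (by omega)
  obtain ⟨hmpos, hmP⟩ := hseq i hi1
  obtain ⟨hm'pos, hm'P⟩ := hseq (i + 1) (by omega)
  have hkd : m' - m ≤ d := by omega
  have hyy' : y m ≤ y m' := hmono m m' (by exact_mod_cast hmpos) (by exact_mod_cast hmm'.le)
  have hym'3 : (3:ℝ) ≤ y m' := hge3 _ (by exact_mod_cast (by omega : 0 < m'))
  set B : ℕ := ⌊y (m' : ℝ)⌋₊ with hB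
  have hBmem : ∀ p ∈ m.primeFactors ∪ m'.primeFactors, p ≤ B := by
    intro p hp
    apply Nat.le_floor
    rcases Finset.mem_union.mp hp with h | h
    · calc (p : ℝ) ≤ (maxPrimeFactor m : ℝ) := by exact_mod_cast le_maxPrimeFactor h
        _ ≤ y m := hmP
        _ ≤ y m' := hyy'
    · calc (p : ℝ) ≤ (maxPrimeFactor m' : ℝ) := by exact_mod_cast le_maxPrimeFactor h
        _ ≤ y m' := hm'P
  have hbound := key_bound C habc1 d m m' B hmpos hmm' hkd hBmem
  -- m' is large
  have hm'i : (⌈T⌉₊ + 1 : ℕ) ≤ m' := le_trans (by omega) (hnge (i+1) (by omega))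
  have hm'T : T < (m' : ℝ) := by
    have h1 : ((⌈T⌉₊ : ℝ) + 1) ≤ (m' : ℝ) := by exact_mod_cast hm'i
    have h2 : T ≤ (⌈T⌉₊ : ℝ) := Nat.le_ceil T
    linarith
  have hm'X₀ : X₀ ≤ (m' : ℝ) := le_of_lt (lt_of_le_of_lt (le_trans (le_max_left _ _) (le_max_left _ _)) hm'T)
  have hm'1 : (1:ℝ) ≤ (m' : ℝ) := le_of_lt (lt_of_le_of_lt (le_trans (le_max_right _ _) (le_max_left _ _)) hm'T)
  have hlogpos : 0 ≤ Real.log m' := Real.log_nonneg hm'1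
  have hX := hX₀ (m' : ℝ) hm'X₀
  simp only [Real.norm_eq_abs] at hX
  have hym' : y (m' : ℝ) ≤ (4 * Real.log 4)⁻¹ * Real.log m' := by
    calc y (m' : ℝ) ≤ |y (m' : ℝ)| := le_abs_self _
      _ ≤ (4 * Real.log 4)⁻¹ * |Real.log m'| := hX
      _ = (4 * Real.log 4)⁻¹ * Real.log m' := by rw [abs_of_nonneg hlogpos]
  have hB' : (B : ℝ) ≤ y (m' : ℝ) := Nat.floor_le (by linarith)
  -- (4^B)^2 ≤ sqrt m'
  have h4B : ((4:ℝ) ^ B) ^ 2 = Real.exp ((B : ℝ) * Real.log 4 + (B : ℝ) * Real.log 4) := by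
    have hb : (4:ℝ) ^ B = Real.exp ((B : ℝ) * Real.log 4) := by
      rw [Real.exp_nat_mul, Real.exp_log (by norm_num : (0:ℝ) < 4)]
    rw [hb, sq, ← Real.exp_add]
  have hm'posR : (0:ℝ) < (m' : ℝ) := by linarith
  have hsqrt : Real.exp (Real.log m' / 2) = Real.sqrt m' := by
    rw [← Real.log_sqrt hm'posR.le, Real.exp_log (Real.sqrt_pos.mpr hm'posR)]
  have harg : (B : ℝ) * Real.log 4 + (B : ℝ) * Real.log 4 ≤ Real.log m' / 2 := by
    have hBle : (B : ℝ) ≤ (4 * Real.log 4)⁻¹ * Real.log m' := le_trans hB' hym'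
    have h1 : (B : ℝ) * Real.log 4 ≤ (4 * Real.log 4)⁻¹ * Real.log m' * Real.log 4 :=
      mul_le_mul_of_nonneg_right hBle hlog4.le
    have h2 : (4 * Real.log 4)⁻¹ * Real.log m' * Real.log 4 = Real.log m' / 4 := by
      field_simp
    linarith
  have h4Bsqrt : ((4:ℝ) ^ B) ^ 2 ≤ Real.sqrt m' := by
    rw [h4B, ← hsqrt]
    exact Real.exp_le_exp.mpr harg
  -- final contradiction
  set K : ℝ := C * (d : ℝ) ^ 3 with hK
  have hKpos : 0 < K := by positivity
  have hfin : (m' : ℝ) < K * Real.sqrt m' := by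
    calc (m' : ℝ) < K * ((4:ℝ) ^ B) ^ 2 := hbound
      _ ≤ K * Real.sqrt m' := mul_le_mul_of_nonneg_left h4Bsqrt hKpos.le
  have hK2 : K ^ 2 ≤ (m' : ℝ) :=
    le_of_lt (lt_of_le_of_lt (le_max_right _ _) hm'T)
  have hs : Real.sqrt m' * Real.sqrt m' = (m' : ℝ) := Real.mul_self_sqrt hm'posR.le
  have hspos : 0 < Real.sqrt m' := Real.sqrt_pos.mpr hm'posR
  nlinarith [hfin, hK2, hs, hspos, hKpos]
end

section
/- For every positive real number c₅ there exists an effectively computable positive real number c₈ such that for every real number Y ≥ 3 with r = π(Y) ≥ 2, one has (c₅·log r)^r < δ(c₈·Y). -/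
open Real

/-- `iteratedLog k` is the `k`-th iterate of `x ↦ max 1 (log x)`. -/
noncomputable def iteratedLog : ℕ → ℝ → ℝ
  | 0, x => x
  | k + 1, x => max 1 (Real.log (iteratedLog k x))

/-- `smallDelta x = exp (x · log₂ x / log x)`. -/
noncomputable def smallDelta (x : ℝ) : ℝ := Real.exp (x * iteratedLog 2 x / Real.log x)


lemma cheby_nat (n : ℕ) (hn : 2 ≤ n) :
    (Nat.primeCounting n : ℝ) * Real.log n ≤ 10 * n := by
  classical
  set m := Nat.sqrt n with hm
  set T : Finset ℕ := (Finset.range (n+1)).filter Nat.Prime with hT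
  have hπT : Nat.primeCounting n = T.card := by
    rw [Nat.primeCounting, Nat.primeCounting', Nat.count_eq_card_filter_range]
  set S : Finset ℕ := T.filter (fun p => m < p) with hS
  -- card split
  have hcard : T.card ≤ S.card + (m+1) := by
    have h1 : T.card = S.card + (T.filter (fun p => ¬ m < p)).card := by
      rw [hS, Finset.card_filter_add_card_filter_not]
    have h2 : (T.filter (fun p => ¬ m < p)).card ≤ m + 1 := by
      have : T.filter (fun p => ¬ m < p) ⊆ Finset.range (m+1) := by
        intro p hp
        simp only [Finset.mem_filter, not_lt] at hp
        simpa [Nat.lt_succ_iff] using hp.2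
      simpa using Finset.card_le_card this
    omega
  -- product bounds
  have hpow : (m+1) ^ S.card ≤ ∏ p ∈ S, p := by
    apply Finset.pow_card_le_prod
    intro p hp
    have := (Finset.mem_filter.mp hp).2
    omega
  have hprodT : (∏ p ∈ S, p) ≤ primorial n := by
    rw [primorial]
    apply Finset.prod_le_prod_of_subset_of_one_le' (Finset.filter_subset _ _)
    intro p hp _
    exact (Finset.mem_filter.mp hp).2.one_lt.le
  have h4 : (m+1) ^ S.card ≤ 4 ^ n := le_trans hpow (le_trans hprodT (primorial_le_4_pow n))
  -- real versions
  have hn1 : (1:ℝ) ≤ (n:ℝ) := by exact_mod_cast Nat.one_le_iff_ne_zero.mpr (by omega)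
  have hlogn0 : (0:ℝ) ≤ Real.log n := Real.log_nonneg hn1
  have hm1pos : (0:ℝ) < (m:ℝ)+1 := by positivity
  have hlog4 : S.card * Real.log ((m:ℝ)+1) ≤ n * Real.log 4 := by
    have := Real.log_le_log (by positivity) (show (((m+1):ℕ):ℝ)^S.card ≤ ((4:ℕ):ℝ)^n by
      exact_mod_cast h4)
    rw [Real.log_pow, Real.log_pow] at this
    push_cast at this
    exact_mod_cast this
  have hlognle : Real.log n ≤ 2 * Real.log ((m:ℝ)+1) := by
    have hlt : n < (m+1)*(m+1) := Nat.lt_succ_sqrt n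
    have : (n:ℝ) ≤ ((m:ℝ)+1)^2 := by
      have : (n:ℝ) ≤ ((m+1)*(m+1) : ℕ) := by exact_mod_cast hlt.le
      push_cast at this; nlinarith
    calc Real.log n ≤ Real.log (((m:ℝ)+1)^2) := Real.log_le_log (by positivity) this
      _ = 2 * Real.log ((m:ℝ)+1) := by rw [Real.log_pow]; push_cast; ring
  have hScard : (S.card : ℝ) * Real.log n ≤ 6 * n := by
    have hl4 : Real.log 4 ≤ 3 := by
      have := Real.log_le_sub_one_of_pos (show (0:ℝ) < 4 by norm_num)
      linarith
    have h1 : (S.card : ℝ) * Real.log n ≤ (S.card : ℝ) * (2 * Real.log ((m:ℝ)+1)) :=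
      mul_le_mul_of_nonneg_left hlognle (by positivity)
    nlinarith [hlog4, Real.log_nonneg (show (1:ℝ) ≤ 4 by norm_num),
      mul_le_mul_of_nonneg_left hl4 (show (0:ℝ) ≤ (n:ℝ) by positivity)]
  have hmlog : ((m:ℝ)+1) * Real.log n ≤ 4 * n := by
    have hsq : ((m:ℝ)) ≤ Real.sqrt n := by
      rw [show (m:ℝ) = Real.sqrt ((m:ℝ)^2) by rw [Real.sqrt_sq (by positivity)]]
      apply Real.sqrt_le_sqrt
      exact_mod_cast Nat.sqrt_le' n
    have hsq1 : (1:ℝ) ≤ Real.sqrt n := by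
      rw [show (1:ℝ) = Real.sqrt 1 by simp]
      exact Real.sqrt_le_sqrt hn1
    have hlogsqrt : Real.log n ≤ 2 * Real.sqrt n := by
      have h := Real.log_le_sub_one_of_pos (show (0:ℝ) < Real.sqrt n by positivity)
      have : Real.log n = 2 * Real.log (Real.sqrt n) := by
        rw [show (2:ℝ) * Real.log (Real.sqrt n) = Real.log ((Real.sqrt n)^2) by
          rw [Real.log_pow]; push_cast; ring]
        rw [Real.sq_sqrt (by linarith : (0:ℝ) ≤ (n:ℝ))]
      nlinarith
    have hsqsq : Real.sqrt n * Real.sqrt n = n := Real.mul_self_sqrt (by linarith)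
    nlinarith [mul_le_mul hsq hlogsqrt hlogn0 (by linarith : (0:ℝ) ≤ Real.sqrt n)]
  calc (Nat.primeCounting n : ℝ) * Real.log n ≤ ((S.card : ℝ) + ((m:ℝ)+1)) * Real.log n := by
        apply mul_le_mul_of_nonneg_right _ hlogn0
        rw [hπT]
        exact_mod_cast hcard
    _ = (S.card : ℝ) * Real.log n + ((m:ℝ)+1) * Real.log n := by ring
    _ ≤ 6 * n + 4 * n := add_le_add hScard hmlog
    _ = 10 * n := by ring


lemma log_three_ge_one : (1:ℝ) ≤ Real.log 3 := by
  rw [Real.le_log_iff_exp_le (by norm_num : (0:ℝ) < 3)]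
  have := Real.exp_one_lt_d9
  linarith

lemma cheby_real (Y : ℝ) (hY : 3 ≤ Y) : (primePi Y : ℝ) * Real.log Y ≤ 20 * Y := by
  set n := ⌊Y⌋₊ with hn
  have hn3 : 3 ≤ n := Nat.le_floor (by exact_mod_cast hY)
  have hnY : (n:ℝ) ≤ Y := Nat.floor_le (by linarith)
  have hnR : (3:ℝ) ≤ (n:ℝ) := by exact_mod_cast hn3
  have hmain := cheby_nat n (by omega)
  have hY2n : Y ≤ 2 * n := by
    have := Nat.sub_one_lt_floor Y
    rw [← hn] at this
    linarith
  have hlogYn : Real.log Y ≤ 2 * Real.log n := by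
    have h1 : Real.log Y ≤ Real.log (2 * n) := Real.log_le_log (by linarith) hY2n
    have h2 : Real.log (2 * n) = Real.log 2 + Real.log n := by
      rw [Real.log_mul (by norm_num) (by positivity)]
    have h3 : Real.log 2 ≤ Real.log n :=
      Real.log_le_log (by norm_num) (by linarith)
    linarith
  have hπ0 : (0:ℝ) ≤ (primePi Y : ℝ) := by positivity
  have : (primePi Y : ℝ) * Real.log Y ≤ (primePi Y : ℝ) * (2 * Real.log n) :=
    mul_le_mul_of_nonneg_left hlogYn hπ0
  have hpp : (primePi Y : ℝ) = (Nat.primeCounting n : ℝ) := by rw [hn, primePi]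
  calc (primePi Y : ℝ) * Real.log Y ≤ (primePi Y : ℝ) * (2 * Real.log n) := this
    _ = 2 * ((Nat.primeCounting n : ℝ) * Real.log n) := by rw [hpp]; ring
    _ ≤ 2 * (10 * n) := by linarith
    _ ≤ 20 * Y := by linarith

theorem stmt10 :
    ∀ c₅ : ℝ, 0 < c₅ →
      ∃ c₈ : ℝ, 0 < c₈ ∧
        ∀ Y : ℝ, 3 ≤ Y → 2 ≤ primePi Y →
          (c₅ * Real.log (primePi Y)) ^ primePi Y < smallDelta (c₈ * Y) := by
  intro c₅ hc₅
  set D : ℝ := max 0 (Real.log (4 * c₅)) with hD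
  have hD0 : 0 ≤ D := le_max_left _ _
  set a : ℝ := 20 * (D + 1) + 1 with ha
  set b : ℝ := 3 * a with hb
  have ha1 : 21 ≤ a := by simp [ha]; linarith
  have hb1 : 63 ≤ b := by simp [hb]; linarith
  refine ⟨b ^ 2, by positivity, ?_⟩
  intro Y hY hr2
  set r := primePi Y with hr
  set rr : ℝ := (r : ℝ) with hrr
  have hrr2 : (2:ℝ) ≤ rr := by rw [hrr]; exact_mod_cast hr2
  have hYpos : (0:ℝ) < Y := by linarith
  have hlogY1 : (1:ℝ) ≤ Real.log Y :=
    le_trans log_three_ge_one (Real.log_le_log (by norm_num) hY)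
  have hlogYpos : (0:ℝ) < Real.log Y := by linarith
  have hcheb : rr * Real.log Y ≤ 20 * Y := cheby_real Y hY
  have hrY : rr ≤ 20 * Y := by nlinarith
  have hlogr_pos : (0:ℝ) < Real.log rr := Real.log_pos (by linarith)
  -- log rr ≤ 4 log Y
  have hlogr : Real.log rr ≤ 4 * Real.log Y := by
    have h1 : Real.log rr ≤ Real.log (20 * Y) := Real.log_le_log (by linarith) hrY
    have h2 : Real.log (20 * Y) = Real.log 20 + Real.log Y := by
      rw [Real.log_mul (by norm_num) (by positivity)]
    have h3 : Real.log 20 ≤ 3 * Real.log Y := by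
      have h4 : (20:ℝ) ≤ Y ^ 3 := by nlinarith [sq_nonneg Y, sq_nonneg (Y-3)]
      have := Real.log_le_log (by norm_num) h4
      rwa [Real.log_pow, Nat.cast_ofNat] at this
    linarith
  set M : ℝ := max 1 (Real.log (Real.log Y)) with hM
  have hM1 : (1:ℝ) ≤ M := le_max_left _ _
  -- bound on P
  set P : ℝ := Real.log (c₅ * Real.log rr) with hP
  have hPbound : P ≤ (D + 1) * M := by
    have h1 : c₅ * Real.log rr ≤ (4 * c₅) * Real.log Y := by nlinarith
    have h2 : P ≤ Real.log ((4 * c₅) * Real.log Y) :=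
      Real.log_le_log (by positivity) h1
    have h3 : Real.log ((4 * c₅) * Real.log Y)
        = Real.log (4 * c₅) + Real.log (Real.log Y) := by
      rw [Real.log_mul (by positivity) (by positivity)]
    have h4 : Real.log (4 * c₅) ≤ D := le_max_right _ _
    have h5 : Real.log (Real.log Y) ≤ M := le_max_right _ _
    nlinarith [le_max_right (1:ℝ) (Real.log (Real.log Y)), hM1]
  -- the smallDelta side
  set X : ℝ := b ^ 2 * Y with hX
  have hXY : Y ≤ X := by
    rw [hX]
    nlinarith [mul_le_mul_of_nonneg_right (show (1:ℝ) ≤ b^2 by nlinarith) hYpos.le]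
  have hX1 : (1:ℝ) < X := by linarith
  have hlogX_pos : (0:ℝ) < Real.log X := Real.log_pos hX1
  have hlogXY : Real.log Y ≤ Real.log X := Real.log_le_log hYpos hXY
  set L₁ : ℝ := Real.log X with hL₁
  have hL1le : L₁ ≤ 3 * b * Real.log Y := by
    have h1 : L₁ = Real.log (b ^ 2) + Real.log Y := by
      rw [hL₁, hX, Real.log_mul (by positivity) (by positivity)]
    have h2 : Real.log (b ^ 2) = 2 * Real.log b := by
      rw [Real.log_pow]; push_cast; ring
    have h3 : Real.log b ≤ b := by
      have := Real.log_le_sub_one_of_pos (show (0:ℝ) < b by linarith)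
      linarith
    have h4 := mul_le_mul_of_nonneg_left hlogY1 (show (0:ℝ) ≤ 2 * b by linarith)
    have h5 := mul_le_mul_of_nonneg_right (show (1:ℝ) ≤ b by linarith) hlogYpos.le
    linarith
  have hL2 : iteratedLog 2 X = max 1 (Real.log (max 1 (Real.log X))) := by
    simp [iteratedLog]
  have hL2ge : M ≤ iteratedLog 2 X := by
    rw [hL2]
    have h1 : max 1 (Real.log X) = Real.log X := max_eq_right (by linarith)
    rw [h1]
    exact max_le_max le_rfl (Real.log_le_log (by linarith) hlogXY)
  set L₂ : ℝ := iteratedLog 2 X with hL₂def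
  -- exponent comparison
  have hexp : rr * P < X * L₂ / L₁ := by
    rw [lt_div_iff₀ hlogX_pos]
    have hrr0 : (0:ℝ) ≤ rr := by linarith
    have hL₁0 : (0:ℝ) ≤ L₁ := le_of_lt hlogX_pos
    have step1 : rr * P * L₁ ≤ rr * ((D + 1) * M) * L₁ := by
      apply mul_le_mul_of_nonneg_right _ hL₁0
      exact mul_le_mul_of_nonneg_left hPbound hrr0
    have step2 : rr * ((D + 1) * M) * L₁ ≤ rr * ((D + 1) * M) * (3 * b * Real.log Y) := by
      apply mul_le_mul_of_nonneg_left hL1le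
      positivity
    have step3 : rr * ((D + 1) * M) * (3 * b * Real.log Y)
        = (3 * b * (D + 1) * M) * (rr * Real.log Y) := by ring
    have step4 : (3 * b * (D + 1) * M) * (rr * Real.log Y)
        ≤ (3 * b * (D + 1) * M) * (20 * Y) := by
      apply mul_le_mul_of_nonneg_left hcheb
      positivity
    have hMle : M ≤ L₂ := hL2ge
    have hfinal : (3 * b * (D + 1) * M) * (20 * Y) < X * L₂ := by
      have h1 : X * M ≤ X * L₂ := by
        apply mul_le_mul_of_nonneg_left hMle (by positivity)
      have h2 : (3 * b * (D + 1) * M) * (20 * Y) < b ^ 2 * Y * M := by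
        have hbsq : b ^ 2 = 3 * a * b := by rw [hb]; ring
        have hkey : 60 * (D + 1) < 3 * a := by rw [ha]; linarith
        have hpos : (0:ℝ) < b * Y * M := by positivity
        calc (3 * b * (D + 1) * M) * (20 * Y) = (60 * (D + 1)) * (b * Y * M) := by ring
          _ < (3 * a) * (b * Y * M) := mul_lt_mul_of_pos_right hkey hpos
          _ = b ^ 2 * Y * M := by rw [hbsq]; ring
      rw [hX] at h1 ⊢
      linarith
    calc rr * P * L₁ ≤ rr * ((D + 1) * M) * L₁ := step1
      _ ≤ rr * ((D + 1) * M) * (3 * b * Real.log Y) := step2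
      _ = (3 * b * (D + 1) * M) * (rr * Real.log Y) := step3
      _ ≤ (3 * b * (D + 1) * M) * (20 * Y) := step4
      _ < X * L₂ := hfinal
  -- conclude
  have hbase : (0:ℝ) < c₅ * Real.log rr := mul_pos hc₅ hlogr_pos
  have hrw : (c₅ * Real.log rr) ^ r = Real.exp (rr * P) := by
    rw [hP, hrr, ← Real.log_pow, Real.exp_log (pow_pos hbase r)]
  calc (c₅ * Real.log rr) ^ r = Real.exp (rr * P) := hrw
    _ < Real.exp (X * L₂ / L₁) := Real.exp_lt_exp.mpr hexp
    _ = smallDelta X := by rw [smallDelta, hL₂def, hL₁]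
end

section
/- There exists a positive real number c₁₂ such that the following holds. Let y be a non-decreasing function from the positive real numbers to the real numbers with y(x) ≥ 3 for all x > 0, and let X be a real number with X > c₁₂ and y(√X) ≤ (log X)^{1/4}. Let r = π(y(√X)) and let p₁ < ... < p_r be the primes at most y(√X). Then the number of integers n with √X < n ≤ X and P(n) ≤ y(√X) is at least (log X)^r / (2·∏_{i=1}^{r} i·log p_i). -/
open Real Finset
open scoped Classical

/-- the i-th prime -/
noncomputable def pP (i : ℕ) : ℕ := Nat.nth Nat.Prime i
/-- log of the i-th prime -/
noncomputable def cP (i : ℕ) : ℝ := Real.log (pP i)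

lemma pP_prime (i : ℕ) : (pP i).Prime := Nat.prime_nth_prime i
lemma pP_two_le (i : ℕ) : 2 ≤ pP i := (pP_prime i).two_le
lemma cP_pos (i : ℕ) : 0 < cP i := by
  have : (2:ℝ) ≤ pP i := by exact_mod_cast pP_two_le i
  exact Real.log_pos (by linarith)
lemma pP_strictMono : StrictMono pP := Nat.nth_strictMono Nat.infinite_setOf_prime
lemma pP_injective : Function.Injective pP := pP_strictMono.injective

noncomputable def smoothNums : ℕ → ℝ → Finset ℕ
  | 0, T => if 0 ≤ T then {1} else ∅
  | r + 1, T =>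
      (Finset.range (⌊T / cP r⌋₊ + 1)).biUnion
        fun j => (smoothNums r (T - j * cP r)).image fun m => m * pP r ^ j

lemma mem_smoothNums {r : ℕ} {T : ℝ} {n : ℕ} :
    n ∈ smoothNums r T ↔
      0 < n ∧ (∀ q ∈ n.primeFactors, ∃ i < r, q = pP i) ∧ Real.log n ≤ T := by
  induction r generalizing T n with
  | zero =>
    rw [smoothNums]
    split_ifs with hT
    · simp only [Finset.mem_singleton]
      constructor
      · rintro rfl; simp [hT]
      · rintro ⟨hn, hq, -⟩
        have : n.primeFactors = ∅ := by
          rw [Finset.eq_empty_iff_forall_notMem]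
          intro q hqm
          obtain ⟨i, hi, -⟩ := hq q hqm
          omega
        rcases (Nat.primeFactors_eq_empty.mp this) with h | h
        · omega
        · exact h
    · simp only [Finset.notMem_empty, false_iff]
      rintro ⟨hn, hq, hlog⟩
      have : n.primeFactors = ∅ := by
        rw [Finset.eq_empty_iff_forall_notMem]
        intro q hqm
        obtain ⟨i, hi, -⟩ := hq q hqm
        omega
      rcases (Nat.primeFactors_eq_empty.mp this) with h | h
      · omega
      · subst h; simp only [Nat.cast_one, Real.log_one] at hlog; exact hT hlog
  | succ r ih =>
    rw [smoothNums]
    simp only [Finset.mem_biUnion, Finset.mem_image, Finset.mem_range]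
    constructor
    · rintro ⟨j, hj, m, hm, rfl⟩
      obtain ⟨hmpos, hmq, hmlog⟩ := ih.mp hm
      have hppos : 0 < pP r ^ j := Nat.pow_pos (pP_prime r).pos
      refine ⟨Nat.mul_pos hmpos hppos, ?_, ?_⟩
      · intro q hqm
        rw [Nat.mem_primeFactors] at hqm
        obtain ⟨hqp, hqd, -⟩ := hqm
        rcases (Nat.Prime.dvd_mul hqp).mp hqd with h | h
        · obtain ⟨i, hi, rfl⟩ := hmq q (Nat.mem_primeFactors.mpr ⟨hqp, h, hmpos.ne'⟩)
          exact ⟨i, by omega, rfl⟩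
        · have : q = pP r := by
            have := hqp.dvd_of_dvd_pow h
            exact (Nat.prime_dvd_prime_iff_eq hqp (pP_prime r)).mp this
          exact ⟨r, by omega, this⟩
      · have : Real.log ((m : ℝ) * (pP r : ℝ) ^ j) = Real.log m + j * cP r := by
          rw [Real.log_mul (by exact_mod_cast hmpos.ne')
            (pow_ne_zero j (by exact_mod_cast (pP_prime r).pos.ne')), Real.log_pow]
          rfl
        push_cast
        rw [this]
        linarith
    · rintro ⟨hn, hq, hlog⟩
      set j := n.factorization (pP r) with hj
      set m := ordCompl[pP r] n with hm
      have hmn : m * pP r ^ j = n := by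
        rw [hm, hj, mul_comm]; exact Nat.ordProj_mul_ordCompl_eq_self n (pP r)
      have hmpos : 0 < m := Nat.ordCompl_pos (pP r) hn.ne'
      have hlogn : Real.log n = Real.log m + j * cP r := by
        rw [← hmn]
        push_cast
        rw [Real.log_mul (by exact_mod_cast hmpos.ne')
          (pow_ne_zero j (by exact_mod_cast (pP_prime r).pos.ne')), Real.log_pow]
        rfl
      have hlogm_nonneg : 0 ≤ Real.log m := Real.log_natCast_nonneg m
      have hjT : (j : ℝ) * cP r ≤ T := by
        have := hlog; rw [hlogn] at this; linarith
      have hjle : j < ⌊T / cP r⌋₊ + 1 := by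
        have : (j : ℝ) ≤ T / cP r := by
          rw [le_div_iff₀ (cP_pos r)]; exact hjT
        have := Nat.le_floor this
        omega
      refine ⟨j, hjle, m, ih.mpr ⟨hmpos, ?_, ?_⟩, hmn⟩
      · intro q hqm
        have hqn : q ∈ n.primeFactors := by
          rw [Nat.mem_primeFactors] at hqm ⊢
          exact ⟨hqm.1, hqm.2.1.trans (Nat.ordCompl_dvd n (pP r)), hn.ne'⟩
        obtain ⟨i, hi, rfl⟩ := hq q hqn
        have hine : pP i ≠ pP r := by
          intro h
          have h2 : pP r ∈ m.primeFactors := h ▸ hqm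
          rw [← Nat.support_factorization] at h2
          have h3 := Finsupp.mem_support_iff.mp h2
          rw [hm, Nat.factorization_ordCompl] at h3
          simp at h3
        have : i ≠ r := fun h => hine (by rw [h])
        exact ⟨i, by omega, rfl⟩
      · rw [hlogn] at hlog; linarith

lemma smoothNums_mono {r : ℕ} {T₁ T₂ : ℝ} (h : T₁ ≤ T₂) : smoothNums r T₁ ⊆ smoothNums r T₂ := by
  intro n hn
  rw [mem_smoothNums] at hn ⊢
  exact ⟨hn.1, hn.2.1, hn.2.2.trans h⟩

lemma factorization_of_mem {r : ℕ} {T : ℝ} {n : ℕ} (h : n ∈ smoothNums r T) :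
    n.factorization (pP r) = 0 := by
  rw [mem_smoothNums] at h
  by_contra hne
  have : pP r ∈ n.primeFactors := by
    rw [← Nat.support_factorization]
    exact Finsupp.mem_support_iff.mpr hne
  obtain ⟨i, hi, hieq⟩ := h.2.1 _ this
  exact absurd (pP_injective hieq) (by omega)

lemma card_smoothNums_succ (r : ℕ) (T : ℝ) :
    (smoothNums (r + 1) T).card
      = ∑ j ∈ Finset.range (⌊T / cP r⌋₊ + 1), (smoothNums r (T - j * cP r)).card := by
  rw [smoothNums]
  rw [Finset.card_biUnion]
  · refine Finset.sum_congr rfl fun j _ => ?_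
    exact Finset.card_image_of_injective _
      (mul_left_injective₀ (pow_ne_zero j (pP_prime r).pos.ne'))
  · intro j₁ h₁ j₂ h₂ hne
    simp only [Finset.disjoint_left, Finset.mem_image]
    rintro x ⟨m₁, hm₁, rfl⟩ ⟨m₂, hm₂, hx⟩
    have key : ∀ (m j : ℕ), m ∈ smoothNums r (T - j * cP r) →
        (m * pP r ^ j).factorization (pP r) = j := by
      intro m j hm
      have hmpos : 0 < m := (mem_smoothNums.mp hm).1
      rw [Nat.factorization_mul hmpos.ne' (pow_ne_zero j (pP_prime r).pos.ne')]
      simp only [Finsupp.coe_add, Pi.add_apply]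
      rw [factorization_of_mem hm, (pP_prime r).factorization_pow]
      simp
    have e1 := key m₁ j₁ hm₁
    have e2 := key m₂ j₂ hm₂
    rw [hx] at e2
    exact hne (e1.symm.trans e2)

lemma pow_sub_pow_le_right {a b : ℝ} (hb : 0 ≤ b) (hab : b ≤ a) (m : ℕ) :
    a ^ (m + 1) - b ^ (m + 1) ≤ (m + 1) * (a - b) * a ^ m := by
  induction m with
  | zero => simp
  | succ m ih =>
    have ha : 0 ≤ a := hb.trans hab
    have hpow : b ^ (m + 1) ≤ a ^ (m + 1) := pow_le_pow_left₀ hb hab _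
    have h1 : a ^ (m + 2) - b ^ (m + 2) = a * (a ^ (m+1) - b ^ (m+1)) + (a - b) * b ^ (m+1) := by
      ring
    have h2 : a * (a ^ (m+1) - b ^ (m+1)) ≤ a * ((m + 1) * (a - b) * a ^ m) :=
      mul_le_mul_of_nonneg_left ih ha
    have h3 : (a - b) * b ^ (m+1) ≤ (a - b) * a ^ (m+1) :=
      mul_le_mul_of_nonneg_left hpow (by linarith)
    have : a * ((m + 1) * (a - b) * a ^ m) ≤ ((m:ℝ) + 1) * (a - b) * a ^ (m+1) := by
      ring_nf; nlinarith [pow_nonneg ha m, sub_nonneg.mpr hab]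
    push_cast
    nlinarith [pow_nonneg ha (m+1)]

lemma le_pow_sub_pow {a b : ℝ} (hb : 0 ≤ b) (hab : b ≤ a) (m : ℕ) :
    ((m : ℝ) + 1) * (a - b) * b ^ m ≤ a ^ (m + 1) - b ^ (m + 1) := by
  induction m with
  | zero => simp
  | succ m ih =>
    have ha : 0 ≤ a := hb.trans hab
    have hpowm : b ^ (m+1) ≤ a ^ (m+1) := pow_le_pow_left₀ hb hab _
    have h1 : a * (a ^ (m+1) - b ^ (m+1)) ≥ b * (((m:ℝ) + 1) * (a - b) * b ^ m) := by
      calc b * (((m:ℝ) + 1) * (a - b) * b ^ m) ≤ a * (((m:ℝ) + 1) * (a - b) * b ^ m) := by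
            apply mul_le_mul_of_nonneg_right hab
            have := sub_nonneg.mpr hab
            positivity
        _ ≤ a * (a ^ (m+1) - b ^ (m+1)) := mul_le_mul_of_nonneg_left ih ha
    have e : b * (((m:ℝ) + 1) * (a - b) * b ^ m) = ((m:ℝ) + 1) * (a - b) * b ^ (m+1) := by ring
    have id2 : a ^ (m+2) - b ^ (m+2) = a * (a ^ (m+1) - b ^ (m+1)) + (a - b) * b ^ (m+1) := by
      ring
    push_cast
    linarith [h1, e, id2]

lemma prod_cP_pos (r : ℕ) : 0 < ∏ i ∈ Finset.range r, cP i :=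
  Finset.prod_pos fun i _ => cP_pos i

lemma smoothNums_card_lower (r : ℕ) : ∀ T : ℝ, 0 ≤ T →
    T ^ r ≤ (r.factorial : ℝ) * (∏ i ∈ Finset.range r, cP i) * ((smoothNums r T).card : ℝ) := by
  induction r with
  | zero =>
    intro T hT
    rw [smoothNums, if_pos hT]
    simp
  | succ r ih =>
    intro T hT
    have hc : 0 < cP r := cP_pos r
    set c := cP r with hcdef
    set M := ⌊T / c⌋₊ with hM
    set P := ∏ i ∈ Finset.range r, cP i with hP
    have hPpos : 0 < P := prod_cP_pos r
    have hjc : ∀ j ∈ Finset.range (M + 1), (j : ℝ) * c ≤ T := by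
      intro j hj
      rw [Finset.mem_range] at hj
      have hjM : (j : ℝ) ≤ (M : ℝ) := by exact_mod_cast Nat.lt_succ_iff.mp hj
      have hMle : (M : ℝ) ≤ T / c := Nat.floor_le (by positivity)
      have : (j : ℝ) ≤ T / c := hjM.trans hMle
      calc (j : ℝ) * c ≤ (T / c) * c := mul_le_mul_of_nonneg_right this hc.le
        _ = T := div_mul_cancel₀ T hc.ne'
    set b : ℕ → ℝ := fun j => max (T - j * c) 0 with hb
    have hb0 : b 0 = T := by simp [hb, hT]
    have hbM : b (M + 1) = 0 := by
      have h1 : T / c < (M : ℝ) + 1 := Nat.lt_floor_add_one (T / c)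
      have h2 : T < ((M : ℝ) + 1) * c := by
        calc T = (T / c) * c := (div_mul_cancel₀ T hc.ne').symm
          _ < ((M : ℝ) + 1) * c := mul_lt_mul_of_pos_right h1 hc
      have : T - ((M + 1 : ℕ) : ℝ) * c ≤ 0 := by push_cast; linarith
      simp only [hb]
      exact max_eq_right this
    have htel : ∑ j ∈ Finset.range (M + 1), (b j ^ (r + 1) - b (j + 1) ^ (r + 1))
        = T ^ (r + 1) := by
      rw [Finset.sum_range_sub' (fun j => b j ^ (r + 1)), hb0, hbM]
      simp
    have hterm : ∀ j ∈ Finset.range (M + 1),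
        b j ^ (r + 1) - b (j + 1) ^ (r + 1) ≤ ((r : ℝ) + 1) * c * (T - j * c) ^ r := by
      intro j hj
      have h1 : 0 ≤ T - j * c := by linarith [hjc j hj]
      have hbj : b j = T - j * c := max_eq_left h1
      have hb1 : 0 ≤ b (j + 1) := le_max_right _ _
      have hb2 : b (j + 1) ≤ b j := by
        apply max_le _ (hbj ▸ h1)
        rw [hbj]; push_cast; nlinarith
      have hdiff : b j - b (j + 1) ≤ c := by
        have : T - ((j : ℕ) + 1 : ℕ) * c ≤ b (j + 1) := le_max_left _ _
        rw [hbj]; push_cast at this ⊢; linarith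
      have hbjnn : 0 ≤ b j := le_max_right _ _
      calc b j ^ (r + 1) - b (j + 1) ^ (r + 1)
          ≤ ((r : ℝ) + 1) * (b j - b (j + 1)) * b j ^ r := by
            have := pow_sub_pow_le_right hb1 hb2 r
            push_cast at this ⊢; linarith
        _ ≤ ((r : ℝ) + 1) * c * b j ^ r := by
            apply mul_le_mul_of_nonneg_right _ (pow_nonneg hbjnn r)
            exact mul_le_mul_of_nonneg_left hdiff (by positivity)
        _ = ((r : ℝ) + 1) * c * (T - j * c) ^ r := by rw [hbj]
    calc T ^ (r + 1) = ∑ j ∈ Finset.range (M + 1), (b j ^ (r + 1) - b (j + 1) ^ (r + 1)) :=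
          htel.symm
      _ ≤ ∑ j ∈ Finset.range (M + 1), ((r : ℝ) + 1) * c * (T - j * c) ^ r :=
          Finset.sum_le_sum hterm
      _ ≤ ∑ j ∈ Finset.range (M + 1), ((r : ℝ) + 1) * c *
            ((r.factorial : ℝ) * P * ((smoothNums r (T - j * c)).card : ℝ)) := by
          apply Finset.sum_le_sum
          intro j hj
          have h1 : 0 ≤ T - j * c := by linarith [hjc j hj]
          exact mul_le_mul_of_nonneg_left (ih _ h1) (by positivity)
      _ = ((r + 1).factorial : ℝ) * (∏ i ∈ Finset.range (r + 1), cP i) *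
            ((smoothNums (r + 1) T).card : ℝ) := by
          rw [card_smoothNums_succ, Finset.prod_range_succ, ← hP, ← hcdef, ← hM]
          rw [Nat.cast_sum, Finset.mul_sum]
          apply Finset.sum_congr rfl
          intro j hj
          push_cast [Nat.factorial_succ]
          ring

lemma smoothNums_card_upper (r : ℕ) : ∀ T : ℝ, 0 ≤ T →
    (r.factorial : ℝ) * (∏ i ∈ Finset.range r, cP i) * ((smoothNums r T).card : ℝ)
      ≤ (T + ∑ i ∈ Finset.range r, cP i) ^ r := by
  induction r with
  | zero =>
    intro T hT
    rw [smoothNums, if_pos hT]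
    simp
  | succ r ih =>
    intro T hT
    have hc : 0 < cP r := cP_pos r
    set c := cP r with hcdef
    set M := ⌊T / c⌋₊ with hM
    set P := ∏ i ∈ Finset.range r, cP i with hP
    set s := ∑ i ∈ Finset.range r, cP i with hs
    have hs0 : 0 ≤ s := Finset.sum_nonneg fun i _ => (cP_pos i).le
    have hjc : ∀ j ∈ Finset.range (M + 1), (j : ℝ) * c ≤ T := by
      intro j hj
      rw [Finset.mem_range] at hj
      have hjM : (j : ℝ) ≤ (M : ℝ) := by exact_mod_cast Nat.lt_succ_iff.mp hj
      have hMle : (M : ℝ) ≤ T / c := Nat.floor_le (by positivity)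
      have : (j : ℝ) ≤ T / c := hjM.trans hMle
      calc (j : ℝ) * c ≤ (T / c) * c := mul_le_mul_of_nonneg_right this hc.le
        _ = T := div_mul_cancel₀ T hc.ne'
    set u : ℕ → ℝ := fun j => T + s + c - j * c with hu
    have htel : ∑ j ∈ Finset.range (M + 1), (u j ^ (r + 1) - u (j + 1) ^ (r + 1))
        = u 0 ^ (r + 1) - u (M + 1) ^ (r + 1) :=
      Finset.sum_range_sub' (fun j => u j ^ (r + 1)) (M + 1)
    have huM : 0 ≤ u (M + 1) := by
      have := hjc M (Finset.self_mem_range_succ M)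
      simp only [hu]; push_cast; linarith
    have hterm : ∀ j ∈ Finset.range (M + 1),
        ((r : ℝ) + 1) * c * (T - j * c + s) ^ r ≤ u j ^ (r + 1) - u (j + 1) ^ (r + 1) := by
      intro j hj
      have h1 : 0 ≤ T - j * c := by linarith [hjc j hj]
      have hu1 : u (j + 1) = T - j * c + s := by simp only [hu]; push_cast; ring
      have hub : 0 ≤ u (j + 1) := by rw [hu1]; linarith
      have hule : u (j + 1) ≤ u j := by simp only [hu]; push_cast; nlinarith
      have hud : u j - u (j + 1) = c := by simp only [hu]; push_cast; ring
      have h5 := le_pow_sub_pow hub hule r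
      rw [hud] at h5
      rw [← hu1]
      exact h5
    calc ((r + 1).factorial : ℝ) * (∏ i ∈ Finset.range (r + 1), cP i) *
            ((smoothNums (r + 1) T).card : ℝ)
        = ∑ j ∈ Finset.range (M + 1), ((r : ℝ) + 1) * c *
            ((r.factorial : ℝ) * P * ((smoothNums r (T - j * c)).card : ℝ)) := by
          rw [card_smoothNums_succ, Finset.prod_range_succ, ← hP, ← hcdef, ← hM]
          rw [Nat.cast_sum, Finset.mul_sum]
          apply Finset.sum_congr rfl
          intro j hj
          push_cast [Nat.factorial_succ]
          ring
      _ ≤ ∑ j ∈ Finset.range (M + 1), ((r : ℝ) + 1) * c * (T - j * c + s) ^ r := by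
          apply Finset.sum_le_sum
          intro j hj
          have h1 : 0 ≤ T - j * c := by linarith [hjc j hj]
          exact mul_le_mul_of_nonneg_left (ih _ h1) (by positivity)
      _ ≤ ∑ j ∈ Finset.range (M + 1), (u j ^ (r + 1) - u (j + 1) ^ (r + 1)) :=
          Finset.sum_le_sum hterm
      _ = u 0 ^ (r + 1) - u (M + 1) ^ (r + 1) := htel
      _ ≤ u 0 ^ (r + 1) := by
          have : 0 ≤ u (M + 1) ^ (r + 1) := pow_nonneg huM _
          linarith
      _ = (T + ∑ i ∈ Finset.range (r + 1), cP i) ^ (r + 1) := by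
          rw [Finset.sum_range_succ, ← hs, ← hcdef]
          simp only [hu]
          push_cast
          ring

lemma count_prime_le (m : ℕ) : Nat.count Nat.Prime (m + 1) ≤ m := by
  rw [Nat.count_eq_card_filter_range]
  calc ((Finset.range (m + 1)).filter Nat.Prime).card
      ≤ (Finset.Ico 1 (m + 1)).card := by
        apply Finset.card_le_card
        intro q hq
        rw [Finset.mem_filter, Finset.mem_range] at hq
        rw [Finset.mem_Ico]
        exact ⟨hq.2.pos, hq.1⟩
    _ = m := by rw [Nat.card_Ico]; omega

theorem stmt12 :
    ∃ c₁₂ : ℝ, 0 < c₁₂ ∧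
      ∀ y : ℝ → ℝ,
        (∀ a b : ℝ, 0 < a → a ≤ b → y a ≤ y b) →
        (∀ x : ℝ, 0 < x → 3 ≤ y x) →
        ∀ X : ℝ, c₁₂ < X → y (Real.sqrt X) ≤ Real.log X ^ ((1 : ℝ) / 4) →
          (Real.log X ^ primePi (y (Real.sqrt X)) /
              (2 * ∏ i ∈ Finset.range (primePi (y (Real.sqrt X))),
                ((i : ℝ) + 1) * Real.log (Nat.nth Nat.Prime i))) ≤
            (((Finset.Icc 1 ⌊X⌋₊).filter fun n : ℕ =>
              Real.sqrt X < (n : ℝ) ∧ (maxPrimeFactor n : ℝ) ≤ y (Real.sqrt X)).card : ℝ) := by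
  refine ⟨Real.exp 100, Real.exp_pos 100, ?_⟩
  intro y _ hy3 X hX hy4
  have hX0 : 0 < X := (Real.exp_pos 100).trans hX
  set L := Real.log X with hL
  have hL100 : (100 : ℝ) < L := by
    rw [hL, ← Real.log_exp 100]
    exact Real.log_lt_log (Real.exp_pos 100) hX
  have hL0 : 0 < L := by linarith
  have hsX : 0 < Real.sqrt X := Real.sqrt_pos.mpr hX0
  set Y := y (Real.sqrt X) with hY
  have hY3 : 3 ≤ Y := hy3 _ hsX
  set A := L ^ ((1 : ℝ) / 4) with hA
  have hYA : Y ≤ A := hy4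
  have hA3 : (3 : ℝ) ≤ A := hY3.trans hYA
  have hA0 : 0 < A := by linarith
  have hA4 : A ^ (4 : ℕ) = L := by
    rw [hA, ← Real.rpow_natCast (L ^ ((1:ℝ)/4)) 4, ← Real.rpow_mul hL0.le]
    norm_num
  set m := ⌊Y⌋₊ with hmdef
  have hm3 : 3 ≤ m := Nat.le_floor (by exact_mod_cast hY3)
  have hmY : (m : ℝ) ≤ Y := Nat.floor_le (by linarith)
  set r := primePi Y with hrdef
  have hrcount : r = Nat.count Nat.Prime (m + 1) := rfl
  have hr2 : 2 ≤ r := by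
    rw [hrcount]
    have h4 : Nat.count Nat.Prime 4 ≤ Nat.count Nat.Prime (m + 1) :=
      Nat.count_monotone _ (by omega)
    have : Nat.count Nat.Prime 4 = 2 := by decide
    omega
  have hrm : r ≤ m := hrcount ▸ count_prime_le m
  have hpile : ∀ i < r, pP i ≤ m := by
    intro i hi
    rw [hrcount] at hi
    have := Nat.nth_lt_of_lt_count hi
    show Nat.nth Nat.Prime i ≤ m
    omega
  set s := ∑ i ∈ Finset.range r, cP i with hs
  have hlogA : Real.log A ≤ A := by
    have := Real.log_le_sub_one_of_pos hA0
    linarith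
  have hlogA0 : 0 ≤ Real.log A := Real.log_nonneg (by linarith)
  have hsA : s ≤ A * A := by
    have h1 : s ≤ (r : ℝ) * Real.log A := by
      rw [hs]
      calc ∑ i ∈ Finset.range r, cP i ≤ ∑ _i ∈ Finset.range r, Real.log A := by
            apply Finset.sum_le_sum
            intro i hi
            rw [Finset.mem_range] at hi
            have hple : (pP i : ℝ) ≤ A := by
              have := hpile i hi
              calc (pP i : ℝ) ≤ (m : ℝ) := by exact_mod_cast this
                _ ≤ Y := hmY
                _ ≤ A := hYA
            exact Real.log_le_log (by exact_mod_cast (pP_prime i).pos) hple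
        _ = (r : ℝ) * Real.log A := by rw [Finset.sum_const, Finset.card_range]; ring
    have hrA : (r : ℝ) ≤ A := by
      calc (r : ℝ) ≤ (m : ℝ) := by exact_mod_cast hrm
        _ ≤ Y := hmY
        _ ≤ A := hYA
    calc s ≤ (r : ℝ) * Real.log A := h1
      _ ≤ A * A := mul_le_mul hrA hlogA hlogA0 hA0.le
  have hsL : s ≤ L / 5 := by
    have h9 : (9 : ℝ) ≤ A * A := by nlinarith
    have : 5 * (A * A) ≤ A ^ (4 : ℕ) := by nlinarith
    rw [hA4] at this
    linarith
  have hs0 : 0 ≤ s := Finset.sum_nonneg fun i _ => (cP_pos i).le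
  -- the two smooth sets
  have hT2 : (0 : ℝ) ≤ L / 2 := by linarith
  have hsub_small : smoothNums r (L / 2) ⊆ smoothNums r L := smoothNums_mono (by linarith)
  set St := (Finset.Icc 1 ⌊X⌋₊).filter fun n : ℕ =>
      Real.sqrt X < (n : ℝ) ∧ (maxPrimeFactor n : ℝ) ≤ Y with hSt
  have hsubset : smoothNums r L \ smoothNums r (L / 2) ⊆ St := by
    intro n hn
    rw [Finset.mem_sdiff] at hn
    obtain ⟨hn1, hn2⟩ := hn
    obtain ⟨hnpos, hnq, hnlog⟩ := mem_smoothNums.mp hn1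
    have hn1R : (1 : ℝ) ≤ (n : ℝ) := by exact_mod_cast hnpos
    have hnX : (n : ℝ) ≤ X := by
      by_contra h
      push_neg at h
      have := Real.log_lt_log hX0 h
      rw [← hL] at this
      linarith
    rw [hSt, Finset.mem_filter]
    refine ⟨Finset.mem_Icc.mpr ⟨hnpos, Nat.le_floor hnX⟩, ?_, ?_⟩
    · by_contra hle
      push_neg at hle
      apply hn2
      apply mem_smoothNums.mpr
      refine ⟨hnpos, hnq, ?_⟩
      calc Real.log n ≤ Real.log (Real.sqrt X) := Real.log_le_log (by linarith) hle
        _ = L / 2 := by rw [Real.log_sqrt hX0.le]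
    · have hmax : maxPrimeFactor n ≤ m := by
        apply max_le (by omega)
        apply Finset.sup_le
        intro q hq
        obtain ⟨i, hi, rfl⟩ := hnq q hq
        exact hpile i hi
      calc (maxPrimeFactor n : ℝ) ≤ (m : ℝ) := by exact_mod_cast hmax
        _ ≤ Y := hmY
  set F := (r.factorial : ℝ) * ∏ i ∈ Finset.range r, cP i with hF
  have hFpos : 0 < F := by
    apply mul_pos _ (prod_cP_pos r)
    exact_mod_cast r.factorial_pos
  have hlow : L ^ r ≤ F * ((smoothNums r L).card : ℝ) := smoothNums_card_lower r L hL0.le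
  have hupp : F * ((smoothNums r (L / 2)).card : ℝ) ≤ (L / 2 + s) ^ r :=
    smoothNums_card_upper r (L / 2) hT2
  have hhalf : (L / 2 + s) ^ r ≤ L ^ r / 2 := by
    have h710 : L / 2 + s ≤ (7 / 10) * L := by linarith
    have h1 : (L / 2 + s) ^ r ≤ ((7 / 10) * L) ^ r :=
      pow_le_pow_left₀ (by linarith) h710 r
    have h2 : ((7 / 10) * L) ^ r = (7 / 10 : ℝ) ^ r * L ^ r := mul_pow _ _ _
    have h3 : (7 / 10 : ℝ) ^ r ≤ (7 / 10 : ℝ) ^ 2 :=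
      pow_le_pow_of_le_one (by norm_num) (by norm_num) hr2
    have h4 : (0 : ℝ) ≤ L ^ r := pow_nonneg hL0.le r
    calc (L / 2 + s) ^ r ≤ (7 / 10 : ℝ) ^ r * L ^ r := by rw [← h2]; exact h1
      _ ≤ (7 / 10 : ℝ) ^ 2 * L ^ r := mul_le_mul_of_nonneg_right h3 h4
      _ ≤ L ^ r / 2 := by nlinarith
  -- cardinalities
  have hcard1 : ((smoothNums r L).card : ℝ) - ((smoothNums r (L / 2)).card : ℝ)
      ≤ (St.card : ℝ) := by
    have h1 : (smoothNums r L \ smoothNums r (L / 2)).card ≤ St.card :=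
      Finset.card_le_card hsubset
    rw [Finset.card_sdiff_of_subset hsub_small] at h1
    have h2 := Finset.card_le_card hsub_small
    have := Nat.cast_sub h2 (R := ℝ)
    rw [← this]
    exact_mod_cast h1
  have hkey : L ^ r / 2 ≤ F * (St.card : ℝ) := by
    have e1 : F * ((smoothNums r L).card : ℝ) - F * ((smoothNums r (L / 2)).card : ℝ)
        ≤ F * (St.card : ℝ) := by
      rw [← mul_sub]
      exact mul_le_mul_of_nonneg_left hcard1 hFpos.le
    linarith
  have hD : (∏ i ∈ Finset.range r, ((i : ℝ) + 1) * Real.log (Nat.nth Nat.Prime i)) = F := by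
    rw [Finset.prod_mul_distrib, hF]
    congr 1
    · have := Finset.prod_range_add_one_eq_factorial r
      exact_mod_cast congrArg (Nat.cast (R := ℝ)) this
  rw [hD, div_le_iff₀ (by linarith)]
  calc L ^ r ≤ 2 * (F * ((St.card : ℝ))) := by linarith
    _ = (St.card : ℝ) * (2 * F) := by ring
end

section
/- There exists a positive real number c₁₄ such that the following holds. Let y be a non-decreasing function from the positive real numbers to the real numbers with y(x) ≥ 3 for all x > 0, let n_1 < n_2 < n_3 < ... be the increasing sequence of all positive integers n with P(n) ≤ y(n), and let X be a real number with X > c₁₄ and y(√X) ≤ (log X)^{1/4}. Then there is an index i such that n_i and n_{i+1} both lie in the interval (√X, X] and n_{i+1} − n_i < 3·n_i·(s·log y(n_i))^s / (log n_i)^{r'−1}, where r' = π(y(√(n_i))) and s = π(y(n_i)). -/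
open Real Filter

lemma auxA : ∀ k : ℕ, (2:ℝ)^k * (Nat.factorial k) ≤ ((k:ℝ)+1)^(k+1) := by
  intro k
  induction k with
  | zero => norm_num
  | succ k ih =>
    have h1 : (2:ℝ)^(k+1) * (Nat.factorial (k+1)) = (2*((k:ℝ)+1)) * ((2:ℝ)^k * (Nat.factorial k)) := by
      push_cast [Nat.factorial_succ]; ring
    have h2 : (2*((k:ℝ)+1)) * ((2:ℝ)^k * (Nat.factorial k)) ≤ (2*((k:ℝ)+1)) * ((k:ℝ)+1)^(k+1) := by
      apply mul_le_mul_of_nonneg_left ih; positivity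
    have key : 2 * ((k:ℝ)+1)^(k+2) ≤ ((k:ℝ)+2)^(k+2) := by
      have ha : (0:ℝ) < (k:ℝ)+1 := by positivity
      have hb : (1:ℝ) + ((k:ℝ)+2) * (1/((k:ℝ)+1)) ≤ (1 + 1/((k:ℝ)+1))^(k+2) := by
        have h := one_add_mul_le_pow (a := 1/((k:ℝ)+1))
          (le_trans (by norm_num) (le_of_lt (by positivity : (0:ℝ) < 1/((k:ℝ)+1)))) (k+2)
        push_cast at h
        linarith [h]
      have hge2 : (2:ℝ) ≤ (1 + 1/((k:ℝ)+1))^(k+2) := by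
        refine le_trans ?_ hb
        have : (1:ℝ) ≤ ((k:ℝ)+2) * (1/((k:ℝ)+1)) := by
          rw [mul_one_div, le_div_iff₀ ha]; linarith
        linarith
      calc 2 * ((k:ℝ)+1)^(k+2) ≤ (1 + 1/((k:ℝ)+1))^(k+2) * ((k:ℝ)+1)^(k+2) := by
            apply mul_le_mul_of_nonneg_right hge2; positivity
        _ = ((1 + 1/((k:ℝ)+1)) * ((k:ℝ)+1))^(k+2) := by rw [mul_pow]
        _ = ((k:ℝ)+2)^(k+2) := by rw [add_mul, one_mul, one_div, inv_mul_cancel₀ ha.ne']; ring_nf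
    calc (2:ℝ)^(k+1) * (Nat.factorial (k+1)) ≤ (2*((k:ℝ)+1)) * ((k:ℝ)+1)^(k+1) := by rw [h1]; exact h2
      _ = 2 * ((k:ℝ)+1)^(k+2) := by ring
      _ ≤ ((k:ℝ)+2)^(k+2) := key
      _ = ((↑(k+1):ℝ)+1)^(k+1+1) := by push_cast; ring_nf

lemma primeCounting_le_self (n : ℕ) : Nat.primeCounting n ≤ n := by
  rw [Nat.primeCounting, ← Nat.primesBelow_card_eq_primeCounting']
  calc (Nat.primesBelow (n+1)).card ≤ (Finset.Ico 1 (n+1)).card := by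
        apply Finset.card_le_card
        intro p hp
        rw [Nat.mem_primesBelow] at hp
        exact Finset.mem_Ico.mpr ⟨hp.2.one_lt.le, hp.1⟩
    _ = n := by simp

lemma pc3 : Nat.primeCounting 3 = 2 := by decide

set_option maxHeartbeats 1000000 in
theorem stmt13 :
    ∃ c₁₄ : ℝ, 0 < c₁₄ ∧
      ∀ y : ℝ → ℝ,
        (∀ a b : ℝ, 0 < a → a ≤ b → y a ≤ y b) →
        (∀ x : ℝ, 0 < x → 3 ≤ y x) →
        ∀ n : ℕ → ℕ,
          (∀ i j : ℕ, 1 ≤ i → i < j → n i < n j) →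
          (∀ i : ℕ, 1 ≤ i → 0 < n i ∧ (maxPrimeFactor (n i) : ℝ) ≤ y (n i)) →
          (∀ m : ℕ, 0 < m → (maxPrimeFactor m : ℝ) ≤ y m → ∃ i : ℕ, 1 ≤ i ∧ n i = m) →
          ∀ X : ℝ, c₁₄ < X → y (Real.sqrt X) ≤ Real.log X ^ ((1 : ℝ) / 4) →
            ∃ i : ℕ, 1 ≤ i ∧
              Real.sqrt X < (n i : ℝ) ∧ (n i : ℝ) ≤ X ∧
              Real.sqrt X < (n (i + 1) : ℝ) ∧ (n (i + 1) : ℝ) ≤ X ∧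
              (n (i + 1) : ℝ) - (n i : ℝ) <
                3 * (n i : ℝ) *
                    ((primePi (y (n i)) : ℝ) * Real.log (y (n i))) ^ primePi (y (n i)) /
                  Real.log (n i) ^ (primePi (y (Real.sqrt (n i))) - 1) := by
  classical
  refine ⟨Real.exp 100, Real.exp_pos _, ?_⟩
  intro y hmono hy3 n hninc hnmem hnsurj X hX hyX
  set L := Real.log X with hLdef
  have hX0 : (0:ℝ) < X := lt_trans (Real.exp_pos _) hX
  have hL100 : 100 < L := (Real.lt_log_iff_exp_lt hX0).mpr hX
  have hL0 : (0:ℝ) < L := by linarith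
  have hXeq : Real.exp L = X := Real.exp_log hX0
  set E := Real.exp (L/2) with hEdef
  have hE0 : (0:ℝ) < E := Real.exp_pos _
  have hE1 : (1:ℝ) < E := by
    have := Real.add_one_le_exp (L/2); rw [hEdef]; linarith
  have hEX : E * E = X := by
    rw [hEdef, ← Real.exp_add, ← hXeq]; ring_nf
  have hsqrt : Real.sqrt X = E := by
    rw [← hEX, Real.sqrt_mul_self hE0.le]
  have hsX0 : (0:ℝ) < Real.sqrt X := by rw [hsqrt]; exact hE0
  set y₀ := y (Real.sqrt X) with hy₀def
  have hy₀3 : (3:ℝ) ≤ y₀ := hy3 _ hsX0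
  have hy₀0 : (0:ℝ) < y₀ := by linarith
  set w := Real.log y₀ with hwdef
  have hw1 : (1:ℝ) ≤ w := by
    have h3 : Real.exp 1 ≤ 3 := by
      have := Real.exp_one_lt_d9; linarith
    have : (1:ℝ) = Real.log (Real.exp 1) := (Real.log_exp 1).symm
    rw [this, hwdef]
    exact Real.log_le_log (Real.exp_pos 1) (le_trans h3 hy₀3)
  have hw0 : (0:ℝ) < w := by linarith
  have hwy₀ : w ≤ y₀ := by
    have := Real.log_le_sub_one_of_pos hy₀0; rw [hwdef]; linarith
  have hy₀exp : Real.exp w = y₀ := Real.exp_log hy₀0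
  set F := ⌊y₀⌋₊ with hFdef
  have hF3 : 3 ≤ F := Nat.le_floor (by exact_mod_cast hy₀3)
  have hFy₀ : (F:ℝ) ≤ y₀ := Nat.floor_le hy₀0.le
  set r := Nat.primeCounting F with hrdef
  have hr2 : 2 ≤ r := by
    rw [hrdef, ← pc3]; exact Nat.monotone_primeCounting hF3
  have hry₀ : (r:ℝ) ≤ y₀ := by
    refine le_trans ?_ hFy₀
    exact_mod_cast primeCounting_le_self F
  -- the set of odd primes up to F
  set Q : Finset ℕ := (Finset.range (F+1)).filter (fun p => p.Prime ∧ p ≠ 2) with hQdef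
  set k := Q.card with hkdef
  have hkr : k + 1 = r := by
    have hS : Nat.primesBelow (F+1) = (Finset.range (F+1)).filter (fun p => p.Prime) := rfl
    have hsplit := Finset.card_filter_add_card_filter_not
      (s := (Finset.range (F+1)).filter (fun p => p.Prime)) (p := fun p => p ≠ 2)
    have h1 : ((Finset.range (F+1)).filter (fun p => p.Prime)).filter (fun p => p ≠ 2) = Q := by
      rw [Finset.filter_filter]
    have h2 : ((Finset.range (F+1)).filter (fun p => p.Prime)).filter (fun p => ¬ p ≠ 2) = {2} := by
      ext a
      simp only [Finset.mem_filter, Finset.mem_range, Finset.mem_singleton, not_not]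
      constructor
      · rintro ⟨-, h⟩; exact h
      · rintro rfl; refine ⟨⟨?_, Nat.prime_two⟩, rfl⟩; omega
    have hr' : r = ((Finset.range (F+1)).filter (fun p => p.Prime)).card := by
      rw [hrdef, Nat.primeCounting, ← Nat.primesBelow_card_eq_primeCounting', hS]
    rw [h1, h2] at hsplit
    simp only [Finset.card_singleton] at hsplit
    omega
  set Q1 : Finset ℕ := insert 1 Q with hQ1def
  have h1Q : 1 ∉ Q := by
    intro h
    rw [hQdef] at h
    exact Nat.not_prime_one (Finset.mem_filter.mp h).2.1
  have hQ1card : Q1.card = k + 1 := by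
    rw [hQ1def, Finset.card_insert_of_notMem h1Q]
  have hQ1mem : ∀ x ∈ Q1, x = 1 ∨ (x.Prime ∧ x ≤ F ∧ x ≠ 2) := by
    intro x hx
    rcases Finset.mem_insert.mp hx with h | h
    · exact Or.inl h
    · right
      rw [hQdef] at h
      obtain ⟨hr, hp, h2⟩ := Finset.mem_filter.mp h
      exact ⟨hp, by exact Nat.lt_succ_iff.mp (Finset.mem_range.mp hr), h2⟩
  set t := ⌊L/(2*w)⌋₊ with htdef
  set M := ⌊L/(2*Real.log 2)⌋₊ with hMdef
  have hlog2pos : (0:ℝ) < Real.log 2 := Real.log_pos (by norm_num)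
  -- the map σ
  set σ : Sym {x // x ∈ Q1} t → ℕ := fun s => ((s.1).map (fun x : {x // x ∈ Q1} => (x:ℕ))).prod
    with hσdef
  have hufacts : ∀ s : Sym {x // x ∈ Q1} t,
      Multiset.card ((s.1).map (fun x : {x // x ∈ Q1} => (x:ℕ))) = t ∧
      (∀ x ∈ (s.1).map (fun x : {x // x ∈ Q1} => (x:ℕ)), x ∈ Q1) := by
    intro s
    constructor
    · rw [Multiset.card_map, s.2]
    · intro x hx
      obtain ⟨⟨x', hx'⟩, _, rfl⟩ := Multiset.mem_map.mp hx
      exact hx'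
  have hσfac : ∀ s, ∀ p : ℕ, p.Prime → p ∣ σ s → p ∈ Q := by
    intro s p hp hdvd
    simp only [hσdef] at hdvd
    obtain ⟨a, ha, hpa⟩ := (Nat.Prime.prime hp).exists_mem_multiset_dvd hdvd
    obtain ⟨⟨a', haQ1⟩, ham, rfl⟩ := Multiset.mem_map.mp ha
    rcases hQ1mem a' haQ1 with rfl | ⟨hap, _, _⟩
    · exact absurd (Nat.dvd_one.mp hpa) hp.ne_one
    · have hpe : p = a' := (Nat.prime_dvd_prime_iff_eq hp hap).mp hpa
      subst hpe
      rcases Finset.mem_insert.mp haQ1 with h | h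
      · exact absurd h hp.ne_one
      · exact h
  have hσodd : ∀ s, ¬ 2 ∣ σ s := by
    intro s h
    have := hσfac s 2 Nat.prime_two h
    rw [hQdef] at this
    exact (Finset.mem_filter.mp this).2.2 rfl
  have hσpos : ∀ s, 0 < σ s := by
    intro s
    rcases Nat.eq_zero_or_pos (σ s) with h | h
    · exact absurd (h ▸ dvd_zero 2) (hσodd s)
    · exact h
  have htw : (t:ℝ) * w ≤ L/2 := by
    have h1 : (t:ℝ) ≤ L/(2*w) := Nat.floor_le (by positivity)
    have := mul_le_mul_of_nonneg_right h1 hw0.le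
    calc (t:ℝ) * w ≤ L/(2*w) * w := this
      _ = L/2 := by field_simp
  have hσE : ∀ s, (σ s : ℝ) ≤ E := by
    intro s
    have hle : σ s ≤ F ^ t := by
      have := Multiset.prod_le_pow_card ((s.1).map (fun x : {x // x ∈ Q1} => (x:ℕ))) F ?_
      · rwa [(hufacts s).1] at this
      · intro x hx
        rcases hQ1mem x ((hufacts s).2 x hx) with rfl | ⟨_, hxF, _⟩
        · omega
        · exact hxF
    calc (σ s : ℝ) ≤ ((F:ℝ))^t := by exact_mod_cast hle
      _ ≤ y₀ ^ t := pow_le_pow_left₀ (by positivity) hFy₀ t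
      _ = Real.exp ((t:ℝ) * w) := by rw [← hy₀exp, ← Real.exp_nat_mul]
      _ ≤ Real.exp (L/2) := Real.exp_le_exp.mpr htw
      _ = E := rfl
  have hσinj : Function.Injective σ := by
    intro s₁ s₂ h
    set u₁ := (s₁.1).map (fun x : {x // x ∈ Q1} => (x:ℕ)) with hu₁
    set u₂ := (s₂.1).map (fun x : {x // x ∈ Q1} => (x:ℕ)) with hu₂
    set v₁ := u₁.filter (fun x => x ≠ 1) with hv₁
    set v₂ := u₂.filter (fun x => x ≠ 1) with hv₂
    have hprime : ∀ (u : Multiset ℕ), (∀ x ∈ u, x ∈ Q1) →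
        ∀ p ∈ u.filter (fun x => x ≠ 1), p.Prime := by
      intro u hu p hp
      obtain ⟨hpu, hp1⟩ := Multiset.mem_filter.mp hp
      rcases hQ1mem p (hu p hpu) with h | h
      · exact absurd h hp1
      · exact h.1
    have hsplit : ∀ (u : Multiset ℕ), u.filter (fun x => x ≠ 1) +
        Multiset.replicate (Multiset.card u - Multiset.card (u.filter (fun x => x ≠ 1))) 1 = u := by
      intro u
      have h1 : u.filter (fun x => ¬ x ≠ 1) = u.filter (fun x => x = 1) := by
        apply Multiset.filter_congr
        intro x _
        simp
      have h2 : u.filter (fun x => x = 1) = Multiset.replicate (u.count 1) 1 := by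
        have := Multiset.filter_eq' u 1
        simpa [eq_comm] using this
      have h3 := Multiset.filter_add_not (fun x => x ≠ 1) u
      rw [h1, h2] at h3
      have hcount : u.count 1 = Multiset.card u - Multiset.card (u.filter (fun x => x ≠ 1)) := by
        have := congrArg Multiset.card h3
        rw [Multiset.card_add, Multiset.card_replicate] at this
        omega
      rw [← hcount]
      exact h3
    have hprodv : ∀ (u : Multiset ℕ), (u.filter (fun x => x ≠ 1)).prod = u.prod := by
      intro u
      conv_rhs => rw [← hsplit u]
      rw [Multiset.prod_add, Multiset.prod_replicate, one_pow, mul_one]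
    have hveq : v₁ = v₂ := by
      have hl₁ : (v₁.toList).prod = σ s₁ := by
        rw [Multiset.prod_toList, hv₁, hprodv]
      have hl₂ : (v₂.toList).prod = σ s₁ := by
        rw [Multiset.prod_toList, hv₂, hprodv, h]
      have hp₁ : ∀ p ∈ v₁.toList, p.Prime := by
        intro p hp
        exact hprime u₁ (hufacts s₁).2 p (by rwa [← Multiset.mem_toList])
      have hp₂ : ∀ p ∈ v₂.toList, p.Prime := by
        intro p hp
        exact hprime u₂ (hufacts s₂).2 p (by rwa [← Multiset.mem_toList])
      have hperm₁ := Nat.primeFactorsList_unique hl₁ hp₁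
      have hperm₂ := Nat.primeFactorsList_unique hl₂ hp₂
      have : List.Perm v₁.toList v₂.toList := hperm₁.trans hperm₂.symm
      rw [← Multiset.coe_toList v₁, ← Multiset.coe_toList v₂]
      exact Multiset.coe_eq_coe.mpr this
    have hcard12 : Multiset.card u₁ = Multiset.card u₂ := by
      rw [(hufacts s₁).1, (hufacts s₂).1]
    have hueq : u₁ = u₂ := by
      have e₁ := hsplit u₁
      have e₂ := hsplit u₂
      rw [← e₁, ← e₂]
      rw [show u₁.filter (fun x => x ≠ 1) = v₁ from rfl, show u₂.filter (fun x => x ≠ 1) = v₂ from rfl]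
      rw [hveq, hcard12]
    have : s₁.1 = s₂.1 := Multiset.map_injective Subtype.val_injective hueq
    exact Subtype.ext this
  -- choice of power of two
  have hjex : ∀ s : Sym {x // x ∈ Q1} t, ∃ j : ℕ, E < 2^j * (σ s : ℝ) := by
    intro s
    obtain ⟨j, hj⟩ := pow_unbounded_of_one_lt E (by norm_num : (1:ℝ) < 2)
    refine ⟨j, lt_of_lt_of_le hj ?_⟩
    have h1 : (1:ℝ) ≤ (σ s : ℝ) := by exact_mod_cast hσpos s
    exact le_mul_of_one_le_right (by positivity) h1
  set j₀ : Sym {x // x ∈ Q1} t → ℕ := fun s => Nat.find (hjex s) with hj₀def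
  have hj₀lt : ∀ s, E < 2^(j₀ s) * (σ s : ℝ) := fun s => Nat.find_spec (hjex s)
  have hj₀le : ∀ s, (2:ℝ)^(j₀ s) * (σ s : ℝ) ≤ 2*E := by
    intro s
    have hpos : 1 ≤ j₀ s := by
      by_contra hcon
      push_neg at hcon
      interval_cases h : j₀ s
      · have := hj₀lt s
        rw [h] at this
        simp only [pow_zero, one_mul] at this
        exact absurd (hσE s) (not_le.mpr this)
    have hmin := Nat.find_min (hjex s) (show j₀ s - 1 < j₀ s by omega)
    push_neg at hmin
    have h2 : (2:ℝ)^(j₀ s) = 2 * 2^(j₀ s - 1) := by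
      rw [← pow_succ']
      congr 1
      omega
    rw [h2, mul_assoc]
    have hσ0 : (0:ℝ) ≤ (σ s : ℝ) := by positivity
    linarith [hmin]
  set φ : Sym {x // x ∈ Q1} t × Fin M → ℕ := fun p => 2^(j₀ p.1 + p.2.val) * σ p.1 with hφdef
  have hMlog : (M:ℝ) * Real.log 2 ≤ L/2 := by
    have h1 : (M:ℝ) ≤ L/(2*Real.log 2) := Nat.floor_le (by positivity)
    have := mul_le_mul_of_nonneg_right h1 hlog2pos.le
    calc (M:ℝ) * Real.log 2 ≤ L/(2*Real.log 2) * Real.log 2 := this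
      _ = L/2 := by field_simp
  have h2M : (2:ℝ)^M ≤ Real.exp (L/2) := by
    have : (2:ℝ)^M = Real.exp ((M:ℝ) * Real.log 2) := by
      rw [← Real.exp_log (by norm_num : (0:ℝ) < 2), ← Real.exp_nat_mul, Real.log_exp]
    rw [this]
    exact Real.exp_le_exp.mpr hMlog
  have hφrange : ∀ p : Sym {x // x ∈ Q1} t × Fin M, E < (φ p : ℝ) ∧ (φ p : ℝ) ≤ X := by
    rintro ⟨s, c⟩
    have hcast : (φ (s, c) : ℝ) = 2^(j₀ s + c.val) * (σ s : ℝ) := by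
      rw [hφdef]; push_cast; ring
    constructor
    · rw [hcast, pow_add]
      have h1 : (1:ℝ) ≤ 2^c.val := one_le_pow₀ (by norm_num : (1:ℝ) ≤ 2)
      have hσ0 : (0:ℝ) ≤ (σ s : ℝ) := by positivity
      calc E < 2^(j₀ s) * (σ s:ℝ) := hj₀lt s
        _ = 2^(j₀ s) * 1 * (σ s:ℝ) := by ring
        _ ≤ 2^(j₀ s) * 2^c.val * (σ s:ℝ) := by
            apply mul_le_mul_of_nonneg_right (mul_le_mul_of_nonneg_left h1 (by positivity)) hσ0
    · rw [hcast, pow_add]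
      have hcM := c.isLt
      have hc : c.val ≤ M - 1 := by omega
      have h1 : (2:ℝ)^c.val ≤ 2^(M-1) :=
        pow_le_pow_right₀ (by norm_num) hc
      have h2 : (2:ℝ)^(j₀ s) * (σ s : ℝ) ≤ 2*E := hj₀le s
      have h3 : (2:ℝ)^(M-1) * (2*E) ≤ X := by
        have hM1 : (2:ℝ)^(M-1) * 2 = 2^M := by
          rw [← pow_succ]
          congr 1
          omega
        rw [← mul_assoc, hM1]
        calc (2:ℝ)^M * E ≤ Real.exp (L/2) * E := by
              apply mul_le_mul_of_nonneg_right h2M hE0.le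
          _ = X := by rw [hEdef, ← Real.exp_add, ← hXeq]; ring_nf
      calc (2:ℝ)^(j₀ s) * 2^c.val * (σ s : ℝ) = (2:ℝ)^c.val * ((2:ℝ)^(j₀ s) * (σ s : ℝ)) := by
            ring
        _ ≤ 2^(M-1) * (2*E) := by
            apply mul_le_mul h1 h2 (by positivity) (by positivity)
        _ ≤ X := h3
  have hφinj : Function.Injective φ := by
    rintro ⟨s, c⟩ ⟨s', c'⟩ h
    simp only [hφdef] at h
    have hfact : ∀ (s : Sym {x // x ∈ Q1} t) (a : ℕ), (2^a * σ s).factorization 2 = a := by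
      intro s a
      rw [Nat.factorization_mul (pow_ne_zero a (by norm_num)) (hσpos s).ne']
      rw [Nat.Prime.factorization_pow (Nat.prime_two)]
      simp only [Finsupp.coe_add, Pi.add_apply, Finsupp.single_eq_same]
      rw [Nat.factorization_eq_zero_of_not_dvd (hσodd s)]
      omega
    have hexp : j₀ s + c.val = j₀ s' + c'.val := by
      have h1 := hfact s (j₀ s + c.val)
      have h2 := hfact s' (j₀ s' + c'.val)
      rw [h] at h1
      rw [h1] at h2
      omega
    have hσeq : σ s = σ s' := by
      rw [hexp] at h
      exact Nat.eq_of_mul_eq_mul_left (Nat.pow_pos (by norm_num)) h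
    have hss : s = s' := hσinj hσeq
    subst hss
    have : c.val = c'.val := by omega
    exact Prod.ext rfl (Fin.ext this)
  set T : Finset ℕ := Finset.image φ Finset.univ with hTdef
  set N := T.card with hNdef
  have hNcard : N = (k + t).choose t * M := by
    rw [hNdef, hTdef, Finset.card_image_of_injective _ hφinj, Finset.card_univ,
      Fintype.card_prod, Fintype.card_fin, Sym.card_sym_eq_multichoose,
      Nat.multichoose_eq, Fintype.card_coe, hQ1card]
    congr 2
    omega
  have hTrange : ∀ v ∈ T, E < (v:ℝ) ∧ (v:ℝ) ≤ X ∧ maxPrimeFactor v ≤ F := by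
    intro v hv
    obtain ⟨p, _, rfl⟩ := Finset.mem_image.mp hv
    refine ⟨(hφrange p).1, (hφrange p).2, ?_⟩
    rw [maxPrimeFactor]
    apply max_le (by omega)
    apply Finset.sup_le
    intro q hq
    obtain ⟨hqp, hqd, _⟩ := Nat.mem_primeFactors.mp hq
    simp only [id]
    rcases (Nat.Prime.dvd_mul hqp).mp (hφdef ▸ hqd) with h | h
    · have : q = 2 := by
        have := hqp.dvd_of_dvd_pow h
        exact (Nat.prime_dvd_prime_iff_eq hqp Nat.prime_two).mp this
      omega
    · have := hσfac p.1 q hqp h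
      rw [hQdef] at this
      have := Finset.mem_range.mp (Finset.mem_filter.mp this).1
      omega
  have hTmember : ∀ v ∈ T, ∃ i, 1 ≤ i ∧ n i = v := by
    intro v hv
    obtain ⟨hv1, hv2, hv3⟩ := hTrange v hv
    have hvpos : 0 < v := by
      by_contra hcon
      push_neg at hcon
      interval_cases v
      simp at hv1
      linarith
    apply hnsurj v hvpos
    calc (maxPrimeFactor v : ℝ) ≤ (F:ℝ) := by exact_mod_cast hv3
      _ ≤ y₀ := hFy₀
      _ = y (Real.sqrt X) := by rw [hy₀def]
      _ ≤ y v := by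
        apply hmono _ _ hsX0
        rw [hsqrt]
        exact hv1.le
  -- counting lower bound
  have hrpos : (0:ℝ) < (r:ℝ) := by
    have : (2:ℝ) ≤ (r:ℝ) := by exact_mod_cast hr2
    linarith
  set Rw := (r:ℝ) * w with hRwdef
  have hRw2 : (2:ℝ) ≤ Rw := by
    have h2r : (2:ℝ) ≤ (r:ℝ) := by exact_mod_cast hr2
    have := mul_le_mul h2r hw1 zero_le_one (by linarith)
    rw [hRwdef]
    linarith
  have hRw0 : (0:ℝ) < Rw := by linarith
  set RB := L^r / (3 * Rw^r) with hRBdef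
  have hRB0 : (0:ℝ) < RB := by
    rw [hRBdef]; positivity
  have hlog202 : Real.log 2 < 0.7 := by
    have := Real.log_two_lt_d9; linarith
  have hM07 : 0.7 * L ≤ (M:ℝ) := by
    have h1 : L/(2*Real.log 2) < (M:ℝ) + 1 := Nat.lt_floor_add_one _
    have h2 : L < ((M:ℝ)+1) * (2*Real.log 2) := by
      rw [div_lt_iff₀ (by positivity)] at h1
      linarith
    have h3 : ((M:ℝ)+1) * (2*Real.log 2) ≤ ((M:ℝ)+1) * 1.4 := by
      apply mul_le_mul_of_nonneg_left (by linarith) (by positivity)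
    linarith
  have hchoose : (L/(2*w))^k ≤ ((k + t).choose t : ℝ) * (Nat.factorial k) := by
    have hnat : (t+1)^k ≤ Nat.factorial k * (t + k).choose k := by
      calc (t+1)^k ≤ (t+1).ascFactorial k := Nat.pow_succ_le_ascFactorial (t+1) k
        _ = Nat.factorial k * (t + k).choose k := Nat.ascFactorial_eq_factorial_mul_choose t k
    have hsymm : (t + k).choose k = (k + t).choose t := by
      rw [add_comm t k]
      rw [← Nat.choose_symm (Nat.le_add_right k t)]
      congr 1
      omega
    rw [hsymm] at hnat
    have hcast : ((t:ℝ)+1)^k ≤ ((k + t).choose t : ℝ) * (Nat.factorial k) := by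
      rw [mul_comm]
      exact_mod_cast hnat
    refine le_trans ?_ hcast
    apply pow_le_pow_left₀ (by positivity)
    have := Nat.lt_floor_add_one (L/(2*w))
    rw [← htdef] at this
    linarith
  have hfack : (2:ℝ)^k * (Nat.factorial k) ≤ (r:ℝ)^r := by
    have := auxA k
    have hcast : ((k:ℝ)+1) = (r:ℝ) := by
      rw [← hkr]; push_cast; ring
    rw [hcast] at this
    have hrk : k + 1 = r := hkr
    calc (2:ℝ)^k * (Nat.factorial k) ≤ (r:ℝ)^(k+1) := this
      _ = (r:ℝ)^r := by rw [hrk]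
  have hkey : (Nat.factorial k : ℝ) * (2*w)^k ≤ Rw^r := by
    have h1 : ((2:ℝ)*w)^k = 2^k * w^k := mul_pow 2 w k
    have h2 : Rw^r = (r:ℝ)^r * w^r := mul_pow _ _ r
    have h3 : w^r = w^(k+1) := by rw [hkr]
    have h4 : (w:ℝ)^k ≤ w^(k+1) := by
      rw [pow_succ]
      exact le_mul_of_one_le_right (pow_nonneg hw0.le k) hw1
    calc (Nat.factorial k : ℝ) * (2*w)^k = (2^k * Nat.factorial k) * w^k := by rw [h1]; ring
      _ ≤ (r:ℝ)^r * w^k := by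
          apply mul_le_mul_of_nonneg_right hfack (by positivity)
      _ ≤ (r:ℝ)^r * w^(k+1) := by
          apply mul_le_mul_of_nonneg_left h4 (by positivity)
      _ = Rw^r := by rw [h2, h3]
  have hP0 : (0:ℝ) < (L/(2*w))^k := by positivity
  have hf0 : (0:ℝ) < (Nat.factorial k : ℝ) := by
    exact_mod_cast Nat.factorial_pos k
  have hNr : (N:ℝ) = ((k + t).choose t : ℝ) * (M:ℝ) := by
    rw [hNcard]; push_cast; ring
  have hNlb : (L/(2*w))^k / (Nat.factorial k : ℝ) * (0.7 * L) ≤ (N:ℝ) := by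
    rw [hNr]
    apply mul_le_mul _ hM07 (by positivity) _
    · rw [div_le_iff₀ hf0]
      exact hchoose
    · positivity
  have hLk : (L:ℝ)^k = (L/(2*w))^k * (2*w)^k := by
    rw [← mul_pow]
    congr 1
    field_simp
  have hRB21 : 2.1 * RB ≤ (N:ℝ) := by
    refine le_trans ?_ hNlb
    rw [hRBdef]
    rw [show (2.1 : ℝ) * (L^r/(3*Rw^r)) = 0.7 * (L^r/Rw^r) by field_simp; ring]
    rw [show (L/(2*w))^k / (Nat.factorial k : ℝ) * (0.7 * L) = 0.7 * ((L/(2*w))^k * L / (Nat.factorial k : ℝ)) by ring]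
    apply mul_le_mul_of_nonneg_left _ (by norm_num)
    rw [div_le_div_iff₀ (by positivity) hf0]
    have hLr : L^r = (L/(2*w))^k * (2*w)^k * L := by
      rw [← hLk, ← pow_succ, hkr]
    rw [hLr]
    calc (L/(2*w))^k * (2*w)^k * L * (Nat.factorial k : ℝ)
        = ((Nat.factorial k : ℝ) * (2*w)^k) * ((L/(2*w))^k * L) := by ring
      _ ≤ Rw^r * ((L/(2*w))^k * L) := by
          apply mul_le_mul_of_nonneg_right hkey (by positivity)
      _ = (L/(2*w))^k * L * Rw^r := by ring
  -- RB is large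
  have hRBL3 : L/3 ≤ RB := by
    set SL := L ^ ((1:ℝ)/2) with hSLdef
    have hL1 : (1:ℝ) ≤ L := by linarith
    have hSL1 : (1:ℝ) ≤ SL := Real.one_le_rpow hL1 (by norm_num)
    have hSL2 : SL^2 = L := by
      rw [hSLdef, ← Real.rpow_natCast (L ^ ((1:ℝ)/2)) 2, ← Real.rpow_mul hL0.le]
      norm_num
    have hRwSL : Rw ≤ SL := by
      have h1 : Rw ≤ y₀^2 := by
        rw [hRwdef, sq]
        exact mul_le_mul hry₀ hwy₀ hw0.le hy₀0.le
      have h2 : y₀^2 ≤ (L ^ ((1:ℝ)/4))^2 := by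
        apply pow_le_pow_left₀ hy₀0.le hyX
      have h3 : (L ^ ((1:ℝ)/4))^2 = SL := by
        rw [hSLdef, ← Real.rpow_natCast (L ^ ((1:ℝ)/4)) 2, ← Real.rpow_mul hL0.le]
        norm_num
      linarith
    have hpow : Rw^r ≤ SL^r := pow_le_pow_left₀ hRw0.le hRwSL r
    have hSLr : SL^2 ≤ SL^r := pow_le_pow_right₀ hSL1 hr2
    have hLr' : L * SL^r ≤ L^r := by
      calc L * SL^r = SL^2 * SL^r := by rw [hSL2]
        _ = SL^(2+r) := by rw [← pow_add]
        _ ≤ SL^(r+r) := by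
            apply pow_le_pow_right₀ hSL1
            omega
        _ = (SL^2)^r := by rw [← pow_mul]; congr 1; omega
        _ = L^r := by rw [hSL2]
    rw [hRBdef, le_div_iff₀ (by positivity)]
    calc L/3 * (3 * Rw^r) = L * Rw^r := by ring
      _ ≤ L * SL^r := by
          apply mul_le_mul_of_nonneg_left hpow hL0.le
      _ ≤ L^r := hLr'
  have hN07 : 0.7 * L ≤ (N:ℝ) := by linarith
  have hN2 : 2 ≤ N := by
    have : (2:ℝ) ≤ (N:ℝ) := by linarith
    exact_mod_cast this
  have hNm1 : ((N - 1 : ℕ):ℝ) = (N:ℝ) - 1 := by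
    have : 1 ≤ N := by omega
    push_cast [Nat.cast_sub this]
    ring
  have hNm1L : L/2 ≤ (N:ℝ) - 1 := by linarith
  have hNm1RB : RB ≤ (N:ℝ) - 1 := by linarith
  have hNm1pos : (0:ℝ) < (N:ℝ) - 1 := by linarith
  set δ := L / (2 * ((N:ℝ) - 1)) with hδdef
  have hδ0 : (0:ℝ) < δ := by rw [hδdef]; positivity
  have hδ1 : δ ≤ 1 := by
    rw [hδdef, div_le_one (by positivity)]
    linarith
  have hδfinal : 2 * δ ≤ 3 * Rw^r / L^(r-1) := by
    have h1 : 2 * δ = L / ((N:ℝ) - 1) := by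
      rw [hδdef]; field_simp
    have h2 : L / ((N:ℝ) - 1) ≤ L / RB := by
      apply div_le_div_of_nonneg_left hL0.le hRB0 hNm1RB
    have h3 : L / RB = 3 * Rw^r / L^(r-1) := by
      rw [hRBdef]
      have hLr : L^r = L^(r-1) * L := by
        rw [← pow_succ]
        congr 1
        omega
      rw [div_div_eq_mul_div, hLr]
      rw [div_eq_div_iff (by positivity) (by positivity)]
      ring
    rw [h1]
    rw [h3] at h2
    exact h2
  -- pigeonhole
  set g : ℕ → ℕ := fun v => ⌈(Real.log v - L/2)/δ⌉₊ with hgdef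
  have hlogv : ∀ v ∈ T, L/2 < Real.log v ∧ Real.log v ≤ L := by
    intro v hv
    obtain ⟨hv1, hv2, _⟩ := hTrange v hv
    have hv0 : (0:ℝ) < (v:ℝ) := lt_trans hE0 hv1
    constructor
    · calc L/2 = Real.log E := by rw [hEdef, Real.log_exp]
        _ < Real.log v := Real.log_lt_log hE0 hv1
    · calc Real.log v ≤ Real.log X := Real.log_le_log hv0 hv2
        _ = L := rfl
  have hmaps : ∀ v ∈ T, g v ∈ Finset.Icc 1 (N - 1) := by
    intro v hv
    obtain ⟨h1, h2⟩ := hlogv v hv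
    rw [Finset.mem_Icc]
    constructor
    · rw [hgdef]
      simp only
      have : (0:ℝ) < (Real.log v - L/2)/δ := div_pos (by linarith) hδ0
      have := Nat.ceil_pos.mpr this
      omega
    · rw [hgdef]
      simp only
      apply Nat.ceil_le.mpr
      rw [hNm1]
      have hq : (Real.log v - L/2)/δ ≤ (L/2)/δ :=
        (div_le_div_iff_of_pos_right hδ0).mpr (by linarith)
      have heq : (L/2)/δ = (N:ℝ) - 1 := by
        rw [hδdef]
        field_simp
      linarith
  have hTN : T.card = N := rfl
  have hcardlt : (Finset.Icc 1 (N-1)).card < T.card := by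
    rw [Nat.card_Icc, hTN]
    omega
  obtain ⟨x₁, hx₁, x₂, hx₂, hne, hgeq⟩ :=
    Finset.exists_ne_map_eq_of_card_lt_of_maps_to hcardlt hmaps
  have key : ∀ a b : ℕ, a ∈ T → b ∈ T → a < b → g a = g b →
      ∃ i : ℕ, 1 ≤ i ∧
        Real.sqrt X < (n i : ℝ) ∧ (n i : ℝ) ≤ X ∧
        Real.sqrt X < (n (i + 1) : ℝ) ∧ (n (i + 1) : ℝ) ≤ X ∧
        (n (i + 1) : ℝ) - (n i : ℝ) <
          3 * (n i : ℝ) *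
              ((primePi (y (n i)) : ℝ) * Real.log (y (n i))) ^ primePi (y (n i)) /
            Real.log (n i) ^ (primePi (y (Real.sqrt (n i))) - 1) := by
    intro a b haT hbT hab hgab
    obtain ⟨ha1, ha2, _⟩ := hTrange a haT
    obtain ⟨hb1, hb2, _⟩ := hTrange b hbT
    have ha0 : (0:ℝ) < (a:ℝ) := lt_trans hE0 ha1
    have hb0 : (0:ℝ) < (b:ℝ) := lt_trans hE0 hb1
    obtain ⟨hla, hla2⟩ := hlogv a haT
    obtain ⟨hlb, hlb2⟩ := hlogv b hbT
    have hloggap : Real.log b - Real.log a < δ := by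
      have hza : (0:ℝ) ≤ (Real.log a - L/2)/δ := by
        apply div_nonneg (by linarith) hδ0.le
      have h1 : (Real.log b - L/2)/δ ≤ ((g b : ℕ):ℝ) := by
        rw [hgdef]; exact Nat.le_ceil _
      have h2 : ((g a : ℕ):ℝ) < (Real.log a - L/2)/δ + 1 := by
        rw [hgdef]; exact Nat.ceil_lt_add_one hza
      rw [hgab] at h2
      have h3 : (Real.log b - L/2)/δ < (Real.log a - L/2)/δ + 1 := lt_of_le_of_lt h1 h2
      have h4 : (Real.log b - Real.log a)/δ < 1 := by
        have : (Real.log b - L/2)/δ - (Real.log a - L/2)/δ = (Real.log b - Real.log a)/δ := by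
          ring
        linarith
      have := (div_lt_one hδ0).mp h4
      linarith
    have hexpb : (b:ℝ) < (a:ℝ) * Real.exp δ := by
      have hlt : Real.log b < Real.log a + δ := by linarith
      calc (b:ℝ) = Real.exp (Real.log b) := (Real.exp_log hb0).symm
        _ < Real.exp (Real.log a + δ) := Real.exp_lt_exp.mpr hlt
        _ = a * Real.exp δ := by rw [Real.exp_add, Real.exp_log ha0]
    have hexpδ : Real.exp δ ≤ 1 + 2*δ := by
      have h := Real.exp_bound' hδ0.le hδ1 (n := 1) (by norm_num)
      simp only [Finset.sum_range_one, pow_zero, Nat.factorial_zero, Nat.cast_one, pow_one,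
        Nat.factorial_one, mul_one, one_mul] at h
      norm_num at h
      linarith
    have hgap : (b:ℝ) - a < 2*δ*a := by
      have hmm := mul_le_mul_of_nonneg_left hexpδ ha0.le
      have hexp : (a:ℝ) * (1 + 2*δ) = a + 2*δ*a := by ring
      linarith
    obtain ⟨i, hi1, hia⟩ := hTmember a haT
    obtain ⟨i', hi'1, hib⟩ := hTmember b hbT
    have hii' : i < i' := by
      by_contra hcon
      push_neg at hcon
      rcases eq_or_lt_of_le hcon with heq | hlt
      · rw [heq] at hib
        omega
      · have := hninc i' i hi'1 hlt
        omega
    have hnext : n (i+1) ≤ b := by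
      rcases eq_or_lt_of_le (by omega : i + 1 ≤ i') with heq | hlt
      · rw [← heq] at hib
        omega
      · have := hninc (i+1) i' (by omega) hlt
        omega
    have hninc1 : n i < n (i+1) := hninc i (i+1) hi1 (by omega)
    refine ⟨i, hi1, ?_, ?_, ?_, ?_, ?_⟩
    · rw [hsqrt, hia]; exact ha1
    · rw [hia]
      calc (a:ℝ) ≤ (b:ℝ) := by exact_mod_cast hab.le
        _ ≤ X := hb2
    · rw [hsqrt]
      have h5 : (a:ℝ) < (n (i+1) : ℝ) := by
        have := hia ▸ hninc1
        exact_mod_cast this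
      linarith
    · have h5 : ((n (i+1)):ℝ) ≤ (b:ℝ) := by exact_mod_cast hnext
      linarith
    · rw [hia]
      have hsa : Real.sqrt X ≤ (a:ℝ) := by rw [hsqrt]; exact ha1.le
      have hYy₀ : y₀ ≤ y (a:ℝ) := hmono _ _ hsX0 hsa
      have hsr : r ≤ primePi (y (a:ℝ)) := by
        rw [hrdef, hFdef]
        exact Nat.monotone_primeCounting (Nat.floor_le_floor hYy₀)
      have hwY : w ≤ Real.log (y (a:ℝ)) := by
        rw [hwdef]
        exact Real.log_le_log hy₀0 hYy₀
      have hA0' : Rw ≤ (primePi (y (a:ℝ)) : ℝ) * Real.log (y (a:ℝ)) := by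
        rw [hRwdef]
        apply mul_le_mul _ hwY hw0.le (by positivity)
        exact_mod_cast hsr
      have hA : Rw^r ≤ ((primePi (y (a:ℝ)) : ℝ) * Real.log (y (a:ℝ)))^(primePi (y (a:ℝ))) := by
        calc Rw^r ≤ ((primePi (y (a:ℝ)) : ℝ) * Real.log (y (a:ℝ)))^r :=
              pow_le_pow_left₀ hRw0.le hA0' r
          _ ≤ ((primePi (y (a:ℝ)) : ℝ) * Real.log (y (a:ℝ)))^(primePi (y (a:ℝ))) := by
              apply pow_le_pow_right₀ (by linarith) hsr
      have hρr : primePi (y (Real.sqrt (a:ℝ))) ≤ r := by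
        have haX : (a:ℝ) ≤ X := le_trans (by exact_mod_cast hab.le : (a:ℝ) ≤ (b:ℝ)) hb2
        have hsa' : Real.sqrt (a:ℝ) ≤ Real.sqrt X := Real.sqrt_le_sqrt haX
        have ha0' : (0:ℝ) < Real.sqrt (a:ℝ) := Real.sqrt_pos.mpr ha0
        have hyy : y (Real.sqrt (a:ℝ)) ≤ y₀ := by
          rw [hy₀def]
          exact hmono _ _ ha0' hsa'
        rw [hrdef, hFdef]
        exact Nat.monotone_primeCounting (Nat.floor_le_floor hyy)
      have hla1 : (1:ℝ) ≤ Real.log a := by linarith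
      have hden : (Real.log a)^(primePi (y (Real.sqrt (a:ℝ))) - 1) ≤ L^(r-1) := by
        calc (Real.log a)^(primePi (y (Real.sqrt (a:ℝ))) - 1)
            ≤ L^(primePi (y (Real.sqrt (a:ℝ))) - 1) := by
              apply pow_le_pow_left₀ (by linarith) hla2
          _ ≤ L^(r-1) := by
              apply pow_le_pow_right₀ (by linarith)
              omega
      have hdenpos : (0:ℝ) < (Real.log a)^(primePi (y (Real.sqrt (a:ℝ))) - 1) := by
        apply pow_pos
        linarith
      have hA0 : (0:ℝ) ≤ ((primePi (y (a:ℝ)) : ℝ) * Real.log (y (a:ℝ)))^(primePi (y (a:ℝ))) :=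
        le_trans (pow_nonneg hRw0.le r) hA
      have hnb : ((n (i+1)):ℝ) ≤ (b:ℝ) := by exact_mod_cast hnext
      calc ((n (i+1)):ℝ) - a ≤ (b:ℝ) - a := by linarith
        _ < 2*δ*a := hgap
        _ ≤ (3 * Rw^r / L^(r-1)) * a := by
            apply mul_le_mul_of_nonneg_right hδfinal ha0.le
        _ = 3 * a * Rw^r / L^(r-1) := by ring
        _ ≤ 3 * (a:ℝ) * ((primePi (y (a:ℝ)) : ℝ) * Real.log (y (a:ℝ)))^(primePi (y (a:ℝ))) /
              (Real.log a)^(primePi (y (Real.sqrt (a:ℝ))) - 1) := by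
            apply div_le_div₀ (by positivity) _ hdenpos hden
            calc 3 * (a:ℝ) * Rw^r ≤ 3 * (a:ℝ) *
                (((primePi (y (a:ℝ)) : ℝ) * Real.log (y (a:ℝ)))^(primePi (y (a:ℝ)))) := by
                  apply mul_le_mul_of_nonneg_left hA (by positivity)
              _ = _ := by ring
  rcases lt_or_gt_of_ne hne with h | h
  · exact key _ _ hx₁ hx₂ h hgeq
  · exact key _ _ hx₂ hx₁ h hgeq.symm
end

section
/- There exists an effectively computable positive real number c₁₀ such that the following holds. Let y be a non-decreasing function from the positive real numbers to the real numbers with y(x) ≥ 3 for all x > 0, let X ≥ 9 be a real number with y(√X) > (log X)^{1/4}, and let n be an integer with √X < n ≤ X. Then (log n)^{π(y(√n))−1} < exp(c₁₀·y(n)). -/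
open Real

lemma cheb_aux (M : ℕ) (hM : 3 ≤ M) :
    (M.primeCounting : ℝ) * Real.log M ≤ 5 * M := by
  classical
  set s := Nat.sqrt M with hs
  set k := M.primeCounting with hk
  have hcard : k = ((Finset.range (M+1)).filter Nat.Prime).card := by
    rw [hk, Nat.primeCounting, Nat.primeCounting', Nat.count_eq_card_filter_range]
  set S := (Finset.range (M+1)).filter Nat.Prime with hS
  set B := S.filter (fun p => s < p) with hB
  have hsub : k - s ≤ B.card := by
    have h1 : B.card + (S.filter (fun p => ¬ s < p)).card = S.card :=
      Finset.card_filter_add_card_filter_not _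
    have h2 : (S.filter (fun p => ¬ s < p)).card ≤ s := by
      have : S.filter (fun p => ¬ s < p) ⊆ Finset.Icc 2 s := by
        intro p hp
        simp only [hB, hS, Finset.mem_filter, Finset.mem_range, not_lt] at hp
        exact Finset.mem_Icc.mpr ⟨hp.1.2.two_le, hp.2⟩
      calc (S.filter (fun p => ¬ s < p)).card ≤ (Finset.Icc 2 s).card :=
            Finset.card_le_card this
        _ = s + 1 - 2 := Nat.card_Icc 2 s
        _ ≤ s := by omega
    omega
  have hpow : (s+1)^(k - s) ≤ 4^M := by
    calc (s+1)^(k-s) ≤ (s+1)^B.card := Nat.pow_le_pow_right (by omega) hsub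
      _ ≤ ∏ p ∈ B, p := Finset.pow_card_le_prod _ _ _ (by
          intro p hp
          simp only [hB, Finset.mem_filter] at hp
          omega)
      _ ≤ ∏ p ∈ S, p := Finset.prod_le_prod_of_subset_of_one_le' (Finset.filter_subset _ _)
          (fun p hp _ => (Finset.mem_filter.mp hp).2.one_lt.le)
      _ = primorial M := rfl
      _ ≤ 4^M := primorial_le_4_pow M
  have hMpos : (0:ℝ) < M := by positivity
  have hM1 : (1:ℝ) ≤ M := by exact_mod_cast hM.trans' (by norm_num)
  have hlogM : 0 ≤ Real.log M := Real.log_nonneg hM1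
  have hlog1 : ((k - s : ℕ) : ℝ) * Real.log (s+1) ≤ M * Real.log 4 := by
    have := Real.log_le_log (by positivity) (by exact_mod_cast hpow :
      ((s+1:ℕ):ℝ)^(k-s) ≤ (4:ℝ)^M)
    rwa [Real.log_pow, Real.log_pow, Nat.cast_add, Nat.cast_one] at this
  have hlogM2 : Real.log M ≤ 2 * Real.log (s+1) := by
    have h : (M:ℝ) ≤ ((s:ℝ)+1)^2 := by
      have h0 : M < (s+1)*(s+1) := Nat.lt_succ_sqrt M
      have h1 : (M:ℝ) < ((s:ℝ)+1)*((s:ℝ)+1) := by exact_mod_cast h0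
      nlinarith
    calc Real.log M ≤ Real.log (((s:ℝ)+1)^2) := Real.log_le_log hMpos h
      _ = 2 * Real.log (s+1) := by rw [Real.log_pow]; push_cast; ring
  have hsqrt : (s:ℝ) ≤ Real.sqrt M := by
    have h0 : s ^ 2 ≤ M := Nat.sqrt_le' M
    have h2 : ((s:ℝ))^2 ≤ (M:ℝ) := by exact_mod_cast h0
    have := Real.sqrt_le_sqrt h2
    rwa [Real.sqrt_sq (by positivity)] at this
  have hlogsq : Real.log M ≤ 2 * Real.sqrt M := by
    have h1 : Real.log M = 2 * Real.log (Real.sqrt M) := by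
      rw [Real.log_sqrt hMpos.le]; ring
    have h2 : Real.log (Real.sqrt M) ≤ Real.sqrt M - 1 :=
      Real.log_le_sub_one_of_pos (Real.sqrt_pos.mpr hMpos)
    nlinarith [Real.sqrt_nonneg (M:ℝ)]
  have hlog4 : Real.log 4 ≤ 3/2 := by
    have : Real.log 4 = 2 * Real.log 2 := by
      rw [show (4:ℝ) = 2^2 by norm_num, Real.log_pow]; push_cast; ring
    rw [this]; nlinarith [Real.log_two_lt_d9]
  have hksplit : (k:ℝ) ≤ ((k - s : ℕ):ℝ) + s := by
    have : k ≤ (k - s) + s := by omega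
    exact_mod_cast this
  have h1 : ((k - s : ℕ):ℝ) * Real.log M ≤ 2 * (M * Real.log 4) := by
    calc ((k - s : ℕ):ℝ) * Real.log M ≤ ((k - s : ℕ):ℝ) * (2 * Real.log (s+1)) := by
          apply mul_le_mul_of_nonneg_left hlogM2 (by positivity)
      _ = 2 * (((k - s : ℕ):ℝ) * Real.log (s+1)) := by ring
      _ ≤ 2 * (M * Real.log 4) := by linarith
  have h2 : (s:ℝ) * Real.log M ≤ 2 * M := by
    calc (s:ℝ) * Real.log M ≤ Real.sqrt M * (2 * Real.sqrt M) := by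
          apply mul_le_mul hsqrt hlogsq hlogM (Real.sqrt_nonneg _)
      _ = 2 * (Real.sqrt M * Real.sqrt M) := by ring
      _ = 2 * M := by rw [Real.mul_self_sqrt hMpos.le]
  nlinarith

theorem stmt14 :
    ∃ c₁₀ : ℝ, 0 < c₁₀ ∧
      ∀ y : ℝ → ℝ,
        (∀ a b : ℝ, 0 < a → a ≤ b → y a ≤ y b) →
        (∀ x : ℝ, 0 < x → 3 ≤ y x) →
        ∀ X : ℝ, 9 ≤ X → Real.log X ^ ((1 : ℝ) / 4) < y (Real.sqrt X) →
          ∀ n : ℕ, Real.sqrt X < (n : ℝ) → (n : ℝ) ≤ X →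
            Real.log n ^ (primePi (y (Real.sqrt n)) - 1) < Real.exp (c₁₀ * y n) := by
  refine ⟨40, by norm_num, ?_⟩
  intro y hmono h3 X hX9 hX4 n hn1 hn2
  have hX0 : (0:ℝ) < X := by linarith
  have hsX3 : (3:ℝ) ≤ Real.sqrt X := by
    have h9 : Real.sqrt 9 = 3 := by
      rw [show (9:ℝ) = 3^2 by norm_num, Real.sqrt_sq (by norm_num)]
    calc (3:ℝ) = Real.sqrt 9 := h9.symm
      _ ≤ Real.sqrt X := Real.sqrt_le_sqrt hX9
  have hsX0 : (0:ℝ) < Real.sqrt X := by linarith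
  have hn3 : (3:ℝ) < (n:ℝ) := lt_of_le_of_lt hsX3 hn1
  have hn4 : 4 ≤ n := by
    have : 3 < n := by exact_mod_cast hn3
    omega
  have hnR : (4:ℝ) ≤ (n:ℝ) := by exact_mod_cast hn4
  have hn0 : (0:ℝ) < (n:ℝ) := by linarith
  have hlog2 : (0.6931471803 : ℝ) < Real.log 2 := Real.log_two_gt_d9
  have hlog4 : (1:ℝ) < Real.log 4 := by
    have : Real.log 4 = 2 * Real.log 2 := by
      rw [show (4:ℝ) = 2^2 by norm_num, Real.log_pow]; push_cast; ring
    rw [this]; linarith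
  have hlogn1 : 1 < Real.log n :=
    lt_of_lt_of_le hlog4 (Real.log_le_log (by norm_num) hnR)
  have hlogn0 : 0 < Real.log n := by linarith
  have hll0 : 0 < Real.log (Real.log n) := Real.log_pos hlogn1
  -- y n and M
  have hyn3 : 3 ≤ y n := h3 _ hn0
  set M := ⌊y n⌋₊ with hM
  have hM3 : 3 ≤ M := Nat.le_floor (by exact_mod_cast hyn3)
  have hMR : (3:ℝ) ≤ M := by exact_mod_cast hM3
  have hMy : (M:ℝ) ≤ y n := Nat.floor_le (by linarith)
  have hyM1 : y n < (M:ℝ) + 1 := Nat.lt_floor_add_one _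
  -- k ≤ π M
  set k := primePi (y (Real.sqrt n)) with hkdef
  have hsqn_le : Real.sqrt n ≤ (n:ℝ) := by
    have h1 : Real.sqrt n ≤ Real.sqrt ((n:ℝ)^2) := Real.sqrt_le_sqrt (by nlinarith)
    rwa [Real.sqrt_sq hn0.le] at h1
  have hsqn0 : (0:ℝ) < Real.sqrt n := Real.sqrt_pos.mpr hn0
  have hyy : y (Real.sqrt n) ≤ y n := hmono _ _ hsqn0 hsqn_le
  have hkM : k ≤ M.primeCounting := by
    apply Nat.monotone_primeCounting
    exact Nat.floor_le_floor hyy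
  -- log log n < 4 log (y n)
  have hlogX0 : 0 < Real.log X := Real.log_pos (by linarith)
  have hyX0 : (0:ℝ) < y (Real.sqrt X) := by linarith [h3 _ hsX0]
  have hX4' : Real.log X < (y (Real.sqrt X))^4 := by
    have h := pow_lt_pow_left₀ hX4 (Real.rpow_nonneg hlogX0.le _) (n := 4) (by norm_num)
    have heq : (Real.log X ^ ((1:ℝ)/4)) ^ (4:ℕ) = Real.log X := by
      rw [← Real.rpow_natCast (Real.log X ^ ((1:ℝ)/4)) 4, ← Real.rpow_mul hlogX0.le]
      norm_num
    rwa [heq] at h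
  have hyXyn : y (Real.sqrt X) ≤ y n := hmono _ _ hsX0 hn1.le
  have hloglog : Real.log (Real.log n) < 4 * Real.log (y n) := by
    have h1 : Real.log (Real.log n) ≤ Real.log (Real.log X) :=
      Real.log_le_log hlogn0 (Real.log_le_log hn0 hn2)
    have h2 : Real.log (Real.log X) < Real.log ((y (Real.sqrt X))^4) :=
      Real.log_lt_log hlogX0 hX4'
    have h3' : Real.log ((y (Real.sqrt X))^4) = 4 * Real.log (y (Real.sqrt X)) := by
      rw [Real.log_pow]; push_cast; ring
    have h4 : Real.log (y (Real.sqrt X)) ≤ Real.log (y n) := Real.log_le_log hyX0 hyXyn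
    linarith
  -- 4 log (y n) ≤ 8 log M
  have hlogM0 : 0 < Real.log M := Real.log_pos (by linarith)
  have hyn8 : Real.log (y n) ≤ 2 * Real.log M := by
    have h1 : Real.log (y n) ≤ Real.log ((M:ℝ)+1) := Real.log_le_log (by linarith) hyM1.le
    have h2 : Real.log ((M:ℝ)+1) ≤ Real.log (2*M) := Real.log_le_log (by linarith) (by linarith)
    have h3' : Real.log (2*(M:ℝ)) = Real.log 2 + Real.log M :=
      Real.log_mul (by norm_num) (by linarith)
    have h4 : Real.log 2 ≤ Real.log M := Real.log_le_log (by norm_num) (by linarith)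
    linarith
  have hll8 : Real.log (Real.log n) < 8 * Real.log M := by linarith
  -- cheb
  have hcheb : (M.primeCounting : ℝ) * Real.log M ≤ 5 * M := cheb_aux M hM3
  -- finish
  have hpow_eq : Real.log n ^ (k - 1) = Real.exp ((k - 1 : ℕ) * Real.log (Real.log n)) := by
    rw [← Real.exp_log hlogn0, ← Real.exp_nat_mul, Real.exp_log hlogn0]
  rw [hpow_eq]
  apply Real.exp_lt_exp.mpr
  rcases Nat.eq_zero_or_pos (k - 1) with he | he
  · rw [he]
    push_cast
    nlinarith
  · have he1 : (1:ℝ) ≤ ((k-1:ℕ):ℝ) := by exact_mod_cast he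
    have hePi : ((k-1:ℕ):ℝ) ≤ (M.primeCounting : ℝ) := by
      have : k - 1 ≤ M.primeCounting := le_trans (Nat.sub_le _ _) hkM
      exact_mod_cast this
    calc ((k-1:ℕ):ℝ) * Real.log (Real.log n)
        < ((k-1:ℕ):ℝ) * (8 * Real.log M) := by
          exact mul_lt_mul_of_pos_left hll8 (by linarith)
      _ ≤ (M.primeCounting : ℝ) * (8 * Real.log M) := by
          apply mul_le_mul_of_nonneg_right hePi (by positivity)
      _ = 8 * ((M.primeCounting : ℝ) * Real.log M) := by ring
      _ ≤ 8 * (5 * M) := by linarith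
      _ = 40 * (M:ℝ) := by ring
      _ ≤ 40 * y n := by linarith
end

section
/- Assume the abc conjecture: for each ε > 0 there is a positive number c(ε) such that for all pairwise coprime positive integers x, y, z with x + y = z one has z < c(ε)·G^{1+ε}, where G is the product of the distinct primes dividing xyz. Then for every ε > 0 there is a positive number c(ε) such that the following holds: if m < n are positive integers, Y ≥ 2 is a real number, and every prime factor of m and of n is at most Y, then (m/c(ε))^{1/(1+ε)} < (n − m)·∏_{p ≤ Y, p prime} p. -/
open Real Finset

theorem stmt15
    (habc : ∀ ε : ℝ, 0 < ε → ∃ C : ℝ, 0 < C ∧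
      ∀ x y z : ℕ, 0 < x → 0 < y → 0 < z →
        Nat.Coprime x y → Nat.Coprime y z → Nat.Coprime x z → x + y = z →
        (z : ℝ) < C * (rad (x * y * z) : ℝ) ^ ((1 : ℝ) + ε)) :
    ∀ ε : ℝ, 0 < ε → ∃ C : ℝ, 0 < C ∧
      ∀ m n : ℕ, 0 < m → m < n →
        ∀ Y : ℝ, 2 ≤ Y →
          (∀ p : ℕ, p.Prime → p ∣ m → (p : ℝ) ≤ Y) →
          (∀ p : ℕ, p.Prime → p ∣ n → (p : ℝ) ≤ Y) →
          ((m : ℝ) / C) ^ ((1 : ℝ) / (1 + ε)) <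
            ((n : ℝ) - (m : ℝ)) *
              ∏ p ∈ (Finset.range (⌊Y⌋₊ + 1)).filter Nat.Prime, (p : ℝ) := by
  intro ε hε
  obtain ⟨C, hC, habc'⟩ := habc ε hε
  refine ⟨C, hC, ?_⟩
  intro m n hm hmn Y hY hpm hpn
  have h1ε : (0:ℝ) < 1 + ε := by linarith
  set S := (Finset.range (⌊Y⌋₊ + 1)).filter Nat.Prime with hS
  set P := S.prod id with hP
  have hP1 : 1 ≤ P := by
    refine Finset.one_le_prod' ?_
    intro p hp
    exact (Finset.mem_filter.mp hp).2.one_lt.le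
  have hn : 0 < n := hm.trans hmn
  set d := Nat.gcd m n with hdd
  have hd : 0 < d := Nat.gcd_pos_of_pos_left _ hm
  have hdm : d ∣ m := Nat.gcd_dvd_left m n
  have hdn : d ∣ n := Nat.gcd_dvd_right m n
  set x := m / d with hxdef
  set z := n / d with hzdef
  have hxm : x ∣ m := Nat.div_dvd_of_dvd hdm
  have hzn : z ∣ n := Nat.div_dvd_of_dvd hdn
  have hx : 0 < x := Nat.div_pos (Nat.le_of_dvd hm hdm) hd
  have hz : 0 < z := Nat.div_pos (Nat.le_of_dvd hn hdn) hd
  have hxz : x < z := Nat.div_lt_div_of_lt_of_dvd hdn hmn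
  set y := z - x with hy
  have hy0 : 0 < y := Nat.sub_pos_of_lt hxz
  have hsum : x + y = z := Nat.add_sub_cancel' hxz.le
  have hcxz : Nat.Coprime x z := Nat.coprime_div_gcd_div_gcd hd
  have hcxy : Nat.Coprime x y := by
    have h := hcxz
    rw [← hsum] at h
    simpa using h
  have hcyz : Nat.Coprime y z := by
    rw [← hsum]
    exact Nat.coprime_add_self_right.mpr hcxy.symm
  -- membership in S
  have hmemS : ∀ p : ℕ, p.Prime → (p:ℝ) ≤ Y → p ∈ S := by
    intro p pp hpY
    rw [hS, Finset.mem_filter, Finset.mem_range, Nat.lt_succ_iff]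
    exact ⟨Nat.le_floor hpY, pp⟩
  -- rad bound
  have hrad : rad (x * y * z) ≤ y * P := by
    unfold rad
    set T := (x*y*z).primeFactors with hT
    rw [← Finset.prod_filter_mul_prod_filter_not T (· ∈ S) id]
    have h1 : (T.filter (· ∈ S)).prod id ≤ P := by
      refine Finset.prod_le_prod_of_subset_of_one_le' ?_ ?_
      · intro p hp; exact (Finset.mem_filter.mp hp).2
      · intro p hp _
        exact (Finset.mem_filter.mp hp).2.one_lt.le
    have h2 : (T.filter (· ∉ S)).prod id ≤ y := by
      have hsub : T.filter (· ∉ S) ⊆ y.primeFactors := by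
        intro p hp
        obtain ⟨hpT, hpS⟩ := Finset.mem_filter.mp hp
        have pp : p.Prime := Nat.prime_of_mem_primeFactors hpT
        have hdvd : p ∣ x * y * z := Nat.dvd_of_mem_primeFactors hpT
        rcases pp.dvd_mul.mp hdvd with h | h
        · rcases pp.dvd_mul.mp h with h | h
          · exact absurd (hmemS p pp (hpm p pp (h.trans hxm))) hpS
          · exact Nat.mem_primeFactors.mpr ⟨pp, h, hy0.ne'⟩
        · exact absurd (hmemS p pp (hpn p pp (h.trans hzn))) hpS
      calc (T.filter (· ∉ S)).prod id ≤ y.primeFactors.prod id := by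
            refine Finset.prod_le_prod_of_subset_of_one_le' hsub ?_
            intro p hp _; exact (Nat.prime_of_mem_primeFactors hp).one_lt.le
        _ ≤ y := Nat.le_of_dvd hy0 (by simpa using Nat.prod_primeFactors_dvd y)
    calc (T.filter (· ∈ S)).prod id * (T.filter (· ∉ S)).prod id
        ≤ P * y := Nat.mul_le_mul h1 h2
      _ = y * P := Nat.mul_comm _ _
  -- abc application
  have habcr := habc' x y z hx hy0 hz hcxy hcyz hcxz hsum
  have hradR : ((rad (x*y*z) : ℕ) : ℝ) ^ ((1:ℝ)+ε) ≤ ((y*P : ℕ) : ℝ) ^ ((1:ℝ)+ε) := by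
    apply Real.rpow_le_rpow (by positivity) (by exact_mod_cast hrad) h1ε.le
  have hdz : d * z = n := Nat.mul_div_cancel' hdn
  have hdy : d * y = n - m := by
    have h1 : d * y + d * x = n := by
      rw [← Nat.mul_add, Nat.sub_add_cancel hxz.le, hdz]
    have h2 : d * x = m := Nat.mul_div_cancel' hdm
    omega
  have hd1 : (1:ℝ) ≤ (d:ℝ) := by exact_mod_cast hd
  have hdrpow : (d:ℝ) ≤ (d:ℝ) ^ ((1:ℝ)+ε) := by
    calc (d:ℝ) = (d:ℝ) ^ (1:ℝ) := (Real.rpow_one _).symm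
      _ ≤ (d:ℝ) ^ ((1:ℝ)+ε) := Real.rpow_le_rpow_of_exponent_le hd1 (by linarith)
  have key : (m:ℝ) < C * (((n - m) * P : ℕ) : ℝ) ^ ((1:ℝ)+ε) := by
    have step1 : (n:ℝ) < (d:ℝ) * (C * ((y*P : ℕ):ℝ) ^ ((1:ℝ)+ε)) := by
      have : (n:ℝ) = (d:ℝ) * (z:ℝ) := by exact_mod_cast hdz.symm
      rw [this]
      apply mul_lt_mul_of_pos_left _ (by exact_mod_cast hd)
      exact habcr.trans_le (by
        apply mul_le_mul_of_nonneg_left hradR hC.le)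
    have step2 : (d:ℝ) * (C * ((y*P : ℕ):ℝ) ^ ((1:ℝ)+ε))
        ≤ C * (((n - m) * P : ℕ) : ℝ) ^ ((1:ℝ)+ε) := by
      have hcast : (((n - m) * P : ℕ) : ℝ) = (d:ℝ) * ((y*P : ℕ):ℝ) := by
        rw [← hdy]; push_cast; ring
      rw [hcast, Real.mul_rpow (by positivity) (by positivity)]
      rw [show (d:ℝ) * (C * ((y*P:ℕ):ℝ) ^ ((1:ℝ)+ε))
            = C * ((d:ℝ) * ((y*P:ℕ):ℝ) ^ ((1:ℝ)+ε)) by ring]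
      apply mul_le_mul_of_nonneg_left _ hC.le
      exact mul_le_mul_of_nonneg_right hdrpow (by positivity)
    calc (m:ℝ) < (n:ℝ) := by exact_mod_cast hmn
      _ < _ := step1
      _ ≤ _ := step2
  -- conclude
  have hA : (0:ℝ) < (((n - m) * P : ℕ) : ℝ) := by
    have : 0 < (n - m) * P := Nat.mul_pos (by omega) (by omega)
    exact_mod_cast this
  have hdiv : (m:ℝ) / C < (((n - m) * P : ℕ) : ℝ) ^ ((1:ℝ)+ε) := by
    rw [div_lt_iff₀ hC]; rw [mul_comm]; exact key
  have hfinal : ((m:ℝ)/C) ^ ((1:ℝ)/(1+ε)) < (((n - m) * P : ℕ) : ℝ) := by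
    have := Real.rpow_lt_rpow (by positivity) hdiv (by positivity : (0:ℝ) < 1/(1+ε))
    rwa [← Real.rpow_mul hA.le, mul_one_div_cancel h1ε.ne', Real.rpow_one] at this
  have hcast2 : (((n - m) * P : ℕ) : ℝ) = ((n:ℝ) - (m:ℝ)) * ∏ p ∈ S, (p : ℝ) := by
    rw [hP]
    push_cast [Nat.cast_sub hmn.le]
    rfl
  rwa [hcast2] at hfinal
end
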